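/- arXiv:1206.4912 — 10 statements merged into one kernel-verified Lean document; each statement's English description precedes it below -/
import Mathlib

section
/- If a graph G contains a graph H as a minor, then there is a subgraph G* of G that still contains H as a minor and that satisfies Δ(G*) ≤ Δ(H) and |V(G*)| ≤ |V(H)| + vc(G*)·(Δ(H) + 1). -/
open SimpleGraph

universe u v

/-- `X` is a vertex cover of the graph `G`: every edge has an endpoint in `X`. -/
def IsVertexCover {V : Type*} (G : SimpleGraph V) (X : Set V) : Prop :=
  ∀ ⦃a b : V⦄, G.Adj a b → a ∈ X ∨ b ∈ X

/-- The minimum size of a vertex cover of `G`. -/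
noncomputable def vcNum {V : Type*} (G : SimpleGraph V) : ℕ :=
  sInf {n : ℕ | ∃ X : Set V, _root_.IsVertexCover G X ∧ X.ncard = n}

/-- The maximum degree of a vertex of `G`. -/
noncomputable def maxDeg {V : Type*} (G : SimpleGraph V) : ℕ :=
  ⨆ x : V, (G.neighborSet x).ncard

/-- `H` is a minor of `G`: there is a minor model assigning to each vertex of `H`
a nonempty branch set in `G`, pairwise disjoint, each inducing a connected subgraph,
with an edge of `G` between the branch sets of any two adjacent vertices of `H`. -/
def HasMinor {V : Type u} {W : Type v} (G : SimpleGraph V) (H : SimpleGraph W) : Prop :=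
  ∃ φ : W → Set V,
    (∀ w, (φ w).Nonempty) ∧
    (Pairwise fun w w' => Disjoint (φ w) (φ w')) ∧
    (∀ w, (G.induce (φ w)).Connected) ∧
    ∀ ⦃w w'⦄, H.Adj w w' → ∃ a ∈ φ w, ∃ b ∈ φ w', G.Adj a b

def IsModel {V : Type u} {W : Type v} (G : SimpleGraph V) (H : SimpleGraph W)
    (φ : W → Set V) : Prop :=
  (∀ w, (φ w).Nonempty) ∧
    (Pairwise fun w w' => Disjoint (φ w) (φ w')) ∧
    (∀ w, (G.induce (φ w)).Connected) ∧
    ∀ ⦃w w'⦄, H.Adj w w' → ∃ a ∈ φ w, ∃ b ∈ φ w', G.Adj a b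

lemma aux_le_maxDeg {α : Type*} [Fintype α] (G : SimpleGraph α) (x : α) :
    (G.neighborSet x).ncard ≤ maxDeg G :=
  by
  rw [maxDeg]
  exact le_ciSup (f := fun x => (G.neighborSet x).ncard)
    (Set.Finite.bddAbove (Set.finite_range _)) x

lemma aux_maxDeg_le {α : Type*} (G : SimpleGraph α) {m : ℕ}
    (hm : ∀ x, (G.neighborSet x).ncard ≤ m) : maxDeg G ≤ m := by
  rw [maxDeg]
  cases isEmpty_or_nonempty α with
  | inl h => simp [ciSup_of_empty]
  | inr h => exact ciSup_le hm

@[simps] def bigSub {V : Type u} {W : Type v} (G : SimpleGraph V) (H : SimpleGraph W)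
    (φ : W → Set V) (T : ∀ w, SimpleGraph (φ w)) (att : W → W → V)
    (hTle : ∀ w, T w ≤ G.induce (φ w))
    (hatt_mem : ∀ w w', att w w' ∈ φ w)
    (hatt_adj : ∀ w w', H.Adj w w' → G.Adj (att w w') (att w' w)) : G.Subgraph where
  verts := ⋃ w, φ w
  Adj x y := (∃ w, ∃ (hx : x ∈ φ w) (hy : y ∈ φ w), (T w).Adj ⟨x, hx⟩ ⟨y, hy⟩) ∨
    (∃ w w', H.Adj w w' ∧ x = att w w' ∧ y = att w' w)
  adj_sub := by
    rintro x y (⟨w, hx, hy, hadj⟩ | ⟨w, w', hww', rfl, rfl⟩)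
    · simpa using hTle w hadj
    · exact hatt_adj w w' hww'
  edge_vert := by
    rintro x y (⟨w, hx, hy, hadj⟩ | ⟨w, w', hww', rfl, rfl⟩)
    · exact Set.mem_iUnion.mpr ⟨w, hx⟩
    · exact Set.mem_iUnion.mpr ⟨w, hatt_mem w w'⟩
  symm := by
    constructor
    rintro x y (⟨w, hx, hy, hadj⟩ | ⟨w, w', hww', rfl, rfl⟩)
    · exact Or.inl ⟨w, hy, hx, hadj.symm⟩
    · exact Or.inr ⟨w', w, hww'.symm, rfl, rfl⟩


lemma aux_connected_exists_adj {α : Type*} (G : SimpleGraph α) (hG : G.Connected)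
    {u v : α} (huv : u ≠ v) : ∃ x, G.Adj v x := by
  obtain ⟨p⟩ := hG v u
  cases p with
  | nil => exact absurd rfl huv.symm
  | cons h _ => exact ⟨_, h⟩

lemma aux_exists_tree_le {α : Type*} [Fintype α] (G : SimpleGraph α) (hG : G.Connected) :
    ∃ T : SimpleGraph α, T ≤ G ∧ T.IsTree := by
  classical
  generalize hn : G.edgeSet.ncard = n
  induction n using Nat.strong_induction_on generalizing G with
  | _ n ih =>
    by_cases hac : G.IsAcyclic
    · exact ⟨G, le_refl _, ⟨hG, hac⟩⟩
    · rw [isAcyclic_iff_forall_adj_isBridge] at hac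
      push_neg at hac
      obtain ⟨v, w, hadj, hbr⟩ := hac
      set G₂ := G \ fromEdgeSet {s(v, w)} with hG₂
      have hle : G₂ ≤ G := sdiff_le
      have hreach : G₂.Reachable v w := by
        by_contra hr
        exact hbr hr
      have hconn₂ : G₂.Connected := by
        rw [connected_iff] at hG ⊢
        refine ⟨fun a b => ?_, hG.2⟩
        obtain ⟨p⟩ := hG.1 a b
        induction p with
        | nil => exact Reachable.refl _
        | @cons x y z h p ihp =>
          refine Reachable.trans ?_ ihp
          by_cases he : s(x, y) = s(v, w)
          · rw [Sym2.eq_iff] at he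
            rcases he with ⟨rfl, rfl⟩ | ⟨rfl, rfl⟩
            · exact hreach
            · exact hreach.symm
          · exact Adj.reachable (by simp [hG₂, h, he])
      have hcard : G₂.edgeSet.ncard < n := by
        rw [← hn]
        apply Set.ncard_lt_ncard _ (Set.toFinite _)
        rw [Set.ssubset_iff_of_subset (edgeSet_mono hle)]
        refine ⟨s(v, w), by simpa using hadj, ?_⟩
        simp [hG₂, edgeSet_sdiff, hadj.ne]
      obtain ⟨T, hT1, hT2⟩ := ih _ hcard G₂ hconn₂ rfl
      exact ⟨T, le_trans hT1 hle, hT2⟩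

lemma aux_tree_degree_le {α : Type*} [Fintype α] [DecidableEq α] (T : SimpleGraph α)
    [DecidableRel T.Adj] (hT : T.IsTree) (h2 : 1 < Fintype.card α) (v : α) :
    T.degree v ≤ ((Finset.univ.erase v).filter (fun u => T.degree u = 1)).card := by
  classical
  have hec : T.edgeFinset.card + 1 = Fintype.card α := hT.card_edgeFinset
  have hsum : ∑ u, T.degree u = 2 * T.edgeFinset.card := T.sum_degrees_eq_twice_card_edges
  have hdegpos : ∀ u : α, 1 ≤ T.degree u := by
    intro u
    rw [Nat.succ_le_iff, degree_pos_iff_exists_adj]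
    obtain ⟨x, hx⟩ := Fintype.exists_ne_of_one_lt_card h2 u
    exact aux_connected_exists_adj T hT.isConnected hx
  have hsplit : T.degree v + ∑ u ∈ Finset.univ.erase v, T.degree u = 2 * T.edgeFinset.card := by
    rw [← hsum]
    exact Finset.add_sum_erase Finset.univ (fun u => T.degree u) (Finset.mem_univ v)
  have hcarderase : (Finset.univ.erase v).card = T.edgeFinset.card := by
    rw [Finset.card_erase_of_mem (Finset.mem_univ v), Finset.card_univ, ← hec]
    simp
  have hbig : 2 * T.edgeFinset.card ≤ (∑ u ∈ Finset.univ.erase v, T.degree u) +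
      ((Finset.univ.erase v).filter (fun u => T.degree u = 1)).card := by
    rw [Finset.card_filter, ← Finset.sum_add_distrib, ← hcarderase]
    calc 2 * (Finset.univ.erase v).card = ∑ _u ∈ Finset.univ.erase v, 2 := by
          rw [Finset.sum_const, smul_eq_mul, mul_comm]
      _ ≤ _ := by
          apply Finset.sum_le_sum
          intro u _
          have := hdegpos u
          by_cases h1 : T.degree u = 1 <;> simp [h1] <;> omega
  omega


lemma aux_path_avoid {α : Type*} [Fintype α] (T : SimpleGraph α) [DecidableRel T.Adj]
    {u : α} (hdeg : T.degree u = 1) {a b : α} (p : T.Walk a b) :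
    p.IsPath → a ≠ u → b ≠ u → u ∉ p.support := by
  induction p with
  | nil =>
    intro _ ha _
    simpa using fun hh => ha hh.symm
  | @cons a c b h q ih =>
    intro hp ha hb
    have hq : q.IsPath := hp.of_cons
    rw [Walk.support_cons]
    intro hu
    rcases List.mem_cons.mp hu with rfl | hu2
    · exact ha rfl
    · by_cases hc : c = u
      · cases q with
        | nil => exact hb hc
        | @cons _ d _ h' r =>
          have had : a ≠ d := by
            rintro rfl
            exact ((Walk.cons_isPath_iff _ _).mp hp).2 (by simp)
          have h2 : 2 ≤ T.degree u := by
            rw [← card_neighborFinset_eq_degree]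
            refine Finset.one_lt_card.mpr ⟨a, ?_, d, ?_, had⟩
            · simpa [mem_neighborFinset] using (hc ▸ h.symm : T.Adj u a)
            · simpa [mem_neighborFinset] using (hc ▸ h' : T.Adj u d)
          omega
      · exact ih hq hc hb hu2

lemma aux_reach_del {α : Type*} (G : SimpleGraph α) {s : Set α} (T : SimpleGraph s)
    (hT : T ≤ G.induce s) (u : α) {a b : s} (p : T.Walk a b) :
    (∀ c ∈ p.support, (c : α) ≠ u) → ∀ (ha : (a : α) ∈ s \ {u}) (hb : (b : α) ∈ s \ {u}),
    (G.induce (s \ {u})).Reachable ⟨a, ha⟩ ⟨b, hb⟩ := by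
  induction p with
  | nil => intro _ ha hb; exact Reachable.refl _
  | @cons a c b h q ih =>
    intro hall ha hb
    have hcmem : (c : α) ∈ s \ {u} := ⟨c.2, by simpa using hall c (by simp)⟩
    have hadj : (G.induce (s \ {u})).Adj ⟨a, ha⟩ ⟨c, hcmem⟩ := by
      have := hT h
      simp only [comap_adj, Function.Embedding.coe_subtype] at this ⊢
      exact this
    exact (hadj.reachable).trans (ih (fun d hd => hall d (by simp [hd])) hcmem hb)

lemma aux_del_leaf_connected {α : Type*} (G : SimpleGraph α) {s : Set α} [Fintype ↥s]
    (T : SimpleGraph s) [DecidableRel T.Adj] (hT : T ≤ G.induce s) (hTt : T.IsTree)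
    {u : s} (hdeg : T.degree u = 1) (h2 : 1 < Fintype.card s) :
    (G.induce (s \ {(u : α)})).Connected := by
  classical
  have hnonempty : Nonempty ↥(s \ {(u : α)}) := by
    obtain ⟨x, hx⟩ := Fintype.exists_ne_of_one_lt_card h2 u
    exact ⟨⟨↑x, x.2, by simpa using fun hh => hx (Subtype.ext hh)⟩⟩
  rw [connected_iff]
  refine ⟨?_, hnonempty⟩
  rintro ⟨x, hxs, hxu⟩ ⟨y, hys, hyu⟩
  have hxu' : x ≠ u := by simpa using hxu
  have hyu' : y ≠ u := by simpa using hyu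
  obtain ⟨q⟩ := hTt.isConnected ⟨x, hxs⟩ ⟨y, hys⟩
  set p := q.toPath
  have hps : u ∉ p.1.support :=
    aux_path_avoid T hdeg p.1 p.2 (fun hh => hxu' (congrArg Subtype.val hh))
      (fun hh => hyu' (congrArg Subtype.val hh))
  have hall : ∀ c ∈ p.1.support, (c : α) ≠ u := by
    intro c hc hcu
    exact hps (by rwa [show c = u from Subtype.ext hcu] at hc)
  exact aux_reach_del G T hT u _ hall ⟨hxs, hxu⟩ ⟨hys, hyu⟩

lemma aux_ncard_neighborSet {α : Type*} [Fintype α] (G : SimpleGraph α) [DecidableRel G.Adj]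
    (v : α) : (G.neighborSet v).ncard = G.degree v := by
  rw [← card_neighborFinset_eq_degree, ← Set.ncard_coe_finset, neighborFinset_def,
    Set.coe_toFinset]

/-- If `G` contains `H` as a minor, then some subgraph `G*` of `G` still contains `H`
as a minor, has maximum degree at most `Δ(H)`, and has at most
`|V(H)| + vc(G*)·(Δ(H)+1)` vertices. -/
theorem stmt0 {V : Type u} {W : Type v} [Fintype V] [Fintype W]
    (G : SimpleGraph V) (H : SimpleGraph W) (h : HasMinor G H) :
    ∃ G' : G.Subgraph, HasMinor G'.coe H ∧ maxDeg G'.coe ≤ maxDeg H ∧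
      G'.verts.ncard ≤ Fintype.card W + vcNum G'.coe * (maxDeg H + 1) := by
  classical
  letI : LinearOrder W := LinearOrder.lift' (Fintype.equivFin W) (Fintype.equivFin W).injective
  -- a minimal model
  obtain ⟨φ, hφ, hmin⟩ : ∃ φ, IsModel G H φ ∧
      ∀ ψ, IsModel G H ψ → (∑ w, (φ w).ncard) ≤ ∑ w, (ψ w).ncard := by
    have hS : {n : ℕ | ∃ ψ : W → Set V, IsModel G H ψ ∧ (∑ w, (ψ w).ncard) = n}.Nonempty := by
      obtain ⟨ψ, hψ⟩ := h
      exact ⟨_, ψ, hψ, rfl⟩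
    obtain ⟨ψ, hψ, hwt⟩ := Nat.sInf_mem hS
    exact ⟨ψ, hψ, fun χ hχ => hwt ▸ Nat.sInf_le ⟨χ, hχ, rfl⟩⟩
  obtain ⟨hne, hdisj, hconn, hedge⟩ := hφ
  have huniq : ∀ {x : V} {w w' : W}, x ∈ φ w → x ∈ φ w' → w = w' := by
    intro x w w' h1 h2
    by_contra hne'
    exact Set.disjoint_left.mp (hdisj hne') h1 h2
  -- forcing lemma
  have hforce : ∀ w : W, ∀ v ∈ φ w, (φ w \ {v}).Nonempty → (G.induce (φ w \ {v})).Connected →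
      ∃ w', H.Adj w w' ∧ ∀ a ∈ φ w \ {v}, ∀ b ∈ φ w', ¬ G.Adj a b := by
    intro w v hv hvne hvconn
    by_contra hcon
    push_neg at hcon
    set ψ := Function.update φ w (φ w \ {v}) with hψdef
    have hψw : ψ w = φ w \ {v} := by rw [hψdef, Function.update_self]
    have hψo : ∀ w₁, w₁ ≠ w → ψ w₁ = φ w₁ := fun w₁ h1 => by
      rw [hψdef, Function.update_of_ne h1]
    have hψsub : ∀ w₁, ψ w₁ ⊆ φ w₁ := by
      intro w₁
      by_cases h1 : w₁ = w
      · subst h1; rw [hψw]; exact Set.diff_subset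
      · rw [hψo w₁ h1]
    have hψmodel : IsModel G H ψ := by
      refine ⟨?_, ?_, ?_, ?_⟩
      · intro w₁
        by_cases h1 : w₁ = w
        · subst h1; rwa [hψw]
        · rw [hψo w₁ h1]; exact hne w₁
      · intro w₁ w₂ h12
        exact ((hdisj h12).mono (hψsub w₁) (hψsub w₂))
      · intro w₁
        by_cases h1 : w₁ = w
        · subst h1; rw [hψw]; exact hvconn
        · rw [hψo w₁ h1]; exact hconn w₁
      · intro w₁ w₂ h12
        by_cases h1 : w₁ = w
        · subst h1
          have h2 : w₂ ≠ w₁ := fun hh => H.loopless.irrefl w₁ (hh ▸ h12)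
          obtain ⟨a, ha, b, hb, hab⟩ := hcon w₂ h12
          exact ⟨a, by rwa [hψw], b, by rwa [hψo w₂ h2], hab⟩
        · by_cases h2 : w₂ = w
          · subst h2
            have h1' : w₁ ≠ w₂ := fun hh => H.loopless.irrefl w₂ (hh ▸ h12)
            obtain ⟨a, ha, b, hb, hab⟩ := hcon w₁ h12.symm
            exact ⟨b, by rwa [hψo w₁ h1'], a, by rwa [hψw], hab.symm⟩
          · obtain ⟨a, ha, b, hb, hab⟩ := hedge h12
            exact ⟨a, by rwa [hψo w₁ h1], b, by rwa [hψo w₂ h2], hab⟩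
    have hlt : (∑ w₁, (ψ w₁).ncard) < ∑ w₁, (φ w₁).ncard := by
      apply Finset.sum_lt_sum
      · intro i _
        exact Set.ncard_le_ncard (hψsub i) (Set.toFinite _)
      · refine ⟨w, Finset.mem_univ w, ?_⟩
        rw [hψw]
        apply Set.ncard_lt_ncard _ (Set.toFinite _)
        exact ⟨Set.diff_subset, fun hsub => (hsub hv).2 rfl⟩
    exact absurd (hmin ψ hψmodel) (by omega)
  -- spanning trees of the branch sets
  choose T hTle hTtree using fun w => aux_exists_tree_le (G.induce (φ w)) (hconn w)
  -- attachment vertices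
  choose fa hfa fb hfb hfab using fun (w w' : W) (h' : H.Adj w w') => hedge h'
  set att : W → W → V := fun w w' =>
    if h' : H.Adj w w' then (if w ≤ w' then fa w w' h' else fb w' w h'.symm)
    else (hne w).some with hattdef
  have hatt_mem : ∀ w w', att w w' ∈ φ w := by
    intro w w'
    rw [hattdef]
    dsimp only
    split_ifs with h1 h2
    · exact hfa w w' h1
    · exact hfb w' w h1.symm
    · exact (hne w).some_mem
  have hatt_adj : ∀ w w', H.Adj w w' → G.Adj (att w w') (att w' w) := by
    intro w w' h'
    have hne' : w ≠ w' := h'.ne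
    rw [hattdef]
    dsimp only
    rw [dif_pos h', dif_pos h'.symm]
    by_cases hle : w ≤ w'
    · rw [if_pos hle, if_neg (fun hh : w' ≤ w => hne' (le_antisymm hle hh))]
      exact hfab w w' h'
    · rw [if_neg hle, if_pos (le_of_not_ge hle)]
      exact (hfab w' w h'.symm).symm
  -- the subgraph
  set G' : G.Subgraph := bigSub G H φ T att hTle hatt_mem hatt_adj with hG'def
  have hvertsub : ∀ {w₁ : W} {x : V}, x ∈ φ w₁ → x ∈ G'.verts := by
    intro w₁ x hx
    rw [hG'def, bigSub_verts]
    exact Set.mem_iUnion.mpr ⟨w₁, hx⟩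
  have hG'adj : ∀ {x y : V}, G'.Adj x y ↔
      ((∃ w, ∃ (hx : x ∈ φ w) (hy : y ∈ φ w), (T w).Adj ⟨x, hx⟩ ⟨y, hy⟩) ∨
      (∃ w w', H.Adj w w' ∧ x = att w w' ∧ y = att w' w)) := by
    intro x y
    rw [hG'def, bigSub_adj]
  -- the pointwise degree bound
  have hdegbound : ∀ x : ↥G'.verts, (G'.coe.neighborSet x).ncard ≤ maxDeg H := by
    intro x
    have hx2 : (x : V) ∈ ⋃ w, φ w := x.2
    obtain ⟨w, hxw⟩ := Set.mem_iUnion.mp hx2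
    set A : V → Set W := fun u => {w' | ∃ _h : H.Adj w w', att w w' = u} with hAdef
    have hAsub : ∀ u, A u ⊆ H.neighborSet w := by
      rintro u w' ⟨h', _⟩
      exact h'
    set xh : ↥(φ w) := ⟨↑x, hxw⟩ with hxhat
    have hkey : ∀ u : ↥(φ w), u ≠ xh → (T w).degree u = 1 → (A ↑u).Nonempty := by
      intro u hu hdeg1
      have hvne : (φ w \ {(u : V)}).Nonempty :=
        ⟨↑x, hxw, by
          simp only [Set.mem_singleton_iff]
          exact fun hh => hu (Subtype.ext (show (u : V) = (xh : V) from hh.symm))⟩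
      have h2 : 1 < Fintype.card ↥(φ w) := Fintype.one_lt_card_iff.mpr ⟨u, xh, hu⟩
      have hconn2 := aux_del_leaf_connected G (T w) (hTle w) (hTtree w) hdeg1 h2
      obtain ⟨w', hww', hnoedge⟩ := hforce w ↑u u.2 hvne hconn2
      have hattu : att w w' = ↑u := by
        by_contra hno
        exact hnoedge (att w w') ⟨hatt_mem w w', by simpa using hno⟩ (att w' w)
          (hatt_mem w' w) (hatt_adj w w' hww')
      exact ⟨w', hww', hattu⟩
    have hmain : (T w).degree xh + (A ↑x).ncard ≤ (H.neighborSet w).ncard := by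
      by_cases h2 : 1 < Fintype.card ↥(φ w)
      · have hL := aux_tree_degree_le (T w) (hTtree w) h2 xh
        set L := (Finset.univ.erase xh).filter (fun u => (T w).degree u = 1) with hLdef
        set f : ↥(φ w) → W := fun u =>
          if hh : (A (↑u : V)).Nonempty then hh.some else w with hfdef
        have hfmem : ∀ u : ↥(φ w), (A (↑u : V)).Nonempty → f u ∈ A ↑u := by
          intro u hu
          rw [hfdef]
          dsimp only
          rw [dif_pos hu]
          exact hu.some_mem
        have hLprop : ∀ u ∈ L, u ≠ xh ∧ (T w).degree u = 1 := by
          intro u hu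
          rw [hLdef, Finset.mem_filter, Finset.mem_erase] at hu
          exact ⟨hu.1.1, hu.2⟩
        have hcard : L.card ≤ (H.neighborSet w \ A ↑x).ncard := by
          rw [← Set.ncard_coe_finset L]
          apply Set.ncard_le_ncard_of_injOn f ?_ ?_ (Set.toFinite _)
          · intro u hu
            obtain ⟨hune, hudeg⟩ := hLprop u (by exact_mod_cast hu)
            have hfu := hfmem u (hkey u hune hudeg)
            obtain ⟨h', hatteq⟩ := hfu
            refine ⟨hAsub _ ⟨h', hatteq⟩, ?_⟩
            rintro ⟨h'', hatteq'⟩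
            exact hune (Subtype.ext (by rw [← hatteq, hatteq']))
          · intro u hu u' hu' heq
            obtain ⟨hune, hudeg⟩ := hLprop u (by exact_mod_cast hu)
            obtain ⟨hune', hudeg'⟩ := hLprop u' (by exact_mod_cast hu')
            obtain ⟨h1, he1⟩ := hfmem u (hkey u hune hudeg)
            obtain ⟨h2', he2⟩ := hfmem u' (hkey u' hune' hudeg')
            refine Subtype.ext ?_
            rw [← he1, ← he2, heq]
        have hdiff : (H.neighborSet w \ A ↑x).ncard + (A ↑x).ncard = (H.neighborSet w).ncard :=
          Set.ncard_diff_add_ncard_of_subset (hAsub ↑x) (Set.toFinite _)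
        omega
      · have hdeg0 : (T w).degree xh = 0 := by
          by_contra h0
          obtain ⟨y, hy⟩ := ((T w).degree_pos_iff_exists_adj xh).mp (Nat.pos_of_ne_zero h0)
          exact h2 (Fintype.one_lt_card_iff.mpr ⟨xh, y, hy.ne⟩)
        rw [hdeg0, zero_add]
        exact Set.ncard_le_ncard (hAsub ↑x) (Set.toFinite _)
    have himg : (G'.coe.neighborSet x).ncard = (Subtype.val '' (G'.coe.neighborSet x)).ncard :=
      (Set.ncard_image_of_injective _ Subtype.val_injective).symm
    have hsub2 : Subtype.val '' (G'.coe.neighborSet x) ⊆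
        (Subtype.val '' ((T w).neighborSet xh)) ∪ ((fun w' => att w' w) '' (A ↑x)) := by
      rintro y ⟨⟨y, hyv⟩, hyadj, rfl⟩
      rw [mem_neighborSet, Subgraph.coe_adj, hG'adj] at hyadj
      rcases hyadj with ⟨w₁, hx1, hy1, hadj⟩ | ⟨w₁, w₂, h12, hxeq, hyeq⟩
      · have hw1 : w₁ = w := huniq hx1 hxw
        subst hw1
        exact Or.inl ⟨⟨y, hy1⟩, hadj, rfl⟩
      · have hw1 : w₁ = w := huniq (hxeq ▸ hatt_mem w₁ w₂) hxw
        subst hw1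
        exact Or.inr ⟨w₂, ⟨h12, hxeq.symm⟩, hyeq.symm⟩
    calc (G'.coe.neighborSet x).ncard
        = (Subtype.val '' (G'.coe.neighborSet x)).ncard := himg
      _ ≤ ((Subtype.val '' ((T w).neighborSet xh)) ∪ ((fun w' => att w' w) '' (A ↑x))).ncard :=
          Set.ncard_le_ncard hsub2 (Set.toFinite _)
      _ ≤ (Subtype.val '' ((T w).neighborSet xh)).ncard +
          ((fun w' => att w' w) '' (A ↑x)).ncard := Set.ncard_union_le _ _
      _ ≤ (T w).degree xh + (A ↑x).ncard := by
          have e1 : (Subtype.val '' ((T w).neighborSet xh)).ncard = (T w).degree xh := by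
            rw [Set.ncard_image_of_injective _ Subtype.val_injective, aux_ncard_neighborSet]
          have e2 : ((fun w' => att w' w) '' (A ↑x)).ncard ≤ (A ↑x).ncard :=
            Set.ncard_image_le (Set.toFinite _)
          omega
      _ ≤ (H.neighborSet w).ncard := hmain
      _ ≤ maxDeg H := aux_le_maxDeg H w
  refine ⟨G', ?_, ?_, ?_⟩
  · -- HasMinor G'.coe H
    refine ⟨fun w => {x : ↥G'.verts | ↑x ∈ φ w}, ?_, ?_, ?_, ?_⟩
    · intro w
      obtain ⟨x, hx⟩ := hne w
      exact ⟨⟨x, hvertsub hx⟩, hx⟩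
    · intro w1 w2 h12
      rw [Set.disjoint_left]
      intro x h1 h2
      exact h12 (huniq h1 h2)
    · intro w
      refine Connected.map (G := T w)
        (f := ⟨fun v => ⟨⟨↑v, hvertsub v.2⟩, v.2⟩, ?_⟩) ?_ (hTtree w).isConnected
      · intro v₁ v₂ hadj
        simp only [comap_adj, Function.Embedding.coe_subtype, Subgraph.coe_adj]
        rw [hG'adj]
        exact Or.inl ⟨w, v₁.2, v₂.2, hadj⟩
      · rintro ⟨⟨x, hxv⟩, hxw⟩
        exact ⟨⟨x, hxw⟩, rfl⟩
    · intro w w' h'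
      refine ⟨⟨att w w', hvertsub (hatt_mem w w')⟩, hatt_mem w w',
        ⟨att w' w, hvertsub (hatt_mem w' w)⟩, hatt_mem w' w, ?_⟩
      rw [Subgraph.coe_adj, hG'adj]
      exact Or.inr ⟨w, w', h', rfl, rfl⟩
  · exact aux_maxDeg_le _ hdegbound
  · -- size bound
    obtain ⟨X, hX, hXcard⟩ :
        ∃ X : Set ↥G'.verts, _root_.IsVertexCover G'.coe X ∧ X.ncard = vcNum G'.coe := by
      have hSne : {n : ℕ | ∃ X : Set ↥G'.verts, _root_.IsVertexCover G'.coe X ∧ X.ncard = n}.Nonempty :=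
        ⟨(Set.univ : Set ↥G'.verts).ncard, Set.univ, fun a b _ => Or.inl (Set.mem_univ a), rfl⟩
      obtain ⟨X, hX, hc⟩ := Nat.sInf_mem hSne
      exact ⟨X, hX, hc⟩
    set iso := {v : ↥G'.verts | ∀ y, ¬ G'.coe.Adj v y} with hisodef
    have hiso : iso.ncard ≤ Fintype.card W := by
      have hmemU : ∀ v : ↥G'.verts, ∃ w, (v : V) ∈ φ w := fun v => Set.mem_iUnion.mp v.2
      choose gw hgw using hmemU
      have hinj : Set.InjOn gw iso := by
        intro v₁ h1 v₂ h2 heq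
        by_contra hne12
        have hvalne : (v₁ : V) ≠ (v₂ : V) := fun hh => hne12 (Subtype.ext hh)
        obtain ⟨y, hy⟩ := aux_connected_exists_adj (T (gw v₁)) (hTtree (gw v₁)).isConnected
          (u := ⟨↑v₂, heq ▸ hgw v₂⟩) (v := ⟨↑v₁, hgw v₁⟩)
          (fun hh => hvalne (congrArg Subtype.val hh).symm)
        have hadj : G'.coe.Adj v₁ ⟨↑y, hvertsub y.2⟩ := by
          rw [Subgraph.coe_adj, hG'adj]
          exact Or.inl ⟨gw v₁, hgw v₁, y.2, hy⟩
        exact h1 _ hadj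
      calc iso.ncard ≤ (Set.univ : Set W).ncard :=
            Set.ncard_le_ncard_of_injOn gw (fun a _ => Set.mem_univ (gw a)) hinj
              (Set.toFinite _)
        _ = Fintype.card W := by rw [Set.ncard_univ, Nat.card_eq_fintype_card]
    have hniso : isoᶜ.ncard ≤ X.ncard * (maxDeg H + 1) := by
      have hsub3 : isoᶜ ⊆ X ∪ (⋃ u ∈ X, G'.coe.neighborSet u) := by
        intro v hv
        rw [Set.mem_compl_iff, hisodef] at hv
        simp only [Set.mem_setOf_eq, not_forall, not_not] at hv
        obtain ⟨y, hy⟩ := hv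
        by_cases hvX : v ∈ X
        · exact Or.inl hvX
        · refine Or.inr ?_
          rcases hX hy with h1 | h1
          · exact absurd h1 hvX
          · exact Set.mem_biUnion h1 hy.symm
      have hUB : (⋃ u ∈ X, G'.coe.neighborSet u).ncard ≤ X.ncard * maxDeg H := by
        have hXfin : X.Finite := Set.toFinite _
        have heq2 : (⋃ u ∈ X, G'.coe.neighborSet u) =
            ↑(hXfin.toFinset.biUnion fun u => (G'.coe.neighborSet u).toFinset) := by
          ext z
          simp only [Set.Finite.mem_toFinset, Set.mem_toFinset, Finset.coe_biUnion,
            Set.mem_iUnion, Finset.mem_coe, Set.Finite.mem_toFinset, mem_neighborSet]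
        rw [heq2, Set.ncard_coe_finset]
        calc (hXfin.toFinset.biUnion fun u => (G'.coe.neighborSet u).toFinset).card
            ≤ ∑ u ∈ hXfin.toFinset, ((G'.coe.neighborSet u).toFinset).card :=
              Finset.card_biUnion_le
          _ ≤ ∑ _u ∈ hXfin.toFinset, maxDeg H := by
              apply Finset.sum_le_sum
              intro u _
              rw [← Set.ncard_eq_toFinset_card']
              exact hdegbound u
          _ = hXfin.toFinset.card * maxDeg H := by rw [Finset.sum_const, smul_eq_mul]
          _ = X.ncard * maxDeg H := by rw [← Set.ncard_eq_toFinset_card]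
      calc isoᶜ.ncard ≤ (X ∪ ⋃ u ∈ X, G'.coe.neighborSet u).ncard :=
            Set.ncard_le_ncard hsub3 (Set.toFinite _)
        _ ≤ X.ncard + (⋃ u ∈ X, G'.coe.neighborSet u).ncard := Set.ncard_union_le _ _
        _ ≤ X.ncard + X.ncard * maxDeg H := by omega
        _ = X.ncard * (maxDeg H + 1) := by ring
    have htotal : G'.verts.ncard = (Set.univ : Set ↥G'.verts).ncard := by
      rw [Set.ncard_univ, Nat.card_coe_set_eq]
    have hu2 : (Set.univ : Set ↥G'.verts).ncard ≤ iso.ncard + isoᶜ.ncard := by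
      rw [← Set.union_compl_self iso]
      exact Set.ncard_union_le _ _
    rw [htotal]
    calc (Set.univ : Set ↥G'.verts).ncard ≤ iso.ncard + isoᶜ.ncard := hu2
      _ ≤ Fintype.card W + X.ncard * (maxDeg H + 1) := add_le_add hiso hniso
      _ = Fintype.card W + vcNum G'.coe * (maxDeg H + 1) := by rw [hXcard]
end

section
/- The property of containing an odd cycle (a cycle of odd length) is characterized by 2 adjacencies. -/
open SimpleGraph

universe u

/-- The graph property `P` (a class of graphs) is characterized by `c` adjacencies:
for every (finite) graph `G` satisfying `P` and every vertex `x` of `G`, there is a set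
`D ⊆ V(G) \ {x}` with `|D| ≤ c` such that every graph `G'` on the same vertex set whose
edge set differs from that of `G` only on pairs `{x, u}` with `u ∉ D ∪ {x}`
also satisfies `P`. -/
def CharByAdjAll (P : ∀ {α : Type u}, SimpleGraph α → Prop) (c : ℕ) : Prop :=
  ∀ (α : Type u) [Fintype α], ∀ G : SimpleGraph α, P G → ∀ x : α,
    ∃ D : Set α, x ∉ D ∧ D.ncard ≤ c ∧
      ∀ G' : SimpleGraph α,
        (∀ ⦃a b : α⦄, a ≠ x → b ≠ x → (G'.Adj a b ↔ G.Adj a b)) →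
        (∀ u ∈ D, (G'.Adj x u ↔ G.Adj x u)) →
        P G'

/-- `G` contains a simple cycle of odd length. -/
def HasOddCycle {V : Type*} (G : SimpleGraph V) : Prop :=
  ∃ (x : V) (p : G.Walk x x), p.IsCycle ∧ Odd p.length

/-- In a walk with no repeated vertices ending at `x`, every edge containing `x`
is the last edge, and the penultimate vertex is not `x`. -/
lemma aux_last_edge {α : Type u} {G : SimpleGraph α} {b x : α} (r : G.Walk b x)
    (hnd : r.support.Nodup) (hne : ¬ r.Nil) :
    r.getVert (r.length - 1) ≠ x ∧
      ∀ e ∈ r.edges, x ∈ e → e = s(r.getVert (r.length - 1), x) := by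
  induction r with
  | nil => simp at hne
  | @cons b c x h r ih =>
    simp only [Walk.support_cons, List.nodup_cons] at hnd
    by_cases hr : r.Nil
    · have hcx : c = x := hr.eq
      subst hcx
      have hrnil : r = Walk.nil := by
        have := Walk.nil_iff_length_eq.mp hr
        exact Walk.nil_iff_eq_nil.mp (Walk.length_eq_zero_iff.mp this)
      subst hrnil
      have hbx : b ≠ c := by
        intro hh; exact hnd.1 (hh ▸ Walk.start_mem_support _)
      constructor
      · simpa using hbx
      · intro e he _
        simp only [Walk.edges_cons, Walk.edges_nil, List.mem_cons, List.not_mem_nil,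
          or_false] at he
        simpa using he
    · obtain ⟨hy, hyE⟩ := ih hnd.2 hr
      have hlen : 1 ≤ r.length := by
        have := Walk.nil_iff_length_eq.not.mp hr
        omega
      have hgv : (Walk.cons h r).getVert ((Walk.cons h r).length - 1)
          = r.getVert (r.length - 1) := by
        have h1 : (Walk.cons h r).length - 1 = (r.length - 1) + 1 := by
          simp only [Walk.length_cons]; omega
        rw [h1, Walk.getVert_cons r h (by omega)]
        congr 1
      refine ⟨hgv ▸ hy, ?_⟩
      intro e he hxe
      simp only [Walk.edges_cons, List.mem_cons] at he
      rcases he with he | he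
      · subst he
        rcases Sym2.mem_iff.mp hxe with hh | hh
        · exact absurd (Walk.end_mem_support r) (hh ▸ hnd.1)
        · exfalso
          subst hh
          -- r : G.Walk x x is non-nil with nodup support: impossible
          have : r.support.tail.Nodup := hnd.2.tail
          have : r.IsPath := by rw [Walk.isPath_def]; exact hnd.2
          have := (Path.loop_eq ⟨r, this⟩)
          rw [Subtype.ext_iff] at this
          simp only [Path.nil] at this
          exact hr (this ▸ Walk.Nil.nil)
      · exact hgv ▸ hyE e he hxe

/-- The property of containing an odd cycle is characterized by 2 adjacencies. -/
theorem stmt4 :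
    CharByAdjAll (fun {α} (G : SimpleGraph α) => HasOddCycle G) 2 := by
  intro α _ G hG x
  classical
  obtain ⟨v, p, hc, hodd⟩ := hG
  by_cases hx : x ∈ p.support
  · -- the cycle passes through x (after rotation)
    set q : G.Walk x x := p.rotate x hx with hqdef
    have hqc : q.IsCycle := hc.rotate hx
    have hqlen : q.length = p.length := by
      have hperm := (p.rotate_edges x hx).perm
      have := hperm.length_eq
      rwa [Walk.length_edges, Walk.length_edges] at this
    clear_value q
    cases q with
    | nil => exact absurd rfl hqc.ne_nil
    | @cons _ c _ h r =>
      have hri : r.IsPath ∧ s(x, c) ∉ r.edges := (Walk.cons_isCycle_iff r h).mp hqc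
      have hrnd : r.support.Nodup := hri.1.support_nodup
      have hrne : ¬ r.Nil := Walk.not_nil_of_ne h.ne'
      obtain ⟨hy, hyE⟩ := aux_last_edge r hrnd hrne
      set y := r.getVert (r.length - 1) with hydef
      refine ⟨{c, y}, ?_, ?_, ?_⟩
      · intro hmem
        rcases hmem with hh | hh
        · exact h.ne hh
        · exact hy (Set.mem_singleton_iff.mp hh).symm
      · calc ({c, y} : Set α).ncard ≤ ({y} : Set α).ncard + 1 := Set.ncard_insert_le c {y}
          _ ≤ 2 := by rw [Set.ncard_singleton]
      · intro G' h1 h2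
        have hedges : ∀ e ∈ (Walk.cons h r).edges, e ∈ G'.edgeSet := by
          intro e he
          simp only [Walk.edges_cons, List.mem_cons] at he
          rcases he with he | he
          · subst he
            rw [SimpleGraph.mem_edgeSet]
            exact (h2 c (by left; rfl)).mpr h
          · by_cases hxe : x ∈ e
            · have := hyE e he hxe
              subst this
              rw [SimpleGraph.mem_edgeSet]
              have hG : G.Adj y x := Walk.edges_subset_edgeSet r he
              exact ((h2 y (by right; rfl)).mpr hG.symm).symm
            · have hG : e ∈ G.edgeSet := Walk.edges_subset_edgeSet r he
              revert hxe hG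
              refine Sym2.ind (fun a b => ?_) e
              intro hxe hG
              rw [SimpleGraph.mem_edgeSet] at hG ⊢
              have ha : a ≠ x := fun hh => hxe (hh ▸ Sym2.mem_mk_left a b)
              have hb : b ≠ x := fun hh => hxe (hh ▸ Sym2.mem_mk_right a b)
              exact (h1 ha hb).mpr hG
        refine ⟨x, (Walk.cons h r).transfer G' hedges, hqc.transfer hedges, ?_⟩
        rw [Walk.length_transfer, hqlen]
        exact hodd
  · -- the cycle avoids x
    refine ⟨∅, Set.notMem_empty x, by simp, ?_⟩
    intro G' h1 _
    have hedges : ∀ e ∈ p.edges, e ∈ G'.edgeSet := by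
      intro e he
      have hG : e ∈ G.edgeSet := Walk.edges_subset_edgeSet p he
      revert he hG
      refine Sym2.ind (fun a b => ?_) e
      intro he hG
      rw [SimpleGraph.mem_edgeSet] at hG ⊢
      have ha : a ≠ x := fun hh => hx (hh ▸ Walk.fst_mem_support_of_mem_edges p he)
      have hb : b ≠ x := fun hh => hx (hh ▸ Walk.snd_mem_support_of_mem_edges p he)
      exact (h1 ha hb).mpr hG
    refine ⟨v, p.transfer G' hedges, hc.transfer hedges, ?_⟩
    rw [Walk.length_transfer]
    exact hodd
end

section
/- For every fixed finite nonempty set F of graphs, the property of containing some member of F as a minor is characterized by max_{H ∈ F} Δ(H) adjacencies. -/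
open SimpleGraph

universe u v

/-- Reachability transfer along a walk avoiding `x`. -/
lemma walk_reach {α : Type u} (G G' : SimpleGraph α) (C T' : Set α) (x : α)
    (h1 : ∀ ⦃a b : α⦄, a ≠ x → b ≠ x → (G'.Adj a b ↔ G.Adj a b)) :
    ∀ {u v : ↥C} (w : (G.induce C).Walk u v),
      (∀ z ∈ w.support, (z : α) ∈ T') → (∀ z ∈ w.support, (z : α) ≠ x) →
      ∀ (hu : (u : α) ∈ T') (hv : (v : α) ∈ T'),
      (G'.induce T').Reachable ⟨u, hu⟩ ⟨v, hv⟩ := by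
  intro u v w
  induction w with
  | nil => intro _ _ hu hv; exact Reachable.refl _
  | @cons u m v h p ih =>
      intro hsup hnx hu hv
      have hm : (m : α) ∈ T' := hsup m (by simp)
      have hadjG : G.Adj (u : α) (m : α) := h
      have hadj : G'.Adj (u : α) (m : α) :=
        (h1 (hnx u (by simp)) (hnx m (by simp))).mpr hadjG
      have step : (G'.induce T').Adj ⟨u, hu⟩ ⟨m, hm⟩ := hadj
      exact step.reachable.trans
        (ih (fun z hz => hsup z (by simp [hz])) (fun z hz => hnx z (by simp [hz])) hm hv)

/-- Key lemma: connected branch-set pruning. -/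
lemma key {α : Type u} (G : SimpleGraph α) (C : Set α) (hC : (G.induce C).Connected)
    (x : α) (hx : x ∈ C) :
    ∀ A : Finset α, ↑A ⊆ C →
    ∃ (S : Set α) (DK : Finset α), x ∈ S ∧ S ⊆ C ∧ ↑A ⊆ S ∧ DK.card ≤ A.card ∧
      (∀ d ∈ DK, G.Adj x d) ∧
      ∀ G' : SimpleGraph α, (∀ ⦃a b : α⦄, a ≠ x → b ≠ x → (G'.Adj a b ↔ G.Adj a b)) →
        (∀ d ∈ DK, G'.Adj x d) → (G'.induce S).Connected := by
  classical
  intro A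
  induction A using Finset.induction_on with
  | empty =>
      intro _
      refine ⟨{x}, ∅, rfl, by simpa using hx, by simp, by simp, by simp, ?_⟩
      intro G' _ _
      haveI : Nonempty ({x} : Set α) := ⟨⟨x, rfl⟩⟩
      refine ⟨fun u v => ?_⟩
      have huv : u = v := Subtype.ext (by rw [u.2, v.2])
      cases huv
      exact Reachable.refl _
  | @insert a A haA ih =>
      intro hsub
      have hAC : ↑A ⊆ C := by
        intro z hz; exact hsub (by simp [hz])
      obtain ⟨S, DK, hxS, hSC, hAS, hcard, hDadj, hmain⟩ := ih hAC
      by_cases haS : a ∈ S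
      · refine ⟨S, DK, hxS, hSC, ?_, ?_, hDadj, hmain⟩
        · intro z hz
          rcases Finset.mem_insert.mp (by exact_mod_cast hz) with h | h
          · rwa [h]
          · exact hAS h
        · exact hcard.trans (Finset.card_le_card (Finset.subset_insert _ _))
      · have haC : a ∈ C := hsub (by simp)
        have hax : a ≠ x := fun h => haS (h ▸ hxS)
        obtain ⟨p⟩ := hC.preconnected ⟨x, hx⟩ ⟨a, haC⟩
        set q : (G.induce C).Path ⟨x, hx⟩ ⟨a, haC⟩ := p.toPath with hq
        have hnodup : q.1.support.Nodup := q.2.support_nodup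
        have hne : (⟨x, hx⟩ : ↥C) ≠ ⟨a, haC⟩ := fun h => hax (congrArg Subtype.val h).symm
        have hnnil : ¬ q.1.Nil := fun h => hne (SimpleGraph.Walk.Nil.eq h)
        obtain ⟨d, hadj, q', hqeq⟩ := SimpleGraph.Walk.not_nil_iff.mp hnnil
        have hxsup : (⟨x, hx⟩ : ↥C) ∉ q'.support := by
          have := hnodup
          rw [hqeq, SimpleGraph.Walk.support_cons] at this
          exact (List.nodup_cons.mp this).1
        -- the new pieces
        set T : Set α := Subtype.val '' {z : ↥C | z ∈ q'.support} with hT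
        have hdT : (d : α) ∈ T := ⟨d, q'.start_mem_support, rfl⟩
        have haT : a ∈ T := ⟨⟨a, haC⟩, q'.end_mem_support, rfl⟩
        have hTnex : ∀ z ∈ q'.support, (z : α) ≠ x := by
          intro z hz h
          apply hxsup
          have : z = ⟨x, hx⟩ := Subtype.ext h
          rwa [this] at hz
        have hdx : (d : α) ≠ x := hTnex d q'.start_mem_support
        have hGxd : G.Adj x (d : α) := hadj
        refine ⟨S ∪ T, insert (d : α) DK, Or.inl hxS, ?_, ?_, ?_, ?_, ?_⟩
        · rintro z (hz | ⟨w, _, rfl⟩)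
          · exact hSC hz
          · exact w.2
        · intro z hz
          rcases Finset.mem_insert.mp (by exact_mod_cast hz) with h | h
          · exact h ▸ Or.inr haT
          · exact Or.inl (hAS h)
        · calc (insert (d : α) DK).card ≤ DK.card + 1 := Finset.card_insert_le _ _
            _ ≤ A.card + 1 := by omega
            _ = (insert a A).card := (Finset.card_insert_of_notMem haA).symm
        · intro e he
          rcases Finset.mem_insert.mp he with h | h
          · exact h ▸ hGxd
          · exact hDadj e h
        · intro G' h1 h2
          have hS' : (G'.induce S).Connected :=
            hmain G' h1 (fun e he => h2 e (Finset.mem_insert_of_mem he))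
          have hxd' : G'.Adj x (d : α) := h2 _ (Finset.mem_insert_self _ _)
          haveI : Nonempty ↥(S ∪ T) := ⟨⟨x, Or.inl hxS⟩⟩
          refine ⟨?_⟩
          · -- preconnected
            have hreach : ∀ z : ↥(S ∪ T), (G'.induce (S ∪ T)).Reachable ⟨x, Or.inl hxS⟩ z := by
              rintro ⟨z, hz | hzT⟩
              · -- z ∈ S : use connectivity of induce S, push along inclusion
                have hr : (G'.induce S).Reachable ⟨x, hxS⟩ ⟨z, hz⟩ :=
                  hS'.preconnected _ _
                exact hr.map
                  (⟨fun v => ⟨v.1, Or.inl v.2⟩, fun h => h⟩ :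
                    G'.induce S →g G'.induce (S ∪ T))
              · -- z ∈ T : walk from d along q'
                obtain ⟨w, hwsup, rfl⟩ := hzT
                have hdT' : (d : α) ∈ S ∪ T := Or.inr hdT
                have step : (G'.induce (S ∪ T)).Adj ⟨x, Or.inl hxS⟩ ⟨d, hdT'⟩ := hxd'
                refine step.reachable.trans ?_
                have hsub' : ∀ y ∈ (q'.takeUntil w hwsup).support, (y : α) ∈ S ∪ T := by
                  intro y hy
                  exact Or.inr ⟨y, q'.support_takeUntil_subset hwsup hy, rfl⟩
                have hnx' : ∀ y ∈ (q'.takeUntil w hwsup).support, (y : α) ≠ x := by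
                  intro y hy
                  exact hTnex y (q'.support_takeUntil_subset hwsup hy)
                exact walk_reach G G' C (S ∪ T) x h1 (q'.takeUntil w hwsup) hsub' hnx'
                  hdT' (Or.inr ⟨w, hwsup, rfl⟩)
            intro u v
            exact (hreach u).symm.trans (hreach v)

/-- For every fixed finite nonempty family `F = {H i}` of (finite) graphs, the property of
containing some member of `F` as a minor is characterized by `max_{H ∈ F} Δ(H)`
adjacencies. -/
theorem stmt5 {k : ℕ} (hk : 0 < k) (W : Fin k → Type v) [∀ i, Fintype (W i)]
    (H : ∀ i, SimpleGraph (W i)) :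
    CharByAdjAll (fun {α} (G : SimpleGraph α) => ∃ i, HasMinor G (H i))
      (Finset.univ.sup fun i => maxDeg (H i)) := by
  classical
  intro α _ G hmem x
  obtain ⟨i, φ, hne, hdisj, hconn, hedge⟩ := hmem
  by_cases hxφ : ∃ w, x ∈ φ w
  · -- x is in some branch set
    obtain ⟨w₀, hxw₀⟩ := hxφ
    have hxnot : ∀ w, w ≠ w₀ → x ∉ φ w := fun w hw hxw =>
      Set.disjoint_left.mp (hdisj hw) hxw hxw₀
    -- choose connecting pairs for each neighbor of w₀
    have hsel : ∀ w' : W i, ∃ ab : α × α,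
        (H i).Adj w₀ w' → ab.1 ∈ φ w₀ ∧ ab.2 ∈ φ w' ∧ G.Adj ab.1 ab.2 := by
      intro w'
      by_cases h : (H i).Adj w₀ w'
      · obtain ⟨p, hp, r, hr, hpr⟩ := hedge h
        exact ⟨(p, r), fun _ => ⟨hp, hr, hpr⟩⟩
      · exact ⟨(x, x), fun hc => absurd hc h⟩
    choose ab hab using hsel
    set a : W i → α := fun w' => (ab w').1 with ha_def
    set b : W i → α := fun w' => (ab w').2 with hb_def
    set N : Finset (W i) := Finset.univ.filter (fun w' : W i => (H i).Adj w₀ w') with hN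
    set A : Finset α := (N.filter (fun w' => a w' ≠ x)).image a with hA
    set B : Finset α := (N.filter (fun w' => a w' = x)).image b with hB
    have hNadj : ∀ w' ∈ N, (H i).Adj w₀ w' := by
      intro w' hw'; exact (Finset.mem_filter.mp hw').2
    have hAC : ↑A ⊆ φ w₀ := by
      intro z hz
      obtain ⟨w', hw', rfl⟩ := Finset.mem_image.mp (by exact_mod_cast hz)
      exact (hab w' (hNadj w' (Finset.filter_subset _ _ hw'))).1
    obtain ⟨S, DK, hxS, hSC, hAS, hDKcard, hDKadj, hmain⟩ :=
      key G (φ w₀) (hconn w₀) x hxw₀ A hAC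
    have hBprop : ∀ z ∈ B, z ≠ x ∧ G.Adj x z := by
      intro z hz
      obtain ⟨w', hw', rfl⟩ := Finset.mem_image.mp hz
      obtain ⟨hwN, hax⟩ := Finset.mem_filter.mp hw'
      have hadj := hNadj w' hwN
      have h3 := hab w' hadj
      have hwne : w' ≠ w₀ := fun h => (H i).irrefl (h ▸ hadj)
      refine ⟨fun h => hxnot w' hwne (h ▸ h3.2.1), ?_⟩
      rw [← hax]
      exact h3.2.2
    refine ⟨↑(DK ∪ B), ?_, ?_, ?_⟩
    · intro hxD
      rcases Finset.mem_union.mp (by exact_mod_cast hxD) with h | h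
      · exact (hDKadj x h).ne rfl
      · exact (hBprop x h).1 rfl
    · rw [Set.ncard_coe_finset]
      have hsplit : (N.filter (fun w' => a w' = x)).card
          + (N.filter (fun w' => ¬ a w' = x)).card = N.card :=
        Finset.card_filter_add_card_filter_not _
      have hcard1 : (DK ∪ B).card ≤ N.card := by
        calc (DK ∪ B).card ≤ DK.card + B.card := Finset.card_union_le _ _
          _ ≤ (N.filter (fun w' => ¬ a w' = x)).card
              + (N.filter (fun w' => a w' = x)).card := by
            gcongr
            · exact hDKcard.trans (Finset.card_image_le)
            · exact Finset.card_image_le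
          _ = N.card := by omega
      have hNdeg : N.card = ((H i).neighborSet w₀).ncard := by
        rw [Set.ncard_eq_toFinset_card']
        congr 1
        ext w'
        rw [Set.mem_toFinset]
        simp [hN, SimpleGraph.neighborSet]
      have hle1 : ((H i).neighborSet w₀).ncard ≤ maxDeg (H i) := by
        rw [maxDeg]
        exact le_ciSup (Set.Finite.bddAbove (Set.finite_range
          (fun y => ((H i).neighborSet y).ncard))) w₀
      calc (DK ∪ B).card ≤ maxDeg (H i) := by omega
        _ ≤ Finset.univ.sup fun j => maxDeg (H j) := Finset.le_sup (f := fun j => maxDeg (H j)) (Finset.mem_univ i)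
    · intro G' h1 h2
      have hpres : ∀ {u v : α}, u ≠ x → v ≠ x → G.Adj u v → G'.Adj u v :=
        fun hu hv h => (h1 hu hv).mpr h
      have hDKadj' : ∀ d ∈ DK, G'.Adj x d := by
        intro d hd
        have : (d : α) ∈ (↑(DK ∪ B) : Set α) := by
          exact_mod_cast Finset.mem_union_left _ hd
        exact (h2 d this).mpr (hDKadj d hd)
      have hBadj' : ∀ z ∈ B, G'.Adj x z := by
        intro z hz
        have hm : z ∈ (↑(DK ∪ B) : Set α) := by
          exact_mod_cast Finset.mem_union_right _ hz
        exact (h2 z hm).mpr (hBprop z hz).2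
      set φ' : W i → Set α := fun w => if w = w₀ then S else φ w with hφ'
      have hφ'sub : ∀ w, φ' w ⊆ φ w := by
        intro w z hz
        by_cases h : w = w₀
        · subst h; simp only [hφ', if_pos rfl] at hz; exact hSC hz
        · simpa [hφ', if_neg h] using hz
      have hxnot' : ∀ w, w ≠ w₀ → x ∉ φ' w := fun w hw hxw => hxnot w hw (hφ'sub w hxw)
      refine ⟨i, φ', ?_, ?_, ?_, ?_⟩
      · intro w
        by_cases h : w = w₀
        · subst h; exact ⟨x, by simp [hφ', hxS]⟩
        · simpa [hφ', if_neg h] using hne w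
      · intro w w' hww'
        exact (hdisj hww').mono (hφ'sub w) (hφ'sub w')
      · intro w
        by_cases h : w = w₀
        · have hseq : φ' w = S := by simp [hφ', if_pos h]
          rw [hseq]
          exact hmain G' h1 hDKadj'
        · have heq : φ' w = φ w := by simp [hφ', if_neg h]
          rw [heq]
          have hgeq : G'.induce (φ w) = G.induce (φ w) := by
            ext ⟨u, hu⟩ ⟨v, hv⟩
            exact h1 (fun he => hxnot w h (he ▸ hu)) (fun he => hxnot w h (he ▸ hv))
          rw [hgeq]
          exact hconn w
      · intro w w' hww'
        have main : ∀ w' : W i, (H i).Adj w₀ w' →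
            ∃ p ∈ φ' w₀, ∃ r ∈ φ' w', G'.Adj p r := by
          intro w' hadj
          have hwne : w' ≠ w₀ := fun h => (H i).irrefl (h ▸ hadj)
          have h3 := hab w' hadj
          have hwN : w' ∈ N := Finset.mem_filter.mpr ⟨Finset.mem_univ _, hadj⟩
          have hφ'w₀ : φ' w₀ = S := by simp [hφ']
          have hφ'w' : φ' w' = φ w' := by simp [hφ', if_neg hwne]
          by_cases hax : a w' = x
          · -- use edge x - b w'
            have hbB : b w' ∈ B :=
              Finset.mem_image.mpr ⟨w', Finset.mem_filter.mpr ⟨hwN, hax⟩, rfl⟩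
            exact ⟨x, by rw [hφ'w₀]; exact hxS,
              b w', by rw [hφ'w']; exact h3.2.1, hBadj' _ hbB⟩
          · have haA : a w' ∈ A :=
              Finset.mem_image.mpr ⟨w', Finset.mem_filter.mpr ⟨hwN, hax⟩, rfl⟩
            have hbne : b w' ≠ x := fun h => hxnot w' hwne (h ▸ h3.2.1)
            exact ⟨a w', by rw [hφ'w₀]; exact hAS haA,
              b w', by rw [hφ'w']; exact h3.2.1, hpres hax hbne h3.2.2⟩
        by_cases hw : w = w₀
        · subst hw; exact main w' hww'
        · by_cases hw' : w' = w₀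
          · subst hw'
            obtain ⟨p, hp, r, hr, hpr⟩ := main w hww'.symm
            exact ⟨r, hr, p, hp, hpr.symm⟩
          · obtain ⟨p, hp, r, hr, hpr⟩ := hedge hww'
            have hφw : φ' w = φ w := by simp [hφ', if_neg hw]
            have hφw' : φ' w' = φ w' := by simp [hφ', if_neg hw']
            exact ⟨p, by rw [hφw]; exact hp, r, by rw [hφw']; exact hr,
              hpres (fun h => hxnot w hw (h ▸ hp)) (fun h => hxnot w' hw' (h ▸ hr)) hpr⟩
  · -- x is in no branch set
    push_neg at hxφ
    refine ⟨∅, by simp, by simp, ?_⟩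
    intro G' h1 _
    refine ⟨i, φ, hne, hdisj, ?_, ?_⟩
    · intro w
      have hgeq : G'.induce (φ w) = G.induce (φ w) := by
        ext ⟨u, hu⟩ ⟨v, hv⟩
        exact h1 (fun he => hxφ w (he ▸ hu)) (fun he => hxφ w (he ▸ hv))
      rw [hgeq]
      exact hconn w
    · intro w w' hww'
      obtain ⟨p, hp, r, hr, hpr⟩ := hedge hww'
      exact ⟨p, hp, r, hr,
        (h1 (fun h => hxφ w (h ▸ hp)) (fun h => hxφ w' (h ▸ hr))).mpr hpr⟩
end

section
/- For every fixed graph H, the property of having a perfect H-packing is characterized by Δ(H) adjacencies. -/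
open SimpleGraph

universe u v

/-- `G` has a perfect `H`-packing: its vertex set can be partitioned into parts, each of
which is the vertex set of a subgraph of `G` isomorphic to `H`. -/
def HasPerfectPacking {V : Type u} {W : Type v} (G : SimpleGraph V) (H : SimpleGraph W) :
    Prop :=
  ∃ P : Set (Set V),
    (∀ S ∈ P, ∀ T ∈ P, S ≠ T → Disjoint S T) ∧
    ⋃₀ P = Set.univ ∧
    ∀ S ∈ P, ∃ f : W → V, Function.Injective f ∧ Set.range f = S ∧
      ∀ ⦃a b⦄, H.Adj a b → G.Adj (f a) (f b)

/-- For every fixed graph `H`, the property of having a perfect `H`-packing is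
characterized by `Δ(H)` adjacencies. -/
theorem stmt6 {W : Type v} [Fintype W] (H : SimpleGraph W) :
    CharByAdjAll (fun {α} (G : SimpleGraph α) => HasPerfectPacking G H) (maxDeg H) := by
  intro α _ G hG x
  obtain ⟨P, hdisj, hcov, hiso⟩ := hG
  have hx : x ∈ ⋃₀ P := by rw [hcov]; trivial
  obtain ⟨S, hS, hxS⟩ := hx
  obtain ⟨f, hfinj, hfrange, hfadj⟩ := hiso S hS
  obtain ⟨w, hw⟩ : ∃ w, f w = x := by rw [← Set.mem_range, hfrange]; exact hxS
  refine ⟨f '' (H.neighborSet w), ?_, ?_, ?_⟩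
  · rintro ⟨u, hu, hfu⟩
    rw [← hw] at hfu
    exact H.irrefl (hfinj hfu ▸ hu)
  · rw [Set.ncard_image_of_injective _ hfinj]
    exact le_ciSup (f := fun v => (H.neighborSet v).ncard) (Set.Finite.bddAbove (Set.finite_range _)) w
  · intro G' h1 h2
    refine ⟨P, hdisj, hcov, ?_⟩
    intro T hT
    obtain ⟨g, hginj, hgrange, hgadj⟩ := hiso T hT
    by_cases hTS : T = S
    · subst hTS
      refine ⟨f, hfinj, hfrange, ?_⟩
      intro a b hab
      by_cases ha : f a = x
      · have haw : a = w := hfinj (ha.trans hw.symm)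
        subst haw
        rw [ha, (h2 (f b) ⟨b, hab, rfl⟩)]
        rw [← ha]; exact hfadj hab
      · by_cases hb : f b = x
        · have hbw : b = w := hfinj (hb.trans hw.symm)
          subst hbw
          rw [G'.adj_comm, hb, h2 (f a) ⟨a, hab.symm, rfl⟩, ← hb, G.adj_comm]
          exact hfadj hab
        · rw [h1 ha hb]; exact hfadj hab
    · refine ⟨g, hginj, hgrange, ?_⟩
      have hxT : x ∉ T := fun hxT =>
        Set.disjoint_left.mp (hdisj T hT S hS hTS) hxT hxS
      intro a b hab
      have hga : g a ≠ x := fun h => hxT (h ▸ (hgrange ▸ Set.mem_range_self a))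
      have hgb : g b ≠ x := fun h => hxT (h ▸ (hgrange ▸ Set.mem_range_self b))
      rw [h1 hga hgb]; exact hgadj hab
end

section
/- For every fixed integer ℓ ≥ 4, the property of having a chordless cycle of length at least ℓ (i.e., an induced cycle on at least ℓ vertices) is characterized by ℓ − 1 adjacencies. -/
open SimpleGraph

universe u

/-- `G` has a chordless (induced) cycle on at least `l` vertices: a simple cycle of
length at least `l` such that the only edges of `G` between vertices of the cycle are
the edges of the cycle itself. -/
def HasLongChordlessCycle {V : Type*} (G : SimpleGraph V) (l : ℕ) : Prop :=
  ∃ (x : V) (p : G.Walk x x), p.IsCycle ∧ l ≤ p.length ∧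
    ∀ ⦃a b : V⦄, a ∈ p.support → b ∈ p.support → G.Adj a b → s(a, b) ∈ p.edges

namespace SimpleGraph.Walk
variable {V : Type*} {G : SimpleGraph V}

lemma support_eq_map_range' {u v : V} (p : G.Walk u v) :
    p.support = (List.range (p.length + 1)).map p.getVert := by
  induction p with
  | nil => rfl
  | cons h q ih =>
    rw [support_cons, length_cons, List.range_succ_eq_map, List.map_cons, List.map_map, ih]
    rfl

lemma edges_eq_map_range' {u v : V} (p : G.Walk u v) :
    p.edges = (List.range p.length).map (fun i => s(p.getVert i, p.getVert (i+1))) := by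
  induction p with
  | nil => rfl
  | cons h q ih =>
    rw [edges_cons, length_cons, List.range_succ_eq_map, List.map_cons, List.map_map, ih]
    congr 1
    simp [getVert_cons_succ, getVert_zero]

def take' : {u v : V} → (p : G.Walk u v) → (n : ℕ) → G.Walk u (p.getVert n)
  | _, _, p, 0 => Walk.nil.copy rfl (p.getVert_zero).symm
  | _, _, .nil, _+1 => Walk.nil
  | _, _, .cons h q, n+1 => Walk.cons h (take' q n)

lemma edges_take' {u v : V} (p : G.Walk u v) (n : ℕ) :
    (p.take' n).edges = p.edges.take n := by
  induction p generalizing n with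
  | nil => cases n <;> simp [take']
  | cons h q ih =>
    cases n with
    | zero => simp [take']
    | succ n => simp [take', ih]

lemma support_take' {u v : V} (p : G.Walk u v) (n : ℕ) :
    (p.take' n).support = p.support.take (n+1) := by
  induction p generalizing n with
  | nil => cases n <;> simp [take']
  | cons h q ih =>
    cases n with
    | zero => simp [take']
    | succ n => simp [take', ih]

lemma length_take' {u v : V} (p : G.Walk u v) (n : ℕ) (hn : n ≤ p.length) :
    (p.take' n).length = n := by
  induction p generalizing n with
  | nil => simp only [Walk.length_nil, Nat.le_zero] at hn; subst hn; simp [take']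
  | cons h q ih =>
    cases n with
    | zero => simp [take']
    | succ n => simp [take', ih n (by simpa using hn)]

end SimpleGraph.Walk

/-- For every fixed `l ≥ 4`, the property of having a chordless cycle of length at
least `l` is characterized by `l - 1` adjacencies. -/
theorem stmt7 (l : ℕ) (hl : 4 ≤ l) :
    CharByAdjAll (fun {α} (G : SimpleGraph α) => HasLongChordlessCycle G l) (l - 1) := by
  intro α _ G hG x
  classical
  obtain ⟨y, p, hcyc, hlen, hchord⟩ := hG
  by_cases hx : x ∈ p.support
  swap
  · -- x not on the cycle: D = ∅ works
    refine ⟨∅, Set.notMem_empty x, by simp, ?_⟩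
    intro G' hiff _
    have hp : ∀ e ∈ p.edges, e ∈ G'.edgeSet := by
      intro e he
      induction e with
      | h a b =>
        have ha := p.fst_mem_support_of_mem_edges he
        have hb := p.snd_mem_support_of_mem_edges he
        have hadj : G.Adj a b := p.edges_subset_edgeSet he
        exact (hiff (fun h => hx (h ▸ ha)) (fun h => hx (h ▸ hb))).mpr hadj
    refine ⟨y, p.transfer G' hp, hcyc.transfer hp, by rwa [Walk.length_transfer], ?_⟩
    intro a b ha hb hab
    rw [Walk.support_transfer] at ha hb
    rw [Walk.edges_transfer]
    have haz : a ≠ x := fun h => hx (h ▸ ha)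
    have hbz : b ≠ x := fun h => hx (h ▸ hb)
    exact hchord ha hb ((hiff haz hbz).mp hab)
  · -- x on the cycle: rotate the cycle to start at x
    set q : G.Walk x x := p.rotate x hx with hqdef
    have hq : q.IsCycle := hcyc.rotate hx
    have hqlen : q.length = p.length := by
      have h1 := p.take_spec hx
      have h2 : ((p.takeUntil x hx).append (p.dropUntil x hx)).length = p.length := by rw [h1]
      rw [Walk.length_append] at h2
      rw [hqdef]
      unfold Walk.rotate
      rw [Walk.length_append]
      omega
    set k := q.length with hkdef
    have hkl : l ≤ k := by omega
    have hk4 : 4 ≤ k := le_trans hl hkl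
    -- membership in tail of support for closed walks
    have htailmap : ∀ {u : α} (c : G.Walk u u),
        c.support.tail = (List.range c.length).map (fun i => c.getVert (i+1)) := by
      intro u c
      rw [Walk.support_eq_map_range', List.range_succ_eq_map, List.map_cons, List.tail_cons,
        List.map_map]
      rfl
    have hmemtail : ∀ {u : α} (c : G.Walk u u), 0 < c.length → ∀ a ∈ c.support,
        a ∈ c.support.tail := by
      intro u c hc a ha
      rw [Walk.support_eq_cons] at ha
      rcases List.mem_cons.mp ha with rfl | h
      · rw [htailmap]
        refine List.mem_map.mpr ⟨c.length - 1, List.mem_range.mpr (by omega), ?_⟩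
        rw [Nat.sub_add_cancel (by omega : 1 ≤ c.length), Walk.getVert_length]
      · exact h
    have hplen : 0 < p.length := by omega
    have hqchord : ∀ ⦃a b : α⦄, a ∈ q.support → b ∈ q.support → G.Adj a b →
        s(a, b) ∈ q.edges := by
      intro a b ha hb hab
      have ha' : a ∈ p.support :=
        List.mem_of_mem_tail ((p.support_rotate x hx).mem_iff.mp (hmemtail q (by omega) a ha))
      have hb' : b ∈ p.support :=
        List.mem_of_mem_tail ((p.support_rotate x hx).mem_iff.mp (hmemtail q (by omega) b hb))
      exact (p.rotate_edges x hx).mem_iff.mpr (hchord ha' hb' hab)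
    -- injectivity of getVert
    have hinj1 : ∀ i i', i < k → i' < k → q.getVert (i+1) = q.getVert (i'+1) → i = i' := by
      have hnd : q.support.tail.Nodup := hq.support_nodup
      rw [htailmap q] at hnd
      intro i i' hi hi' h
      exact List.inj_on_of_nodup_map hnd (List.mem_range.mpr hi) (List.mem_range.mpr hi') h
    have hgk : q.getVert k = x := Walk.getVert_length q
    have hne_x : ∀ i, 1 ≤ i → i ≤ k - 1 → q.getVert i ≠ x := by
      intro i h1 h2 h
      have : q.getVert ((i-1)+1) = q.getVert ((k-1)+1) := by
        rw [Nat.sub_add_cancel h1, Nat.sub_add_cancel (by omega : 1 ≤ k), hgk, h]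
      have := hinj1 (i-1) (k-1) (by omega) (by omega) this
      omega
    have hinj0 : ∀ i i', i ≤ k - 1 → i' ≤ k - 1 → q.getVert i = q.getVert i' → i = i' := by
      intro i i' hi hi' h
      rcases Nat.eq_zero_or_pos i with rfl | hip
      · rcases Nat.eq_zero_or_pos i' with rfl | hi'p
        · rfl
        · exact absurd (h.symm.trans q.getVert_zero) (hne_x i' hi'p hi')
      · rcases Nat.eq_zero_or_pos i' with rfl | hi'p
        · exact absurd (h.trans q.getVert_zero) (hne_x i hip hi)
        · have : q.getVert ((i-1)+1) = q.getVert ((i'-1)+1) := by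
            rw [Nat.sub_add_cancel hip, Nat.sub_add_cancel hi'p, h]
          have := hinj1 (i-1) (i'-1) (by omega) (by omega) this
          omega
    have hadjv : ∀ i, i < k → G.Adj (q.getVert i) (q.getVert (i+1)) :=
      fun i hi => q.adj_getVert_succ hi
    have hmemsup : ∀ i, i ≤ k → q.getVert i ∈ q.support := by
      intro i hi
      rw [Walk.support_eq_map_range']
      exact List.mem_map.mpr ⟨i, List.mem_range.mpr (by omega), rfl⟩
    have hmemedge : ∀ e, e ∈ q.edges ↔
        ∃ m, m < k ∧ e = s(q.getVert m, q.getVert (m+1)) := by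
      intro e
      rw [Walk.edges_eq_map_range']
      simp only [List.mem_map, List.mem_range]
      constructor
      · rintro ⟨m, hm, rfl⟩; exact ⟨m, hm, rfl⟩
      · rintro ⟨m, hm, rfl⟩; exact ⟨m, hm, rfl⟩
    -- no chords at x in G
    have hGnochord : ∀ i, 2 ≤ i → i ≤ k - 2 → ¬ G.Adj x (q.getVert i) := by
      intro i h2 hk2 hadjxi
      have he := hqchord (q.start_mem_support) (hmemsup i (by omega)) hadjxi
      obtain ⟨m, hm, heq⟩ := (hmemedge _).mp he
      rcases Sym2.eq_iff.mp heq with ⟨h1, h2'⟩ | ⟨h1, h2'⟩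
      · have hm0 : m = 0 := by
          by_contra hm0
          exact hne_x m (by omega) (by omega) h1.symm
        subst hm0
        have := hinj0 i 1 (by omega) (by omega) h2'
        omega
      · have hm1 : m + 1 = k := by
          by_contra hm1
          exact hne_x (m+1) (by omega) (by omega) h1.symm
        have : i = m := hinj0 i m (by omega) (by omega) h2'
        omega
    -- the set D
    refine ⟨↑((Finset.Icc 1 (l-2)).image q.getVert ∪ {q.getVert (k-1)}), ?_, ?_, ?_⟩
    · simp only [Finset.coe_union, Finset.coe_image, Finset.coe_Icc, Set.mem_union,
        Set.mem_image, Finset.coe_singleton, Set.mem_singleton_iff]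
      rintro (⟨i, hi, h⟩ | h)
      · simp only [Set.mem_Icc] at hi
        exact hne_x i hi.1 (by omega) h
      · exact hne_x (k-1) (by omega) (by omega) h.symm
    · rw [Set.ncard_coe_finset]
      calc _ ≤ ((Finset.Icc 1 (l-2)).image q.getVert).card + 1 := by
              apply le_trans (Finset.card_union_le _ _); simp
        _ ≤ (Finset.Icc 1 (l-2)).card + 1 := by
              have := Finset.card_image_le (f := q.getVert) (s := Finset.Icc 1 (l-2))
              omega
        _ ≤ l - 1 := by rw [Nat.card_Icc]; omega
    · intro G' hiff hD
      have hDmem : ∀ i, (1 ≤ i ∧ i ≤ l - 2) ∨ i = k - 1 →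
          (G'.Adj x (q.getVert i) ↔ G.Adj x (q.getVert i)) := by
        intro i hi
        apply hD
        simp only [Finset.coe_union, Finset.coe_image, Finset.coe_Icc, Set.mem_union,
          Set.mem_image, Finset.coe_singleton, Set.mem_singleton_iff]
        rcases hi with ⟨h1, h2⟩ | rfl
        · exact Or.inl ⟨i, Set.mem_Icc.mpr ⟨h1, h2⟩, rfl⟩
        · exact Or.inr rfl
      have hx1 : G'.Adj x (q.getVert 1) := by
        rw [hDmem 1 (Or.inl ⟨le_refl _, by omega⟩)]
        have := hadjv 0 (by omega)
        rwa [q.getVert_zero] at this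
      have hxk : G'.Adj x (q.getVert (k-1)) := by
        rw [hDmem (k-1) (Or.inr rfl)]
        have := hadjv (k-1) (by omega)
        rw [Nat.sub_add_cancel (by omega : 1 ≤ k), hgk] at this
        exact this.symm
      -- find the first chord/cycle-closing index j ≥ l-1
      have hex : ∃ j, l - 1 ≤ j ∧ j ≤ k - 1 ∧ G'.Adj x (q.getVert j) :=
        ⟨k-1, by omega, le_refl _, hxk⟩
      set j := Nat.find hex with hjdef
      obtain ⟨hjl, hjk, hadjj⟩ := Nat.find_spec hex
      have hmin : ∀ m, m < j → ¬ (l - 1 ≤ m ∧ m ≤ k - 1 ∧ G'.Adj x (q.getVert m)) :=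
        fun m hm => Nat.find_min hex hm
      have hno : ∀ i, 2 ≤ i → i < j → ¬ G'.Adj x (q.getVert i) := by
        intro i h2 hij hadj'
        by_cases hil : i ≤ l - 2
        · rw [hDmem i (Or.inl ⟨by omega, hil⟩)] at hadj'
          exact hGnochord i h2 (by omega) hadj'
        · exact hmin i hij ⟨by omega, by omega, hadj'⟩
      -- build the new cycle in G'
      have hjklen : j ≤ q.length := by omega
      have hedgesw : ∀ e ∈ (q.take' j).edges, e ∈ G'.edgeSet := by
        intro e he
        rw [Walk.edges_take', Walk.edges_eq_map_range', ← List.map_take, List.take_range] at he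
        obtain ⟨m, hm, rfl⟩ := List.mem_map.mp he
        rw [List.mem_range] at hm
        have hm' : m < j := by omega
        rcases Nat.eq_zero_or_pos m with rfl | hmp
        · rw [SimpleGraph.mem_edgeSet, q.getVert_zero]
          exact hx1
        · rw [SimpleGraph.mem_edgeSet]
          have h1 : q.getVert m ≠ x := hne_x m hmp (by omega)
          have h2 : q.getVert (m+1) ≠ x := hne_x (m+1) (by omega) (by omega)
          exact (hiff h1 h2).mpr (hadjv m (by omega))
      set w' : G'.Walk x (q.getVert j) := (q.take' j).transfer G' hedgesw with hw'def
      have hsupw : w'.support = (List.range (j+1)).map q.getVert := by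
        rw [hw'def, Walk.support_transfer, Walk.support_take', Walk.support_eq_map_range',
          ← List.map_take, List.take_range]
        congr 2
        omega
      have hedw : w'.edges = (List.range j).map (fun m => s(q.getVert m, q.getVert (m+1))) := by
        rw [hw'def, Walk.edges_transfer, Walk.edges_take', Walk.edges_eq_map_range',
          ← List.map_take, List.take_range]
        congr 2
        omega
      have hwpath : w'.IsPath := by
        rw [Walk.isPath_def, hsupw]
        refine List.Nodup.map_on ?_ (List.nodup_range (n := _))
        intro a ha b hb h
        rw [List.mem_range] at ha hb
        exact hinj0 a b (by omega) (by omega) h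
      have hclose : s(x, q.getVert j) ∉ w'.reverse.edges := by
        rw [Walk.edges_reverse, List.mem_reverse, hedw]
        intro h
        obtain ⟨m, hm, heq⟩ := List.mem_map.mp h
        rw [List.mem_range] at hm
        rcases Sym2.eq_iff.mp heq.symm with ⟨h1, h2⟩ | ⟨h1, h2⟩
        · have hm0 : m = 0 := by
            by_contra hm0
            exact hne_x m (by omega) (by omega) h1.symm
          subst hm0
          have := hinj0 j 1 (by omega) (by omega) h2
          omega
        · exact hne_x (m+1) (by omega) (by omega) h1.symm
      set c : G'.Walk x x := Walk.cons hadjj w'.reverse with hcdef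
      have hccyc : c.IsCycle :=
        (Walk.cons_isCycle_iff _ _).mpr ⟨hwpath.reverse, hclose⟩
      have hwlen : w'.length = j := by
        rw [hw'def, Walk.length_transfer, Walk.length_take' _ _ hjklen]
      have hclen : c.length = j + 1 := by
        rw [hcdef, Walk.length_cons, Walk.length_reverse, hwlen]
      have hsupc : ∀ a, a ∈ c.support ↔ ∃ i, i ≤ j ∧ q.getVert i = a := by
        intro a
        rw [hcdef, Walk.support_cons, List.mem_cons, Walk.support_reverse, List.mem_reverse,
          hsupw]
        simp only [List.mem_map, List.mem_range]
        constructor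
        · rintro (rfl | ⟨i, hi, rfl⟩)
          · exact ⟨0, by omega, q.getVert_zero⟩
          · exact ⟨i, by omega, rfl⟩
        · rintro ⟨i, hi, rfl⟩
          exact Or.inr ⟨i, by omega, rfl⟩
      have hedc : ∀ e, e ∈ c.edges ↔
          e = s(x, q.getVert j) ∨ ∃ m, m < j ∧ e = s(q.getVert m, q.getVert (m+1)) := by
        intro e
        rw [hcdef, Walk.edges_cons, List.mem_cons, Walk.edges_reverse, List.mem_reverse, hedw]
        simp only [List.mem_map, List.mem_range]
        constructor
        · rintro (rfl | ⟨m, hm, rfl⟩)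
          · exact Or.inl rfl
          · exact Or.inr ⟨m, hm, rfl⟩
        · rintro (rfl | ⟨m, hm, rfl⟩)
          · exact Or.inl rfl
          · exact Or.inr ⟨m, hm, rfl⟩
      refine ⟨x, c, hccyc, by omega, ?_⟩
      -- chordlessness of the new cycle
      have claim : ∀ i i', i < i' → i' ≤ j → G'.Adj (q.getVert i) (q.getVert i') →
          s(q.getVert i, q.getVert i') ∈ c.edges := by
        intro i i' hii' hi'j hadj'
        rcases Nat.eq_zero_or_pos i with rfl | hip
        · rw [q.getVert_zero] at hadj' ⊢
          rcases eq_or_lt_of_le hi'j with rfl | hi'lt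
          · exact (hedc _).mpr (Or.inl rfl)
          · rcases Nat.lt_or_ge i' 2 with h2 | h2
            · have hi1 : i' = 1 := by omega
              subst hi1
              refine (hedc _).mpr (Or.inr ⟨0, by omega, ?_⟩)
              rw [q.getVert_zero]
            · exact absurd hadj' (hno i' h2 hi'lt)
        · have h1 : q.getVert i ≠ x := hne_x i hip (by omega)
          have h2 : q.getVert i' ≠ x := hne_x i' (by omega) (by omega)
          have hGadj : G.Adj (q.getVert i) (q.getVert i') := (hiff h1 h2).mp hadj'
          have he := hqchord (hmemsup i (by omega)) (hmemsup i' (by omega)) hGadj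
          obtain ⟨m, hm, heq⟩ := (hmemedge _).mp he
          rcases Sym2.eq_iff.mp heq with ⟨ha, hb⟩ | ⟨ha, hb⟩
          · have him : i = m := hinj0 i m (by omega) (by omega) ha
            have hm1 : m + 1 ≤ k - 1 := by
              by_contra hc'
              have : m + 1 = k := by omega
              rw [this, hgk] at hb
              exact h2 hb
            have hi'm : i' = m + 1 := hinj0 i' (m+1) (by omega) hm1 hb
            refine (hedc _).mpr (Or.inr ⟨m, by omega, ?_⟩)
            rw [him, hi'm]
          · have hm1 : m + 1 ≤ k - 1 := by
              by_contra hc'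
              have : m + 1 = k := by omega
              rw [this, hgk] at ha
              exact h1 ha
            have him : i = m + 1 := hinj0 i (m+1) (by omega) hm1 ha
            have hi'm : i' = m := hinj0 i' m (by omega) (by omega) hb
            omega
      intro a b ha hb hab
      obtain ⟨i, hi, rfl⟩ := (hsupc a).mp ha
      obtain ⟨i', hi', rfl⟩ := (hsupc b).mp hb
      rcases lt_trichotomy i i' with h | h | h
      · exact claim i i' h hi' hab
      · subst h
        exact absurd rfl hab.ne
      · rw [Sym2.eq_swap]
        exact claim i' i h hi hab.symm
end

section
/- Let Π be a graph property characterized by c adjacencies, let G be a graph with vertex cover X, let ℓ ∈ ℕ, and let M ⊆ V(G) \ X be an (ℓ, c)-marking of (G, X). If S ⊆ V(G) and P ⊆ V(G) \ S satisfy G[P] ∈ Π and ℓ ≥ |S| + |P|, then there exists a set P' ⊆ (X ∪ M) \ S with |P'| = |P| and G[P'] ∈ Π. -/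
open SimpleGraph

universe u

/-- The class of graphs `P` is closed under isomorphism. -/
def IsoClosed (P : ∀ {α : Type u}, SimpleGraph α → Prop) : Prop :=
  ∀ {α β : Type u} (G : SimpleGraph α) (G' : SimpleGraph β), Nonempty (G ≃g G') → P G → P G'

/-- `M ⊆ V(G) \ X` is an `(ℓ, c)`-marking of `(G, X)`: for every pair of disjoint sets
`Y⁺, Y⁻ ⊆ X` with `|Y⁺| + |Y⁻| ≤ c`, letting `Z` be the set of vertices outside `X`
adjacent to all of `Y⁺` and none of `Y⁻`, either `Z ⊆ M` or `|Z ∩ M| ≥ ℓ`. -/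
def IsMarking {V : Type*} (G : SimpleGraph V) (X M : Set V) (l c : ℕ) : Prop :=
  Disjoint M X ∧
  ∀ Yp Ym : Set V, Yp ⊆ X → Ym ⊆ X → Disjoint Yp Ym → Yp.ncard + Ym.ncard ≤ c →
    ({z : V | z ∉ X ∧ Yp ⊆ G.neighborSet z ∧ Ym ∩ G.neighborSet z = ∅} ⊆ M ∨
      l ≤ ({z : V | z ∉ X ∧ Yp ⊆ G.neighborSet z ∧ Ym ∩ G.neighborSet z = ∅} ∩ M).ncard)

/-- Let `Pi` be a graph property characterized by `c` adjacencies, `G` a graph with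
vertex cover `X`, and `M` an `(ℓ, c)`-marking of `(G, X)`. If `S ⊆ V(G)` and
`P ⊆ V(G) \ S` satisfy `G[P] ∈ Pi` and `ℓ ≥ |S| + |P|`, then there is a set
`P' ⊆ (X ∪ M) \ S` with `|P'| = |P|` and `G[P'] ∈ Pi`. -/
theorem stmt10 {V : Type u} [Fintype V]
    (Pi : ∀ {α : Type u}, SimpleGraph α → Prop)
    (hiso : IsoClosed fun {α} (G : SimpleGraph α) => Pi G)
    (c : ℕ) (hchar : CharByAdjAll (fun {α} (G : SimpleGraph α) => Pi G) c)
    (G : SimpleGraph V) (X : Set V) (hX : _root_.IsVertexCover G X)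
    (l : ℕ) (M : Set V) (hM : IsMarking G X M l c)
    (S P : Set V) (hPS : Disjoint P S) (hPi : Pi (G.induce P))
    (hl : S.ncard + P.ncard ≤ l) :
    ∃ P' : Set V, P' ⊆ (X ∪ M) \ S ∧ P'.ncard = P.ncard ∧ Pi (G.induce P') := by
  classical
  suffices h : ∀ n (P : Set V), (P \ (X ∪ M)).ncard ≤ n → Disjoint P S →
      Pi (G.induce P) → S.ncard + P.ncard ≤ l →
      ∃ P' : Set V, P' ⊆ (X ∪ M) \ S ∧ P'.ncard = P.ncard ∧ Pi (G.induce P') by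
    exact h _ P le_rfl hPS hPi hl
  intro n
  induction n with
  | zero =>
    intro P hbad hPS hPi _
    refine ⟨P, ?_, rfl, hPi⟩
    have hempty : P \ (X ∪ M) = ∅ :=
      Set.ncard_eq_zero (Set.toFinite _) |>.mp (Nat.le_zero.mp hbad)
    have hsub : P ⊆ X ∪ M := by
      intro a ha
      by_contra hnot
      exact absurd (hempty ▸ (⟨ha, hnot⟩ : a ∈ P \ (X ∪ M))) (Set.notMem_empty a)
    intro a ha
    exact ⟨hsub ha, hPS.subset_compl_right ha⟩
  | succ n ih =>
    intro P hbad hPS hPi hl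
    by_cases hb : P \ (X ∪ M) = ∅
    · refine ⟨P, ?_, rfl, hPi⟩
      intro a ha
      refine ⟨?_, hPS.subset_compl_right ha⟩
      by_contra hnot
      exact absurd (hb ▸ (⟨ha, hnot⟩ : a ∈ P \ (X ∪ M))) (Set.notMem_empty a)
    · obtain ⟨p, hpbad⟩ := Set.nonempty_iff_ne_empty.mpr hb
      have hpP : p ∈ P := hpbad.1
      have hpXM : p ∉ X ∪ M := hpbad.2
      have hpX : p ∉ X := fun h => hpXM (Or.inl h)
      have hpM : p ∉ M := fun h => hpXM (Or.inr h)
      haveI : Fintype ↥P := Fintype.ofFinite _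
      obtain ⟨D, hxD, hDc, hD⟩ := hchar ↥P (G.induce P) hPi ⟨p, hpP⟩
      set D' : Set V := Subtype.val '' D with hD'def
      have hD'P : D' ⊆ P := by rintro _ ⟨u, _, rfl⟩; exact u.2
      have hpD' : p ∉ D' := by
        rintro ⟨u, huD, hup⟩
        exact hxD (by rwa [show u = ⟨p, hpP⟩ from Subtype.ext hup] at huD)
      set Yp : Set V := D' ∩ X ∩ G.neighborSet p with hYp
      set Ym : Set V := (D' ∩ X) \ G.neighborSet p with hYm
      have hYpX : Yp ⊆ X := fun a ha => ha.1.2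
      have hYmX : Ym ⊆ X := fun a ha => ha.1.2
      have hdisj : Disjoint Yp Ym := by
        refine Set.disjoint_left.mpr ?_
        rintro a ⟨_, ha⟩ ⟨_, ha'⟩; exact ha' ha
      have hcard : Yp.ncard + Ym.ncard ≤ c := by
        have hunion : Yp ∪ Ym = D' ∩ X := by
          ext a
          constructor
          · rintro (⟨h, _⟩ | ⟨h, _⟩) <;> exact h
          · intro h
            by_cases hn : a ∈ G.neighborSet p
            · exact Or.inl ⟨h, hn⟩
            · exact Or.inr ⟨h, hn⟩
        have h1 : Yp.ncard + Ym.ncard = (Yp ∪ Ym).ncard :=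
          (Set.ncard_union_eq hdisj (Set.toFinite _) (Set.toFinite _)).symm
        rw [h1, hunion]
        calc (D' ∩ X).ncard ≤ D'.ncard :=
              Set.ncard_le_ncard Set.inter_subset_left (Set.toFinite _)
          _ = D.ncard := Set.ncard_image_of_injective _ Subtype.val_injective
          _ ≤ c := hDc
      set Z : Set V := {z : V | z ∉ X ∧ Yp ⊆ G.neighborSet z ∧ Ym ∩ G.neighborSet z = ∅}
        with hZdef
      have hpZ : p ∈ Z := by
        refine ⟨hpX, fun a ha => ha.2, ?_⟩
        ext a
        simp only [Set.mem_inter_iff, Set.mem_empty_iff_false, iff_false, not_and]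
        rintro ⟨_, ha⟩ hn
        exact ha hn
      have hZM : l ≤ (Z ∩ M).ncard := by
        rcases hM.2 Yp Ym hYpX hYmX hdisj hcard with hZs | hl'
        · exact absurd (hZs hpZ) hpM
        · exact hl'
      -- find a fresh replacement vertex z
      have hPpos : 1 ≤ P.ncard := (Set.ncard_pos (Set.toFinite _)).mpr ⟨p, hpP⟩
      have hex : ((Z ∩ M) \ (S ∪ (P \ {p}))).Nonempty := by
        rw [Set.nonempty_iff_ne_empty]
        intro hemp
        have hsub : Z ∩ M ⊆ S ∪ (P \ {p}) := by
          intro a ha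
          by_contra hnot
          exact absurd (hemp ▸ (⟨ha, hnot⟩ : a ∈ (Z ∩ M) \ (S ∪ (P \ {p}))))
            (Set.notMem_empty a)
        have h1 : (Z ∩ M).ncard ≤ (S ∪ (P \ {p})).ncard :=
          Set.ncard_le_ncard hsub (Set.toFinite _)
        have h2 : (S ∪ (P \ {p})).ncard ≤ S.ncard + (P.ncard - 1) := by
          calc (S ∪ (P \ {p})).ncard ≤ S.ncard + (P \ {p}).ncard := Set.ncard_union_le _ _
            _ = S.ncard + (P.ncard - 1) := by rw [Set.ncard_diff_singleton_of_mem hpP]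
        omega
      obtain ⟨z, hzZM, hzout⟩ := hex
      have hzZ : z ∈ Z := hzZM.1
      have hzM : z ∈ M := hzZM.2
      have hzX : z ∉ X := hzZ.1
      have hzS : z ∉ S := fun h => hzout (Or.inl h)
      have hzp : z ≠ p := fun h => hpM (h ▸ hzM)
      have hzP : z ∉ P := by
        intro h
        exact hzout (Or.inr ⟨h, hzp⟩)
      -- key adjacency agreement on D'
      have hkey : ∀ u ∈ D', (G.Adj z u ↔ G.Adj p u) := by
        intro u huD'
        by_cases huX : u ∈ X
        · by_cases hn : u ∈ G.neighborSet p
          · have huYp : u ∈ Yp := ⟨⟨huD', huX⟩, hn⟩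
            exact ⟨fun _ => hn, fun _ => hzZ.2.1 huYp⟩
          · have huYm : u ∈ Ym := ⟨⟨huD', huX⟩, hn⟩
            constructor
            · intro h
              exact absurd (Set.eq_empty_iff_forall_notMem.mp hzZ.2.2 u ⟨huYm, h⟩) id
            · intro h; exact absurd h hn
        · constructor
          · intro h
            rcases hX h with h' | h'
            · exact absurd h' hzX
            · exact absurd h' huX
          · intro h
            rcases hX h with h' | h'
            · exact absurd h' hpX
            · exact absurd h' huX
      -- new vertex set
      set P₁ : Set V := insert z (P \ {p}) with hP₁def
      have hpP₁ : p ∉ P₁ := by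
        rintro (h | h)
        · exact hzp h.symm
        · exact h.2 rfl
      -- the equivalence
      have hmem₁ : ∀ a : ↥P, a.1 ≠ p → a.1 ∈ P₁ := fun a ha =>
        Set.mem_insert_of_mem _ ⟨a.2, ha⟩
      have hmem₂ : ∀ b : ↥P₁, b.1 ≠ z → b.1 ∈ P := by
        rintro ⟨b, hb | hb⟩ hbz
        · exact absurd hb hbz
        · exact hb.1
      let e : ↥P ≃ ↥P₁ :=
        { toFun := fun a => if h : a.1 = p then ⟨z, Set.mem_insert _ _⟩ else ⟨a.1, hmem₁ a h⟩
          invFun := fun b => if h : b.1 = z then ⟨p, hpP⟩ else ⟨b.1, hmem₂ b h⟩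
          left_inv := by
            rintro ⟨a, ha⟩
            by_cases h : a = p
            · subst h
              simp [hzp.symm ∘ Eq.symm]
            · have haz : a ≠ z := fun h' => hzP (h' ▸ ha)
              simp [h, haz]
          right_inv := by
            rintro ⟨b, hb⟩
            by_cases h : b = z
            · subst h
              simp
            · have hbp : b ≠ p := by
                rcases hb with hb' | hb'
                · exact absurd hb' h
                · exact fun he => hb'.2 he
              simp [h, hbp] }
      have he_val : ∀ a : ↥P, a.1 ≠ p → (e a).1 = a.1 := by
        intro a ha
        simp [e, ha]
      have he_p : (e ⟨p, hpP⟩).1 = z := by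
        simp [e]
      -- the pulled-back graph
      set G' : SimpleGraph ↥P := SimpleGraph.comap (e : ↥P → ↥P₁) (G.induce P₁) with hG'def
      have hPiG' : Pi G' := by
        refine hD G' ?_ ?_
        · intro a b ha hb
          have ha' : a.1 ≠ p := fun h => ha (Subtype.ext h)
          have hb' : b.1 ≠ p := fun h => hb (Subtype.ext h)
          show (G.induce P₁).Adj (e a) (e b) ↔ (G.induce P).Adj a b
          rw [show ((G.induce P₁).Adj (e a) (e b)) ↔ G.Adj (e a).1 (e b).1 from comap_adj,
            he_val a ha', he_val b hb']
          exact (comap_adj (G := G) (f := (Subtype.val : ↥P → V))).symm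
        · intro u huD
          have hu' : u.1 ≠ p := by
            intro h
            exact hxD (by rwa [show u = ⟨p, hpP⟩ from Subtype.ext h] at huD)
          show (G.induce P₁).Adj (e ⟨p, hpP⟩) (e u) ↔ (G.induce P).Adj ⟨p, hpP⟩ u
          rw [show ((G.induce P₁).Adj (e ⟨p, hpP⟩) (e u)) ↔ G.Adj (e ⟨p, hpP⟩).1 (e u).1
              from comap_adj, he_p, he_val u hu']
          rw [show ((G.induce P).Adj ⟨p, hpP⟩ u) ↔ G.Adj p u.1 from comap_adj]
          exact hkey u.1 ⟨u, huD, rfl⟩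
      have hPi₁ : Pi (G.induce P₁) :=
        hiso G' (G.induce P₁) ⟨Iso.comap e (G.induce P₁)⟩ hPiG'
      -- apply the induction hypothesis
      have hbad₁ : (P₁ \ (X ∪ M)).ncard ≤ n := by
        have heq : P₁ \ (X ∪ M) = (P \ (X ∪ M)) \ {p} := by
          ext a
          constructor
          · rintro ⟨ha | ha, hXM⟩
            · exact absurd (Or.inr (ha ▸ hzM)) hXM
            · exact ⟨⟨ha.1, hXM⟩, ha.2⟩
          · rintro ⟨⟨haP, hXM⟩, hap⟩
            exact ⟨Or.inr ⟨haP, hap⟩, hXM⟩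
        rw [heq, Set.ncard_diff_singleton_of_mem hpbad]
        omega
      have hcard₁ : P₁.ncard = P.ncard := by
        rw [Set.ncard_insert_of_notMem (fun h => hzP h.1),
          Set.ncard_diff_singleton_of_mem hpP]
        omega
      have hPS₁ : Disjoint P₁ S := by
        rw [Set.disjoint_left]
        rintro a (ha | ha)
        · exact ha ▸ hzS
        · exact fun h => hPS.subset_compl_right ha.1 h
      obtain ⟨P', hP'1, hP'2, hP'3⟩ := ih P₁ hbad₁ hPS₁ hPi₁ (by rw [hcard₁]; exact hl)
      exact ⟨P', hP'1, by rw [hP'2, hcard₁], hP'3⟩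
end

section
/- Let Π be a graph property characterized by c adjacencies, and let p : ℕ → ℕ be a nondecreasing function such that every graph G* that is vertex-minimal with respect to Π satisfies |V(G*)| ≤ p(vc(G*)). Let q ≥ 1 be an integer, let G be a graph with vertex cover X, and let M ⊆ V(G) \ X be a (q·p(|X|), q·c)-marking of (G, X). If the vertex set of the induced subgraph G[X ∪ M] can be partitioned into q parts each of which induces a subgraph containing no member of Π as an induced subgraph, then V(G) can be partitioned into q parts each of which induces a subgraph of G containing no member of Π as an induced subgraph. -/
open SimpleGraph

universe u

/-- `G` is vertex-minimal with respect to `Pi`: it satisfies `Pi`, but no proper induced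
subgraph of it does. -/
def VertexMinimal (Pi : ∀ {α : Type u}, SimpleGraph α → Prop) {α : Type u}
    (G : SimpleGraph α) : Prop :=
  Pi G ∧ ∀ S : Set α, S ≠ Set.univ → ¬ Pi (G.induce S)

lemma ncard_finUnion_le {ι V : Type*} [Fintype V] [Fintype ι] (s : ι → Set V) :
    (⋃ i, s i).ncard ≤ ∑ i, (s i).ncard := by
  classical
  have key : ∀ t : Finset ι, (⋃ i ∈ t, s i).ncard ≤ ∑ i ∈ t, (s i).ncard := by
    intro t
    induction t using Finset.induction_on with
    | empty => simp
    | insert a t' h ih =>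
        rw [Finset.set_biUnion_insert, Finset.sum_insert h]
        exact le_trans (Set.ncard_union_le _ _) (by omega)
  simpa using key Finset.univ

lemma exists_minimal_subset {V : Type*} [Fintype V] (Q : Set V → Prop) (T : Set V) (hT : Q T) :
      ∃ T', T' ⊆ T ∧ Q T' ∧ ∀ T'', T'' ⊆ T' → T'' ≠ T' → ¬ Q T'' := by
  obtain ⟨n, hn⟩ : ∃ n, T.ncard = n := ⟨_, rfl⟩
  induction n using Nat.strong_induction_on generalizing T with
  | _ n ih =>
    by_cases h : ∃ T'' , T'' ⊆ T ∧ T'' ≠ T ∧ Q T''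
    · obtain ⟨T'', hsub, hne, hQ⟩ := h
      have hlt : T''.ncard < n := by
        subst hn
        exact Set.ncard_lt_ncard (ssubset_of_subset_of_ne hsub hne) T.toFinite
      obtain ⟨T', h1, h2, h3⟩ := ih _ hlt T'' hQ rfl
      exact ⟨T', h1.trans hsub, h2, h3⟩
    · push_neg at h
      exact ⟨T, subset_rfl, hT, fun T'' hsub hne => h T'' hsub hne⟩

noncomputable def induceInduceIso {V : Type*} (G : SimpleGraph V) (T : Set V) (S : Set ↥T) :
    ((G.induce T).induce S) ≃g (G.induce (Subtype.val '' S)) where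
  toEquiv := Equiv.Set.image Subtype.val S Subtype.val_injective
  map_rel_iff' := by
    intro a b
    simp [Equiv.Set.image, Equiv.Set.imageOfInjOn]

lemma vcNum_induce_le {V : Type*} [Fintype V] (G : SimpleGraph V) (X : Set V)
    (hX : _root_.IsVertexCover G X) (H : Set V) :
    vcNum (G.induce H) ≤ X.ncard := by
  classical
  have hcov : _root_.IsVertexCover (G.induce H) {v : ↥H | (v : V) ∈ X} := by
    intro a b hab
    simp only [comap_adj, Function.Embedding.coe_subtype] at hab
    rcases hX hab with h | h
    · exact Or.inl h
    · exact Or.inr h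
  have h1 : vcNum (G.induce H) ≤ ({v : ↥H | (v : V) ∈ X}).ncard :=
    Nat.sInf_le ⟨_, hcov, rfl⟩
  refine h1.trans ?_
  have heq : (Subtype.val '' {v : ↥H | (v : V) ∈ X}).ncard = ({v : ↥H | (v : V) ∈ X}).ncard :=
    Set.ncard_image_of_injective _ Subtype.val_injective
  rw [← heq]
  exact Set.ncard_le_ncard (by rintro x ⟨v, hv, rfl⟩; exact hv) X.toFinite

lemma vertexMinimal_of_minimal {V : Type u}
    (Pi : ∀ {α : Type u}, SimpleGraph α → Prop)
    (hiso : IsoClosed fun {α} (G : SimpleGraph α) => Pi G)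
    (G : SimpleGraph V) (T : Set V) (hT : Pi (G.induce T))
    (hminT : ∀ T'', T'' ⊆ T → T'' ≠ T → ¬ Pi (G.induce T'')) :
    VertexMinimal (fun {β} (G₁ : SimpleGraph β) => Pi G₁) (G.induce T) := by
  refine ⟨hT, ?_⟩
  intro S hS hPi
  have h1 : Pi (G.induce (Subtype.val '' S)) :=
    hiso _ _ ⟨induceInduceIso G T S⟩ hPi
  have hsub : Subtype.val '' S ⊆ T := by rintro x ⟨v, _, rfl⟩; exact v.2
  have hne : Subtype.val '' S ≠ T := by
    intro h
    apply hS
    apply Set.eq_univ_iff_forall.mpr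
    intro a
    have ha : (a : V) ∈ Subtype.val '' S := by rw [h]; exact a.2
    obtain ⟨b, hb, hba⟩ := ha
    rwa [Subtype.val_injective hba] at hb
  exact hminT _ hsub hne h1

lemma ncard_le_of_minimal {V : Type u} [Fintype V]
    (Pi : ∀ {α : Type u}, SimpleGraph α → Prop)
    (hiso : IsoClosed fun {α} (G : SimpleGraph α) => Pi G)
    (p : ℕ → ℕ) (hp : Monotone p)
    (hmin : ∀ (α : Type u) [Fintype α] (G₀ : SimpleGraph α),
      VertexMinimal (fun {β} (G₁ : SimpleGraph β) => Pi G₁) G₀ →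
      Fintype.card α ≤ p (vcNum G₀))
    (G : SimpleGraph V) (X : Set V) (hX : _root_.IsVertexCover G X)
    (T : Set V) (hT : Pi (G.induce T))
    (hminT : ∀ T'', T'' ⊆ T → T'' ≠ T → ¬ Pi (G.induce T'')) :
    T.ncard ≤ p X.ncard := by
  classical
  letI : Fintype ↥T := T.toFinite.fintype
  have h1 := hmin ↥T (G.induce T) (vertexMinimal_of_minimal Pi hiso G T hT hminT)
  have h2 : Fintype.card ↥T = T.ncard := by
    rw [← Nat.card_eq_fintype_card, Nat.card_coe_set_eq]
  rw [h2] at h1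
  exact h1.trans (hp (vcNum_induce_le G X hX T))

lemma step {V : Type u} [Fintype V]
    (Pi : ∀ {α : Type u}, SimpleGraph α → Prop)
    (hiso : IsoClosed fun {α} (G : SimpleGraph α) => Pi G)
    (c : ℕ) (hchar : CharByAdjAll (fun {α} (G : SimpleGraph α) => Pi G) c)
    (p : ℕ → ℕ) (hp : Monotone p)
    (hmin : ∀ (α : Type u) [Fintype α] (G₀ : SimpleGraph α),
      VertexMinimal (fun {β} (G₁ : SimpleGraph β) => Pi G₁) G₀ →
      Fintype.card α ≤ p (vcNum G₀))
    (q : ℕ) (hq : 1 ≤ q)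
    (G : SimpleGraph V) (X : Set V) (hX : _root_.IsVertexCover G X)
    (M : Set V) (hM : IsMarking G X M (q * p X.ncard) (q * c))
    (parts : Fin q → Set V) (S : Set V) (hXM : X ∪ M ⊆ S)
    (hcov : (⋃ i, parts i) = S)
    (hfree : ∀ i, ∀ T : Set V, T ⊆ parts i → ¬ Pi (G.induce T))
    (z : V) (hzS : z ∉ S) :
    ∃ i, ∀ T : Set V, T ⊆ insert z (parts i) → ¬ Pi (G.induce T) := by
  classical
  by_contra hcon
  push_neg at hcon
  choose T hTsub hTPi using hcon
  have hmins := fun i => exists_minimal_subset (fun A => Pi (G.induce A)) (T i) (hTPi i)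
  choose H hHsub hHPi hHmin using hmins
  have hzX : z ∉ X := fun h => hzS (hXM (Or.inl h))
  have hzM : z ∉ M := fun h => hzS (hXM (Or.inr h))
  have hHsub' : ∀ i, H i ⊆ insert z (parts i) := fun i => (hHsub i).trans (hTsub i)
  have hzH : ∀ i, z ∈ H i := by
    intro i
    by_contra hz
    refine hfree i (H i) ?_ (hHPi i)
    intro a ha
    rcases Set.mem_insert_iff.mp (hHsub' i ha) with rfl | h
    · exact absurd ha hz
    · exact h
  have hHcard : ∀ i, (H i).ncard ≤ p X.ncard := fun i =>
    ncard_le_of_minimal Pi hiso p hp hmin G X hX (H i) (hHPi i) (hHmin i)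
  have hHpos : ∀ i, 0 < (H i).ncard := fun i =>
    (Set.ncard_pos (Set.toFinite _)).mpr ⟨z, hzH i⟩
  letI : ∀ i, Fintype ↥(H i) := fun i => (H i).toFinite.fintype
  choose D hDx hDc hDprop using
    fun i => hchar ↥(H i) (G.induce (H i)) (hHPi i) ⟨z, hzH i⟩
  set Yp : Fin q → Set V := fun i => {v | v ∈ Subtype.val '' D i ∧ G.Adj z v} with hYpdef
  set Ym : Fin q → Set V := fun i => {v | (v ∈ Subtype.val '' D i ∧ v ∈ X) ∧ ¬ G.Adj z v}
    with hYmdef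
  have hYpX : ∀ i, Yp i ⊆ X := by
    intro i v hv
    rcases hX hv.2 with h | h
    · exact absurd h hzX
    · exact h
  have hYmX : ∀ i, Ym i ⊆ X := fun i v hv => hv.1.2
  set YP : Set V := ⋃ i, Yp i with hYPdef
  set YM : Set V := ⋃ i, Ym i with hYMdef
  have hYPX : YP ⊆ X := Set.iUnion_subset hYpX
  have hYMX : YM ⊆ X := Set.iUnion_subset hYmX
  have hdisjPM : Disjoint YP YM := by
    rw [Set.disjoint_left]
    intro a haP haM
    obtain ⟨i, hi⟩ := Set.mem_iUnion.mp haP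
    obtain ⟨j, hj⟩ := Set.mem_iUnion.mp haM
    exact hj.2 hi.2
  have hsum : YP.ncard + YM.ncard ≤ q * c := by
    have h1 : YP.ncard ≤ ∑ i, (Yp i).ncard := ncard_finUnion_le Yp
    have h2 : YM.ncard ≤ ∑ i, (Ym i).ncard := ncard_finUnion_le Ym
    have h3 : ∀ i, (Yp i).ncard + (Ym i).ncard ≤ c := by
      intro i
      have hdisj : Disjoint (Yp i) (Ym i) := by
        rw [Set.disjoint_left]; intro a ha hb; exact hb.2 ha.2
      have hun : Yp i ∪ Ym i ⊆ Subtype.val '' D i := by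
        rintro a (ha | ha)
        · exact ha.1
        · exact ha.1.1
      calc (Yp i).ncard + (Ym i).ncard = (Yp i ∪ Ym i).ncard :=
            (Set.ncard_union_eq hdisj (Set.toFinite _) (Set.toFinite _)).symm
        _ ≤ (Subtype.val '' D i).ncard := Set.ncard_le_ncard hun (Set.toFinite _)
        _ = (D i).ncard := Set.ncard_image_of_injective _ Subtype.val_injective
        _ ≤ c := hDc i
    calc YP.ncard + YM.ncard ≤ (∑ i, (Yp i).ncard) + ∑ i, (Ym i).ncard := by omega
      _ = ∑ i, ((Yp i).ncard + (Ym i).ncard) := (Finset.sum_add_distrib).symm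
      _ ≤ ∑ _i : Fin q, c := Finset.sum_le_sum (fun i _ => h3 i)
      _ = q * c := by simp [Finset.sum_const, mul_comm]
  obtain hZM | hZcard := hM.2 YP YM hYPX hYMX hdisjPM hsum
  case _ =>
    refine hzM (hZM ?_)
    refine ⟨hzX, ?_, ?_⟩
    · intro a ha
      obtain ⟨i, hi⟩ := Set.mem_iUnion.mp ha
      exact hi.2
    · ext a
      simp only [Set.mem_inter_iff, Set.mem_empty_iff_false, iff_false, not_and]
      intro haM haN
      obtain ⟨i, hi⟩ := Set.mem_iUnion.mp haM
      exact hi.2 haN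
  case _ =>
    set Z : Set V := {w : V | w ∉ X ∧ YP ⊆ G.neighborSet w ∧ YM ∩ G.neighborSet w = ∅}
      with hZdef
    have hppos : 0 < p X.ncard := by
      have h0 := hHpos ⟨0, hq⟩
      have h1 := hHcard ⟨0, hq⟩
      omega
    have hBad : (⋃ i, (H i ∩ M)).ncard < q * p X.ncard := by
      have h1 : (⋃ i, (H i ∩ M)).ncard ≤ ∑ i, (H i ∩ M).ncard :=
        ncard_finUnion_le _
      have h2 : ∀ i, (H i ∩ M).ncard ≤ p X.ncard - 1 := by
        intro i
        have hsub : H i ∩ M ⊆ H i \ {z} := by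
          rintro a ⟨ha, haM⟩
          exact ⟨ha, by simp; rintro rfl; exact hzM haM⟩
        have hle : (H i ∩ M).ncard ≤ (H i \ {z}).ncard :=
          Set.ncard_le_ncard hsub (Set.toFinite _)
        rw [Set.ncard_diff_singleton_of_mem (hzH i)] at hle
        have := hHcard i
        have := hHpos i
        omega
      have h3 : ∑ i, (H i ∩ M).ncard ≤ q * (p X.ncard - 1) := by
        calc ∑ i, (H i ∩ M).ncard ≤ ∑ _i : Fin q, (p X.ncard - 1) :=
              Finset.sum_le_sum (fun i _ => h2 i)
          _ = q * (p X.ncard - 1) := by simp [Finset.sum_const, mul_comm]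
      have h4 : q * (p X.ncard - 1) + q = q * p X.ncard := by
        rw [← Nat.mul_succ]
        congr 1
        omega
      omega
    obtain ⟨z', hz'ZM, hz'Bad⟩ :=
      Set.exists_mem_notMem_of_ncard_lt_ncard (lt_of_lt_of_le hBad hZcard)
    obtain ⟨hz'Z, hz'M⟩ := hz'ZM
    obtain ⟨j, hz'pj⟩ := Set.mem_iUnion.mp (hcov ▸ hXM (Or.inr hz'M) : z' ∈ ⋃ i, parts i)
    have hz'Hj : z' ∉ H j := fun h => hz'Bad (Set.mem_iUnion.mpr ⟨j, h, hz'M⟩)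
    have hz'X : z' ∉ X := hz'Z.1
    have hzz' : z ≠ z' := fun h => hzM (h ▸ hz'M)
    have hkey : ∀ v ∈ Subtype.val '' D j, (G.Adj z' v ↔ G.Adj z v) := by
      intro v hv
      by_cases hvX : v ∈ X
      · by_cases hadj : G.Adj z v
        · refine iff_of_true ?_ hadj
          exact hz'Z.2.1 (Set.mem_iUnion.mpr ⟨j, hv, hadj⟩)
        · refine iff_of_false ?_ hadj
          intro hadj'
          have hmem : v ∈ YM ∩ G.neighborSet z' :=
            ⟨Set.mem_iUnion.mpr ⟨j, ⟨hv, hvX⟩, hadj⟩, hadj'⟩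
          rw [hz'Z.2.2] at hmem
          exact hmem
      · constructor
        · intro h; rcases hX h with h' | h' <;> [exact absurd h' hz'X; exact absurd h' hvX]
        · intro h; rcases hX h with h' | h' <;> [exact absurd h' hzX; exact absurd h' hvX]
    set H' : Set V := insert z' (H j \ {z}) with hH'def
    have hH'sub : H' ⊆ parts j := by
      rintro a (rfl | ⟨haH, haz⟩)
      · exact hz'pj
      · rcases Set.mem_insert_iff.mp (hHsub' j haH) with rfl | h
        · exact absurd rfl haz
        · exact h
    have hz'H' : z' ∈ H' := Set.mem_insert _ _
    set f : ↥(H j) → ↥H' := fun a => if h : (a : V) = z then ⟨z', hz'H'⟩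
        else ⟨a, Or.inr ⟨a.2, h⟩⟩ with hfdef
    have hfz : ∀ a : ↥(H j), (a : V) = z → ((f a : ↥H') : V) = z' := by
      intro a h
      simp only [hfdef, dif_pos h]
    have hfnz : ∀ a : ↥(H j), (a : V) ≠ z → ((f a : ↥H') : V) = (a : V) := by
      intro a h
      simp only [hfdef, dif_neg h]
    have hbij : Function.Bijective f := by
      constructor
      · intro a b hab
        by_cases ha : (a : V) = z <;> by_cases hb : (b : V) = z
        · exact Subtype.ext (ha.trans hb.symm)
        · exfalso
          have h1 := hfz a ha
          have h2 := hfnz b hb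
          rw [hab, h2] at h1
          exact hz'Hj (h1 ▸ b.2)
        · exfalso
          have h1 := hfz b hb
          have h2 := hfnz a ha
          rw [← hab, h2] at h1
          exact hz'Hj (h1 ▸ a.2)
        · have h1 := hfnz a ha
          have h2 := hfnz b hb
          rw [hab, h2] at h1
          exact Subtype.ext h1.symm
      · intro b
        by_cases hb : (b : V) = z'
        · exact ⟨⟨z, hzH j⟩, Subtype.ext ((hfz ⟨z, hzH j⟩ rfl).trans hb.symm)⟩
        · have hbH : (b : V) ∈ H j ∧ (b : V) ≠ z := by
            rcases b.2 with h' | h'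
            · exact absurd h' hb
            · exact ⟨h'.1, fun hh => h'.2 hh⟩
          exact ⟨⟨b, hbH.1⟩, Subtype.ext (hfnz ⟨b, hbH.1⟩ hbH.2)⟩
    set e : ↥(H j) ≃ ↥H' := Equiv.ofBijective f hbij with hedef
    set G' : SimpleGraph ↥(H j) := (G.induce H').comap e with hG'def
    have hG'adj : ∀ a b : ↥(H j), G'.Adj a b ↔ G.Adj (f a : ↥H') (f b : ↥H') := by
      intro a b
      simp only [hG'def, comap_adj, hedef, Equiv.ofBijective_apply,
        Function.Embedding.coe_subtype]
    have hPiG' : Pi G' := by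
      apply hDprop j G'
      · intro a b ha hb
        have ea := hfnz a (fun h => ha (Subtype.ext h))
        have eb := hfnz b (fun h => hb (Subtype.ext h))
        rw [hG'adj a b, ea, eb]
        simp only [comap_adj, Function.Embedding.coe_subtype]
      · intro u hu
        have hux : u ≠ (⟨z, hzH j⟩ : ↥(H j)) := fun h => hDx j (h ▸ hu)
        have exz := hfz ⟨z, hzH j⟩ rfl
        have eu := hfnz u (fun h => hux (Subtype.ext h))
        rw [hG'adj _ u, exz, eu]
        have hkeyu := hkey (u : V) ⟨u, hu, rfl⟩
        simp only [comap_adj, Function.Embedding.coe_subtype]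
        exact hkeyu
    have hPiH' : Pi (G.induce H') := by
      refine hiso G' (G.induce H') ⟨⟨e, ?_⟩⟩ hPiG'
      intro a b
      rw [hG'adj a b]
      simp only [hedef, Equiv.ofBijective_apply, comap_adj, Function.Embedding.coe_subtype]
    exact hfree j H' hH'sub hPiH'


/-- Let `Pi` be a graph property characterized by `c` adjacencies, `p` a nondecreasing
function such that every graph vertex-minimal with respect to `Pi` has at most
`p(vc)` vertices, `q ≥ 1`, `G` a graph with vertex cover `X`, and `M` a
`(q·p(|X|), q·c)`-marking of `(G, X)`. If the vertices of `G[X ∪ M]` can be partitioned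
into `q` parts each inducing a subgraph with no induced subgraph in `Pi`, then `V(G)` can
be partitioned into `q` parts each inducing a subgraph with no induced subgraph in `Pi`. -/
theorem stmt11 {V : Type u} [Fintype V]
    (Pi : ∀ {α : Type u}, SimpleGraph α → Prop)
    (hiso : IsoClosed fun {α} (G : SimpleGraph α) => Pi G)
    (c : ℕ) (hchar : CharByAdjAll (fun {α} (G : SimpleGraph α) => Pi G) c)
    (p : ℕ → ℕ) (hp : Monotone p)
    (hmin : ∀ (α : Type u) [Fintype α] (G₀ : SimpleGraph α),
      VertexMinimal (fun {β} (G₁ : SimpleGraph β) => Pi G₁) G₀ →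
      Fintype.card α ≤ p (vcNum G₀))
    (q : ℕ) (hq : 1 ≤ q)
    (G : SimpleGraph V) (X : Set V) (hX : _root_.IsVertexCover G X)
    (M : Set V) (hM : IsMarking G X M (q * p X.ncard) (q * c))
    (hpart : ∃ parts : Fin q → Set V,
      (∀ i j, i ≠ j → Disjoint (parts i) (parts j)) ∧
      (⋃ i, parts i) = X ∪ M ∧
      ∀ i, ∀ T : Set V, T ⊆ parts i → ¬ Pi (G.induce T)) :
    ∃ parts : Fin q → Set V,
      (∀ i j, i ≠ j → Disjoint (parts i) (parts j)) ∧
      (⋃ i, parts i) = Set.univ ∧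
      ∀ i, ∀ T : Set V, T ⊆ parts i → ¬ Pi (G.induce T) := by
  classical
  obtain ⟨parts0, hdisj0, hcov0, hfree0⟩ := hpart
  suffices h : ∀ (n : ℕ) (S : Set V) (parts : Fin q → Set V), Sᶜ.ncard = n → X ∪ M ⊆ S →
      (∀ i j, i ≠ j → Disjoint (parts i) (parts j)) → (⋃ i, parts i) = S →
      (∀ i, ∀ T : Set V, T ⊆ parts i → ¬ Pi (G.induce T)) →
      ∃ parts' : Fin q → Set V, (∀ i j, i ≠ j → Disjoint (parts' i) (parts' j)) ∧
        (⋃ i, parts' i) = Set.univ ∧ ∀ i, ∀ T : Set V, T ⊆ parts' i → ¬ Pi (G.induce T) by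
    exact h _ (X ∪ M) parts0 rfl subset_rfl hdisj0 hcov0 hfree0
  intro n
  induction n using Nat.strong_induction_on with
  | _ n ih =>
    intro S parts hn hXM hdisj hcov hfree
    by_cases hS : S = Set.univ
    · exact ⟨parts, hdisj, hS ▸ hcov, hfree⟩
    · obtain ⟨z, hz⟩ := (Set.ne_univ_iff_exists_notMem S).mp hS
      obtain ⟨i0, hstep⟩ :=
        step Pi hiso c hchar p hp hmin q hq G X hX M hM parts S hXM hcov hfree z hz
      set parts' : Fin q → Set V := Function.update parts i0 (insert z (parts i0))
        with hp'def
      have hmemS : ∀ i, parts i ⊆ S := fun i => hcov ▸ Set.subset_iUnion parts i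
      have hsub' : ∀ i, parts i ⊆ parts' i := by
        intro i
        by_cases h : i = i0
        · subst h
          rw [hp'def, Function.update_self]
          exact Set.subset_insert _ _
        · rw [hp'def, Function.update_of_ne h]
      have hp'i0 : parts' i0 = insert z (parts i0) := by
        rw [hp'def, Function.update_self]
      have hp'ne : ∀ i, i ≠ i0 → parts' i = parts i := by
        intro i h
        rw [hp'def, Function.update_of_ne h]
      have hcard : ((insert z S)ᶜ).ncard < n := by
        have h1 : (insert z S)ᶜ = Sᶜ \ {z} := by
          ext a
          simp only [Set.mem_compl_iff, Set.mem_insert_iff, Set.mem_diff,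
            Set.mem_singleton_iff]
          tauto
        rw [h1, ← hn]
        exact Set.ncard_diff_singleton_lt_of_mem hz (Set.toFinite _)
      refine ih _ hcard (insert z S) parts' rfl
        (hXM.trans (Set.subset_insert _ _)) ?_ ?_ ?_
      · intro i j hij
        have hzp : ∀ k, z ∉ parts k := fun k hk => hz (hmemS k hk)
        by_cases hi : i = i0
        · subst hi
          rw [hp'i0, hp'ne j (fun h => hij h.symm)]
          rw [Set.disjoint_left]
          rintro a (rfl | ha)
          · exact hzp j
          · exact fun hb => (Set.disjoint_left.mp (hdisj _ _ hij)) ha hb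
        · rw [hp'ne i hi]
          by_cases hj : j = i0
          · subst hj
            rw [hp'i0, Set.disjoint_right]
            rintro a (rfl | ha)
            · exact hzp i
            · exact fun hb => (Set.disjoint_left.mp (hdisj _ _ hij)) hb ha
          · rw [hp'ne j hj]
            exact hdisj _ _ hij
      · ext a
        simp only [Set.mem_iUnion, Set.mem_insert_iff]
        constructor
        · rintro ⟨i, hi⟩
          by_cases h : i = i0
          · subst h
            rw [hp'i0] at hi
            rcases hi with rfl | hi
            · exact Or.inl rfl
            · exact Or.inr (hmemS _ hi)
          · rw [hp'ne i h] at hi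
            exact Or.inr (hmemS _ hi)
        · rintro (rfl | ha)
          · exact ⟨i0, hp'i0 ▸ Set.mem_insert _ _⟩
          · obtain ⟨i, hi⟩ := Set.mem_iUnion.mp (hcov ▸ ha : a ∈ ⋃ i, parts i)
            exact ⟨i, hsub' i hi⟩
      · intro i T hT
        by_cases h : i = i0
        · subst h
          exact hstep T (hp'i0 ▸ hT)
        · exact hfree i T ((hp'ne i h) ▸ hT)
end

section
/- Let G be a graph with vertex cover X, let t ≤ |X| + 1, and let v, w ∈ X be distinct nonadjacent vertices such that more than (|X| + 1)² vertices of V(G) \ X are adjacent to both v and w. Let G' be the graph obtained from G by adding the edge vw. Then G contains the complete graph K_t as a minor if and only if G' contains K_t as a minor. -/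
open SimpleGraph

universe u v

namespace Stmt12Aux

variable {V : Type u}

/-- Step relation within a set. -/
def Step (G : SimpleGraph V) (s : Set V) (x y : V) : Prop := G.Adj x y ∧ x ∈ s ∧ y ∈ s

/-- Connectivity of the induced subgraph on `s`, phrased via `ReflTransGen`. -/
def Conn (G : SimpleGraph V) (s : Set V) : Prop :=
  s.Nonempty ∧ ∀ a ∈ s, ∀ b ∈ s, Relation.ReflTransGen (Step G s) a b

lemma step_symm (G : SimpleGraph V) (s : Set V) : Symmetric (Step G s) :=
  fun _ _ ⟨h, hx, hy⟩ => ⟨h.symm, hy, hx⟩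

lemma rtg_symm {G : SimpleGraph V} {s : Set V} {a b : V}
    (h : Relation.ReflTransGen (Step G s) a b) :
    Relation.ReflTransGen (Step G s) b a :=
  by haveI : Std.Symm (Step G s) := ⟨fun _ _ hh => step_symm G s hh⟩; exact Std.Symm.symm _ _ h

lemma rtg_lift {r p : V → V → Prop} (h : ∀ x y, r x y → Relation.ReflTransGen p x y)
    {a b : V} (hab : Relation.ReflTransGen r a b) : Relation.ReflTransGen p a b := by
  induction hab with
  | refl => exact .refl
  | tail _ hstep ih => exact ih.trans (h _ _ hstep)

lemma walk_rtg {G : SimpleGraph V} {s : Set V} :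
    ∀ {x y : ↥s}, (G.induce s).Walk x y → Relation.ReflTransGen (Step G s) x.1 y.1 := by
  intro x y p
  induction p with
  | nil => exact .refl
  | @cons a b c hadj p ih =>
      exact Relation.ReflTransGen.head ⟨by exact hadj, a.2, b.2⟩ ih

lemma conn_iff (G : SimpleGraph V) (s : Set V) : Conn G s ↔ (G.induce s).Connected := by
  constructor
  · rintro ⟨hne, h⟩
    rw [connected_iff]
    refine ⟨?_, hne.to_subtype⟩
    rintro ⟨a, ha⟩ ⟨b, hb⟩
    have key : ∀ x y : V, Relation.ReflTransGen (Step G s) x y →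
        ∀ (hx : x ∈ s) (hy : y ∈ s), (G.induce s).Reachable ⟨x, hx⟩ ⟨y, hy⟩ := by
      intro x y hxy
      induction hxy with
      | refl => intro hx hy; rfl
      | @tail b c _ hstep ih =>
          intro hx hy
          exact (ih hx hstep.2.1).trans (SimpleGraph.Adj.reachable (by exact hstep.1))
    exact key a b (h a ha b hb) ha hb
  · intro h
    have hne : s.Nonempty := by
      rcases h.nonempty with ⟨⟨x, hx⟩⟩
      exact ⟨x, hx⟩
    refine ⟨hne, fun a ha b hb => ?_⟩
    obtain ⟨p⟩ := h.preconnected ⟨a, ha⟩ ⟨b, hb⟩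
    exact walk_rtg p

lemma rtg_mono_set {G : SimpleGraph V} {s t : Set V} (hst : s ⊆ t) {a b : V}
    (h : Relation.ReflTransGen (Step G s) a b) : Relation.ReflTransGen (Step G t) a b :=
  Relation.ReflTransGen.mono (r := Step G s) (p := Step G t)
    (fun _ _ ⟨h1, h2, h3⟩ => ⟨h1, hst h2, hst h3⟩) a b h

lemma conn_singleton (G : SimpleGraph V) (x : V) : Conn G {x} := by
  refine ⟨⟨x, rfl⟩, ?_⟩
  rintro a rfl b rfl
  exact .refl

lemma conn_union {G : SimpleGraph V} {s t : Set V} (hs : Conn G s) (ht : Conn G t)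
    (hx : (s ∩ t).Nonempty) : Conn G (s ∪ t) := by
  obtain ⟨x, hxs, hxt⟩ := hx
  refine ⟨hs.1.mono Set.subset_union_left, ?_⟩
  have reach : ∀ a ∈ s ∪ t, Relation.ReflTransGen (Step G (s ∪ t)) a x := by
    rintro a (ha | ha)
    · exact rtg_mono_set Set.subset_union_left (hs.2 a ha x hxs)
    · exact rtg_mono_set Set.subset_union_right (ht.2 a ha x hxt)
  intro a ha b hb
  exact (reach a ha).trans (rtg_symm (reach b hb))

lemma conn_insert_adj {G : SimpleGraph V} {s : Set V} {a z : V} (hs : Conn G s)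
    (ha : a ∈ s) (hadj : G.Adj z a) : Conn G (insert z s) := by
  refine ⟨⟨z, Set.mem_insert _ _⟩, ?_⟩
  have reach : ∀ x ∈ insert z s, Relation.ReflTransGen (Step G (insert z s)) x a := by
    rintro x (rfl | hx)
    · exact Relation.ReflTransGen.single ⟨hadj, Set.mem_insert _ _, Set.mem_insert_of_mem _ ha⟩
    · exact rtg_mono_set (Set.subset_insert _ _) (hs.2 x hx a ha)
  intro x hx y hy
  exact (reach x hx).trans (rtg_symm (reach y hy))

lemma conn_subsingleton_of_no_edges {G : SimpleGraph V} {s : Set V} (hs : Conn G s)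
    (h : ∀ a ∈ s, ∀ b ∈ s, ¬ G.Adj a b) : s.Subsingleton := by
  intro a ha b hb
  have := hs.2 a ha b hb
  induction this with
  | refl => rfl
  | tail _ hstep ih => exact absurd hstep.1 (h _ hstep.2.1 _ hstep.2.2)


lemma confine {G : SimpleGraph V} {B S : Set V} {u : V}
    (hclosed : ∀ x ∈ S, ∀ y, G.Adj x y → y ∈ B → y ≠ u → y ∈ S) :
    ∀ x, Relation.ReflTransGen (Step G B) x u → x ∈ S →
      Relation.ReflTransGen (Step G (insert u S)) x u := by
  intro x hx
  induction hx using Relation.ReflTransGen.head_induction_on with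
  | refl => intro _; exact .refl
  | @head a c hstep htail ih =>
      intro haS
      by_cases hcu : c = u
      · subst hcu
        exact Relation.ReflTransGen.single
          ⟨hstep.1, Set.mem_insert_of_mem _ haS, Set.mem_insert _ _⟩
      · have hcS : c ∈ S := hclosed a haS c hstep.1 hstep.2.2 hcu
        exact Relation.ReflTransGen.head
          ⟨hstep.1, Set.mem_insert_of_mem _ haS, Set.mem_insert_of_mem _ hcS⟩ (ih hcS)

lemma conn_insert_of_closed {G : SimpleGraph V} {B S : Set V} {u : V}
    (hB : Conn G B) (hu : u ∈ B) (hS : S ⊆ B)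
    (hclosed : ∀ x ∈ S, ∀ y, G.Adj x y → y ∈ B → y ≠ u → y ∈ S) :
    Conn G (insert u S) := by
  refine ⟨⟨u, Set.mem_insert _ _⟩, ?_⟩
  have reach : ∀ x ∈ insert u S, Relation.ReflTransGen (Step G (insert u S)) x u := by
    rintro x (rfl | hx)
    · exact .refl
    · exact confine hclosed x (hB.2 x (hS hx) u hu) hx
  intro a ha b hb
  exact (reach a ha).trans (rtg_symm (reach b hb))

lemma cut_bound (G : SimpleGraph V) [Fintype V] :
    ∀ (n : ℕ) (B Y : Set V), Y.ncard ≤ n → Y ⊆ B → Y.Nonempty → Conn G B →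
      (∀ a ∈ B \ Y, ∀ b ∈ B \ Y, ¬ G.Adj a b) →
      {u | u ∈ B \ Y ∧ ¬ Conn G (B \ {u})}.ncard + 1 ≤ Y.ncard := by
  intro n
  induction n with
  | zero =>
      intro B Y hn hYB hY _ _
      have := (Set.ncard_pos (Set.toFinite Y)).2 hY
      omega
  | succ n ih =>
      intro B Y hn hYB hY hBconn hind
      set C := {u | u ∈ B \ Y ∧ ¬ Conn G (B \ {u})} with hCdef
      rcases C.eq_empty_or_nonempty with hC | ⟨u, huC⟩
      · rw [hC]
        rw [Set.ncard_empty]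
        have := (Set.ncard_pos (Set.toFinite Y)).2 hY
        omega
      obtain ⟨⟨huB, huY⟩, hucut⟩ := huC
      set s : Set V := B \ {u} with hsdef
      have hYs : Y ⊆ s := fun y hy => ⟨hYB hy, fun h => huY (h ▸ hy)⟩
      have hsne : s.Nonempty := hY.mono hYs
      have : ¬ ∀ a ∈ s, ∀ b ∈ s, Relation.ReflTransGen (Step G s) a b := by
        intro hall; exact hucut ⟨hsne, hall⟩
      push_neg at this
      obtain ⟨a, has, b, hbs, hnab⟩ := this
      set K : Set V := {x | x ∈ s ∧ Relation.ReflTransGen (Step G s) a x} with hKdef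
      have haK : a ∈ K := ⟨has, .refl⟩
      have hbK : b ∉ K := fun h => hnab h.2
      have cK : ∀ x ∈ K, ∀ y, G.Adj x y → y ∈ s → y ∈ K := by
        intro x hx y hxy hys
        exact ⟨hys, hx.2.tail ⟨hxy, hx.1, hys⟩⟩
      have hKs : K ⊆ s := fun x hx => hx.1
      set B1 : Set V := insert u K with hB1def
      set B2 : Set V := insert u (s \ K) with hB2def
      have hB1conn : Conn G B1 := by
        refine conn_insert_of_closed hBconn huB (fun x hx => (hKs hx).1) ?_
        intro x hx y hxy hyB hyu
        exact cK x hx y hxy ⟨hyB, hyu⟩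
      have hB2conn : Conn G B2 := by
        refine conn_insert_of_closed hBconn huB (fun x hx => hx.1.1) ?_
        intro x hx y hxy hyB hyu
        have hys : y ∈ s := ⟨hyB, hyu⟩
        exact ⟨hys, fun hyK => hx.2 (cK y hyK x hxy.symm hx.1)⟩
      have yfind : ∀ x ∈ s, ∃ y' ∈ Y, y' = x ∨ (G.Adj x y' ∧ y' ∈ s) := by
        intro x hxs
        by_cases hxY : x ∈ Y
        · exact ⟨x, hxY, Or.inl rfl⟩
        · obtain ⟨y0, hy0⟩ := hY
          have hreach := hBconn.2 x hxs.1 y0 (hYB hy0)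
          have hxy0 : x ≠ y0 := fun h => hxY (h ▸ hy0)
          rcases Relation.ReflTransGen.cases_head hreach with h | ⟨c, hstep, _⟩
          · exact absurd h hxy0
          · have hcB : c ∈ B := hstep.2.2
            have hcY : c ∈ Y := by
              by_contra hcY
              exact hind x ⟨hxs.1, hxY⟩ c ⟨hcB, hcY⟩ hstep.1
            have hcu : c ≠ u := fun h => huY (h ▸ hcY)
            exact ⟨c, hcY, Or.inr ⟨hstep.1, hcB, hcu⟩⟩
      set Y1 : Set V := Y ∩ K with hY1def
      set Y2 : Set V := Y \ K with hY2def
      have hY1ne : Y1.Nonempty := by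
        obtain ⟨y', hy'Y, h⟩ := yfind a has
        rcases h with rfl | ⟨hadj, hy's⟩
        · exact ⟨y', hy'Y, haK⟩
        · exact ⟨y', hy'Y, cK a haK y' hadj hy's⟩
      have hY2ne : Y2.Nonempty := by
        obtain ⟨y', hy'Y, h⟩ := yfind b hbs
        rcases h with rfl | ⟨hadj, hy's⟩
        · exact ⟨y', hy'Y, hbK⟩
        · exact ⟨y', hy'Y, fun hy'K => hbK (cK y' hy'K b hadj.symm hbs)⟩
      have hY12 : Y1 ∪ Y2 = Y := Set.inter_union_diff Y K
      have hY12d : Disjoint Y1 Y2 := by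
        rw [Set.disjoint_left]
        rintro y ⟨_, hyK⟩ ⟨_, hyK'⟩
        exact hyK' hyK
      have hYcard : Y1.ncard + Y2.ncard = Y.ncard := by
        rw [← Set.ncard_union_eq hY12d (Set.toFinite _) (Set.toFinite _), hY12]
      have hY1lt : Y1.ncard ≤ n := by
        have hss : Y1 ⊂ Y := by
          constructor
          · exact Set.inter_subset_left
          · intro hsub
            obtain ⟨y, hyY, hyK⟩ := hY2ne
            exact hyK (hsub hyY).2
        have := Set.ncard_lt_ncard hss (Set.toFinite Y)
        omega
      have hY2lt : Y2.ncard ≤ n := by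
        have hss : Y2 ⊂ Y := by
          constructor
          · exact Set.diff_subset
          · intro hsub
            obtain ⟨y, hyY, hyK⟩ := hY1ne
            exact (hsub hyY).2 hyK
        have := Set.ncard_lt_ncard hss (Set.toFinite Y)
        omega
      have hY1B1 : Y1 ⊆ B1 := fun y hy => Set.mem_insert_of_mem _ hy.2
      have hY2B2 : Y2 ⊆ B2 := fun y hy => Set.mem_insert_of_mem _ ⟨hYs hy.1, hy.2⟩
      have hdiff1 : B1 \ Y1 ⊆ B \ Y := by
        rintro x ⟨hx, hxY1⟩
        rcases hx with rfl | hxK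
        · exact ⟨huB, huY⟩
        · exact ⟨(hKs hxK).1, fun hxY => hxY1 ⟨hxY, hxK⟩⟩
      have hdiff2 : B2 \ Y2 ⊆ B \ Y := by
        rintro x ⟨hx, hxY2⟩
        rcases hx with rfl | hxsK
        · exact ⟨huB, huY⟩
        · exact ⟨hxsK.1.1, fun hxY => hxY2 ⟨hxY, hxsK.2⟩⟩
      have ih1 := ih B1 Y1 hY1lt hY1B1 hY1ne hB1conn
        (fun p hp q hq => hind p (hdiff1 hp) q (hdiff1 hq))
      have ih2 := ih B2 Y2 hY2lt hY2B2 hY2ne hB2conn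
        (fun p hp q hq => hind p (hdiff2 hp) q (hdiff2 hq))
      have hKunion : K ∪ (s \ K) = s := Set.union_diff_cancel hKs
      have hBsplit : B1 ∪ B2 = B := by
        rw [hB1def, hB2def, Set.insert_union, Set.union_insert, Set.insert_idem, hKunion,
          hsdef, Set.insert_diff_singleton, Set.insert_eq_of_mem huB]
      have hsub : C ⊆ insert u ({c | c ∈ B1 \ Y1 ∧ ¬ Conn G (B1 \ {c})} ∪
          {c | c ∈ B2 \ Y2 ∧ ¬ Conn G (B2 \ {c})}) := by
        intro c hc
        obtain ⟨⟨hcB, hcY⟩, hccut⟩ := hc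
        by_cases hcu : c = u
        · exact hcu ▸ Set.mem_insert _ _
        have hcs : c ∈ s := ⟨hcB, hcu⟩
        by_cases hcK : c ∈ K
        · refine Set.mem_insert_of_mem _ (Or.inl ⟨⟨Set.mem_insert_of_mem _ hcK,
            fun h => hcY h.1⟩, ?_⟩)
          intro hconn1
          apply hccut
          have hcB2 : c ∉ B2 := by
            rintro (rfl | hc2)
            · exact hcu rfl
            · exact hc2.2 hcK
          have hid : B \ {c} = (B1 \ {c}) ∪ B2 := by
            rw [← hBsplit, Set.union_diff_distrib, Set.diff_singleton_eq_self hcB2]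
          rw [hid]
          exact conn_union hconn1 hB2conn
            ⟨u, ⟨Set.mem_insert _ _, fun h => hcu (Set.mem_singleton_iff.1 h).symm⟩,
              Set.mem_insert _ _⟩
        · refine Set.mem_insert_of_mem _ (Or.inr ⟨⟨Set.mem_insert_of_mem _ ⟨hcs, hcK⟩,
            fun h => hcY h.1⟩, ?_⟩)
          intro hconn2
          apply hccut
          have hcB1 : c ∉ B1 := by
            rintro (rfl | hc1)
            · exact hcu rfl
            · exact hcK hc1
          have hid : B \ {c} = B1 ∪ (B2 \ {c}) := by
            rw [← hBsplit, Set.union_diff_distrib, Set.diff_singleton_eq_self hcB1]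
          rw [hid]
          exact conn_union hB1conn hconn2
            ⟨u, Set.mem_insert _ _,
              ⟨Set.mem_insert _ _, fun h => hcu (Set.mem_singleton_iff.1 h).symm⟩⟩
      have h1 : C.ncard ≤ (insert u ({c | c ∈ B1 \ Y1 ∧ ¬ Conn G (B1 \ {c})} ∪
          {c | c ∈ B2 \ Y2 ∧ ¬ Conn G (B2 \ {c})})).ncard :=
        Set.ncard_le_ncard hsub (Set.toFinite _)
      have h2 := Set.ncard_insert_le u ({c | c ∈ B1 \ Y1 ∧ ¬ Conn G (B1 \ {c})} ∪
          {c | c ∈ B2 \ Y2 ∧ ¬ Conn G (B2 \ {c})})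
      have h3 := Set.ncard_union_le {c | c ∈ B1 \ Y1 ∧ ¬ Conn G (B1 \ {c})}
          {c | c ∈ B2 \ Y2 ∧ ¬ Conn G (B2 \ {c})}
      omega

lemma ncard_biUnion_le [Fintype V] {ι : Type*} [DecidableEq ι] (s : Finset ι) (f : ι → Set V) :
    (⋃ k ∈ s, f k).ncard ≤ ∑ k ∈ s, (f k).ncard := by
  induction s using Finset.induction_on with
  | empty => simp
  | @insert a s ha ih =>
      rw [Finset.set_biUnion_insert, Finset.sum_insert ha]
      exact le_trans (Set.ncard_union_le _ _) (by omega)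

lemma ncard_biUnion_eq [Fintype V] {ι : Type*} [DecidableEq ι] (s : Finset ι) (f : ι → Set V)
    (hd : ∀ i ∈ s, ∀ j ∈ s, i ≠ j → Disjoint (f i) (f j)) :
    ∑ k ∈ s, (f k).ncard = (⋃ k ∈ s, f k).ncard := by
  induction s using Finset.induction_on with
  | empty => simp
  | @insert a s ha ih =>
      rw [Finset.set_biUnion_insert, Finset.sum_insert ha,
        Set.ncard_union_eq ?_ (Set.toFinite _) (Set.toFinite _),
        ih (fun i hi j hj hij => hd i (Finset.mem_insert_of_mem hi) j
          (Finset.mem_insert_of_mem hj) hij)]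
      rw [Set.disjoint_left]
      intro x hxa hxU
      obtain ⟨k, hk, hxk⟩ := Set.mem_iUnion₂.1 hxU
      exact Set.disjoint_left.1
        (hd a (Finset.mem_insert_self _ _) k (Finset.mem_insert_of_mem hk)
          (fun h => ha (h ▸ hk))) hxa hxk

lemma gadj {G : SimpleGraph V} {v w : V} (hvw : v ≠ w) {x y : V} :
    (G ⊔ fromEdgeSet {s(v, w)}).Adj x y ↔
      G.Adj x y ∨ (x = v ∧ y = w) ∨ (x = w ∧ y = v) := by
  constructor
  · rintro (h | h)
    · exact Or.inl h
    · rw [fromEdgeSet_adj] at h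
      obtain ⟨h1, _⟩ := h
      simp only [Set.mem_singleton_iff, Sym2.eq_iff] at h1
      tauto
  · rintro (h | ⟨rfl, rfl⟩ | ⟨rfl, rfl⟩)
    · exact Or.inl h
    · exact Or.inr (by rw [fromEdgeSet_adj]; exact ⟨rfl, hvw⟩)
    · refine Or.inr (by rw [fromEdgeSet_adj]; exact ⟨by rw [Set.mem_singleton_iff]; exact Sym2.eq_swap, hvw.symm⟩)

lemma fix_model {G : SimpleGraph V} {v w z : V} (hvw : v ≠ w)
    (hzv : G.Adj z v) (hzw : G.Adj z w) {t : ℕ} {φ : Fin t → Set V}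
    (hne : ∀ i, (φ i).Nonempty)
    (hdisj : Pairwise fun i j => Disjoint (φ i) (φ j))
    (hconn : ∀ i, Conn (G ⊔ fromEdgeSet {s(v, w)}) (φ i))
    (hadj : ∀ ⦃i j : Fin t⦄, i ≠ j →
      ∃ a ∈ φ i, ∃ b ∈ φ j, (G ⊔ fromEdgeSet {s(v, w)}).Adj a b)
    (hz : ∀ i, z ∉ φ i) :
    ∃ ψ : Fin t → Set V, (∀ i, (ψ i).Nonempty) ∧
      (Pairwise fun i j => Disjoint (ψ i) (ψ j)) ∧
      (∀ i, Conn G (ψ i)) ∧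
      ∀ ⦃i j : Fin t⦄, i ≠ j → ∃ a ∈ ψ i, ∃ b ∈ ψ j, G.Adj a b := by
  classical
  refine ⟨fun i => if v ∈ φ i then insert z (φ i) else φ i, ?_, ?_, ?_, ?_⟩
  · intro i
    dsimp only
    split_ifs with h1
    · exact (hne i).mono (Set.subset_insert _ _)
    · exact hne i
  · intro i j hij
    dsimp only
    split_ifs with h1 h2 h3
    · exact absurd h2 (Set.disjoint_left.1 (hdisj hij) h1)
    · rw [Set.disjoint_left]
      rintro x (rfl | hx)
      · exact hz j
      · exact Set.disjoint_left.1 (hdisj hij) hx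
    · rw [Set.disjoint_right]
      rintro x (rfl | hx)
      · exact hz i
      · exact Set.disjoint_right.1 (hdisj hij) hx
    · exact hdisj hij
  · intro i
    dsimp only
    split_ifs with h1
    · have lift : ∀ x y, Step (G ⊔ fromEdgeSet {s(v, w)}) (φ i) x y →
          Relation.ReflTransGen (Step G (insert z (φ i))) x y := by
        rintro x y ⟨hxy, hx, hy⟩
        rcases (gadj hvw).1 hxy with h | ⟨rfl, rfl⟩ | ⟨rfl, rfl⟩
        · exact .single ⟨h, Set.mem_insert_of_mem _ hx, Set.mem_insert_of_mem _ hy⟩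
        · exact Relation.ReflTransGen.head
            ⟨hzv.symm, Set.mem_insert_of_mem _ hx, Set.mem_insert _ _⟩
            (.single ⟨hzw, Set.mem_insert _ _, Set.mem_insert_of_mem _ hy⟩)
        · exact Relation.ReflTransGen.head
            ⟨hzw.symm, Set.mem_insert_of_mem _ hx, Set.mem_insert _ _⟩
            (.single ⟨hzv, Set.mem_insert _ _, Set.mem_insert_of_mem _ hy⟩)
      refine ⟨⟨z, Set.mem_insert _ _⟩, ?_⟩
      have reach : ∀ x ∈ insert z (φ i),
          Relation.ReflTransGen (Step G (insert z (φ i))) x v := by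
        rintro x (rfl | hx)
        · exact .single ⟨hzv, Set.mem_insert _ _, Set.mem_insert_of_mem _ h1⟩
        · exact rtg_lift lift ((hconn i).2 x hx v h1)
      intro a ha b hb
      exact (reach a ha).trans (rtg_symm (reach b hb))
    · refine ⟨(hconn i).1, fun a ha b hb => ?_⟩
      refine rtg_lift ?_ ((hconn i).2 a ha b hb)
      rintro x y ⟨hxy, hx, hy⟩
      rcases (gadj hvw).1 hxy with h | ⟨rfl, rfl⟩ | ⟨rfl, rfl⟩
      · exact .single ⟨h, hx, hy⟩
      · exact absurd hx h1
      · exact absurd hy h1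
  · intro i j hij
    obtain ⟨a, ha, b, hb, hab⟩ := hadj hij
    dsimp only
    rcases (gadj hvw).1 hab with h | ⟨rfl, rfl⟩ | ⟨rfl, rfl⟩
    · refine ⟨a, ?_, b, ?_, h⟩
      · split_ifs with h1
        · exact Set.mem_insert_of_mem _ ha
        · exact ha
      · split_ifs with h1
        · exact Set.mem_insert_of_mem _ hb
        · exact hb
    · refine ⟨z, ?_, b, ?_, hzw⟩
      · rw [if_pos ha]
        exact Set.mem_insert _ _
      · split_ifs with h1
        · exact Set.mem_insert_of_mem _ hb
        · exact hb
    · refine ⟨a, ?_, z, ?_, hzw.symm⟩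
      · split_ifs with h1
        · exact Set.mem_insert_of_mem _ ha
        · exact ha
      · rw [if_pos hb]
        exact Set.mem_insert _ _

lemma surgery {G : SimpleGraph V} [Fintype V] {X : Set V}
    (hX : ∀ ⦃a b : V⦄, G.Adj a b → a ∈ X ∨ b ∈ X)
    {v w : V} (hv : v ∈ X) (hw : w ∈ X) (hvw : v ≠ w)
    {t : ℕ} (ht : t ≤ X.ncard + 1) (ht2 : 2 ≤ t)
    (hmany : (X.ncard + 1) ^ 2 < {z : V | z ∉ X ∧ G.Adj z v ∧ G.Adj z w}.ncard)
    {φ : Fin t → Set V}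
    (hne : ∀ i, (φ i).Nonempty)
    (hdisj : Pairwise fun i j => Disjoint (φ i) (φ j))
    (hconn : ∀ i, Conn (G ⊔ fromEdgeSet {s(v, w)}) (φ i))
    (hadj : ∀ ⦃i j : Fin t⦄, i ≠ j →
      ∃ a ∈ φ i, ∃ b ∈ φ j, (G ⊔ fromEdgeSet {s(v, w)}).Adj a b)
    (hZU : ∀ z ∈ {z : V | z ∉ X ∧ G.Adj z v ∧ G.Adj z w}, ∃ i, z ∈ φ i) :
    ∃ (ψ : Fin t → Set V) (z : V),
      z ∉ X ∧ G.Adj z v ∧ G.Adj z w ∧ (∀ i, z ∉ ψ i) ∧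
      (∀ i, (ψ i).Nonempty) ∧
      (Pairwise fun i j => Disjoint (ψ i) (ψ j)) ∧
      (∀ i, Conn (G ⊔ fromEdgeSet {s(v, w)}) (ψ i)) ∧
      (∀ ⦃i j : Fin t⦄, i ≠ j →
        ∃ a ∈ ψ i, ∃ b ∈ ψ j, (G ⊔ fromEdgeSet {s(v, w)}).Adj a b) := by
  classical
  set Z : Set V := {z : V | z ∉ X ∧ G.Adj z v ∧ G.Adj z w} with hZdef
  have hXcov' : ∀ a b : V, a ∉ X → b ∉ X → ¬ (G ⊔ fromEdgeSet {s(v, w)}).Adj a b := by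
    intro a b ha hb hab
    rcases (gadj hvw).1 hab with h | ⟨rfl, rfl⟩ | ⟨rfl, rfl⟩
    · rcases hX h with h' | h'
      · exact ha h'
      · exact hb h'
    · exact ha hv
    · exact ha hw
  -- Step 2 : find a good branch set
  have hstep2 : ∃ k : Fin t, (φ k ∩ X).ncard + t ≤ (Z ∩ φ k).ncard := by
    by_contra hcon
    push_neg at hcon
    have hZsub : Z ⊆ ⋃ k ∈ (Finset.univ : Finset (Fin t)), (Z ∩ φ k) := by
      intro z hz
      obtain ⟨i, hi⟩ := hZU z hz
      exact Set.mem_iUnion₂.2 ⟨i, Finset.mem_univ _, hz, hi⟩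
    have h1 : Z.ncard ≤ ∑ k : Fin t, (Z ∩ φ k).ncard :=
      le_trans (Set.ncard_le_ncard hZsub (Set.toFinite _)) (ncard_biUnion_le _ _)
    have hsum : ∑ k : Fin t, ((Z ∩ φ k).ncard + 1) ≤
        ∑ k : Fin t, ((φ k ∩ X).ncard + t) :=
      Finset.sum_le_sum (fun k _ => Nat.succ_le_of_lt (hcon k))
    rw [Finset.sum_add_distrib, Finset.sum_add_distrib, Finset.sum_const, Finset.sum_const,
      Finset.card_univ, Fintype.card_fin, smul_eq_mul, smul_eq_mul, mul_one] at hsum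
    have h3 : ∑ k : Fin t, (φ k ∩ X).ncard ≤ X.ncard := by
      rw [ncard_biUnion_eq (Finset.univ : Finset (Fin t)) (fun k => φ k ∩ X)
        (fun i _ j _ hij => (hdisj hij).mono Set.inter_subset_left Set.inter_subset_left)]
      refine Set.ncard_le_ncard ?_ (Set.toFinite _)
      intro x hx
      obtain ⟨k, _, _, hk2⟩ := Set.mem_iUnion₂.1 hx
      exact hk2
    have h4 : t * t ≤ t * (X.ncard + 1) := Nat.mul_le_mul_left t ht
    nlinarith [hmany, h1, hsum, h3, h4]
  obtain ⟨k, hk⟩ := hstep2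
  set Y : Set V := φ k ∩ X with hYdef
  set ZK : Set V := Z ∩ φ k with hZKdef
  -- Y is nonempty
  have hYne : Y.Nonempty := by
    rw [Set.nonempty_iff_ne_empty]
    intro hYe
    have hnoX : ∀ x ∈ φ k, x ∉ X := by
      intro x hx hxX
      exact absurd (show x ∈ Y from ⟨hx, hxX⟩) (by rw [hYe]; exact Set.notMem_empty x)
    have hsubs : (φ k).Subsingleton :=
      conn_subsingleton_of_no_edges (hconn k)
        (fun a ha b hb => hXcov' a b (hnoX a ha) (hnoX b hb))
    have h1 : ZK.ncard ≤ (φ k).ncard :=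
      Set.ncard_le_ncard Set.inter_subset_right (Set.toFinite _)
    have h2 : (φ k).ncard ≤ 1 := (Set.ncard_le_one (Set.toFinite _)).2 hsubs
    have h0 : Y.ncard = 0 := by rw [hYe]; simp
    omega
  -- cut bound
  have hind : ∀ a ∈ φ k \ Y, ∀ b ∈ φ k \ Y, ¬ (G ⊔ fromEdgeSet {s(v, w)}).Adj a b := by
    intro a ha b hb
    exact hXcov' a b (fun h => ha.2 ⟨ha.1, h⟩) (fun h => hb.2 ⟨hb.1, h⟩)
  have hcut := cut_bound (G ⊔ fromEdgeSet {s(v, w)}) Y.ncard (φ k) Y le_rfl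
    Set.inter_subset_left hYne (hconn k) hind
  set C : Set V := {u | u ∈ φ k \ Y ∧ ¬ Conn (G ⊔ fromEdgeSet {s(v, w)}) (φ k \ {u})}
    with hCdef
  set NC : Set V := {u | u ∈ ZK ∧ Conn (G ⊔ fromEdgeSet {s(v, w)}) (φ k \ {u})} with hNCdef
  have hZKsub : ZK ⊆ NC ∪ C := by
    intro u hu
    by_cases hc : Conn (G ⊔ fromEdgeSet {s(v, w)}) (φ k \ {u})
    · exact Or.inl ⟨hu, hc⟩
    · exact Or.inr ⟨⟨hu.2, fun hY' => hu.1.1 hY'.2⟩, hc⟩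
  have hNC : t + 1 ≤ NC.ncard := by
    have h1 : ZK.ncard ≤ NC.ncard + C.ncard :=
      le_trans (Set.ncard_le_ncard hZKsub (Set.toFinite _)) (Set.ncard_union_le _ _)
    omega
  -- bad (sole-witness) vertices
  set S : Fin t → Set V := fun m =>
    {u | m ≠ k ∧ ∀ a ∈ φ k, ∀ b ∈ φ m, (G ⊔ fromEdgeSet {s(v, w)}).Adj a b → a = u}
    with hSdef
  have hS1 : ∀ m, (S m).ncard ≤ 1 := by
    intro m
    rw [Set.ncard_le_one (Set.toFinite _)]
    intro u hu u' hu'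
    obtain ⟨a, ha, b, hb, hab⟩ := hadj (Ne.symm hu.1)
    rw [← hu.2 a ha b hb hab, ← hu'.2 a ha b hb hab]
  have hBad : (⋃ m ∈ (Finset.univ : Finset (Fin t)), S m).ncard ≤ t := by
    refine le_trans (ncard_biUnion_le _ _) ?_
    calc ∑ m : Fin t, (S m).ncard ≤ ∑ _m : Fin t, 1 :=
          Finset.sum_le_sum (fun m _ => hS1 m)
      _ = t := by simp
  -- pick the good vertex z
  have hzex : ∃ z ∈ NC, z ∉ ⋃ m ∈ (Finset.univ : Finset (Fin t)), S m := by
    by_contra hcon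
    push_neg at hcon
    have := Set.ncard_le_ncard hcon (Set.toFinite _)
    omega
  obtain ⟨z, hzNC, hzBad⟩ := hzex
  have hzZK : z ∈ ZK := hzNC.1
  have hzZ : z ∈ Z := hzZK.1
  have hzφk : z ∈ φ k := hzZK.2
  -- the new model
  refine ⟨fun i => if i = k then φ k \ {z} else φ i, z, hzZ.1, hzZ.2.1, hzZ.2.2, ?_, ?_, ?_, ?_, ?_⟩
  · intro i
    dsimp only
    by_cases h : i = k
    · rw [if_pos h]
      rintro ⟨_, hzz⟩
      exact hzz rfl
    · rw [if_neg h]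
      intro hzi
      exact Set.disjoint_left.1 (hdisj (show k ≠ i from fun hh => h hh.symm)) hzφk hzi
  · intro i
    dsimp only
    by_cases h : i = k
    · rw [if_pos h]
      obtain ⟨y, hy⟩ := hYne
      exact ⟨y, hy.1, fun hyz => hzZ.1 ((Set.mem_singleton_iff.1 hyz) ▸ hy.2)⟩
    · rw [if_neg h]; exact hne i
  · have hsubφ : ∀ i, (if i = k then φ k \ {z} else φ i) ⊆ φ i := by
      intro i
      by_cases h : i = k
      · rw [if_pos h, h]; exact Set.diff_subset
      · rw [if_neg h]
    intro i j hij
    dsimp only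
    exact (hdisj hij).mono (hsubφ i) (hsubφ j)
  · intro i
    dsimp only
    by_cases h : i = k
    · rw [if_pos h]; exact hzNC.2
    · rw [if_neg h]; exact hconn i
  · intro i j hij
    dsimp only
    by_cases hik : i = k
    · have hjk : ¬ j = k := fun hh => hij (hik.trans hh.symm)
      rw [if_pos hik, if_neg hjk]
      have hzS : z ∉ S j := fun hzS => hzBad (Set.mem_iUnion₂.2 ⟨j, Finset.mem_univ _, hzS⟩)
      simp only [hSdef, Set.mem_setOf_eq] at hzS
      push_neg at hzS
      obtain ⟨a, ha, b, hb, hab, hne'⟩ := hzS hjk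
      exact ⟨a, ⟨ha, by simpa using hne'⟩, b, hb, hab⟩
    · rw [if_neg hik]
      by_cases hjk : j = k
      · rw [if_pos hjk]
        have hzS : z ∉ S i := fun hzS => hzBad (Set.mem_iUnion₂.2 ⟨i, Finset.mem_univ _, hzS⟩)
        simp only [hSdef, Set.mem_setOf_eq] at hzS
        push_neg at hzS
        obtain ⟨a, ha, b, hb, hab, hne'⟩ := hzS hik
        exact ⟨b, hb, a, ⟨ha, by simpa using hne'⟩, hab.symm⟩
      · rw [if_neg hjk]
        exact hadj hij

end Stmt12Aux

open Stmt12Aux in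
/-- Let `G` be a graph with vertex cover `X`, let `t ≤ |X| + 1`, and let `v, w ∈ X` be
distinct nonadjacent vertices with more than `(|X| + 1)²` common neighbors outside `X`.
Then `G` has a `K_t` minor iff the graph obtained by adding the edge `vw` does. -/
theorem stmt12 {V : Type u} [Fintype V]
    (G : SimpleGraph V) (X : Set V) (hX : _root_.IsVertexCover G X)
    (t : ℕ) (ht : t ≤ X.ncard + 1)
    (v w : V) (hv : v ∈ X) (hw : w ∈ X) (hvw : v ≠ w) (hnadj : ¬ G.Adj v w)
    (hmany : (X.ncard + 1) ^ 2 < {z : V | z ∉ X ∧ G.Adj z v ∧ G.Adj z w}.ncard) :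
    HasMinor G (⊤ : SimpleGraph (Fin t)) ↔
      HasMinor (G ⊔ fromEdgeSet {s(v, w)}) (⊤ : SimpleGraph (Fin t)) := by
  classical
  constructor
  · rintro ⟨φ, h1, h2, h3, h4⟩
    refine ⟨φ, h1, h2, fun i => ?_, fun i j hij => ?_⟩
    · exact (h3 i).mono (fun a b hab => Or.inl hab)
    · obtain ⟨a, ha, b, hb, hab⟩ := h4 hij
      exact ⟨a, ha, b, hb, Or.inl hab⟩
  · intro h
    by_cases ht1 : t ≤ 1
    · refine ⟨fun _ => {v}, fun _ => ⟨v, rfl⟩, ?_, ?_, ?_⟩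
      · intro i j hij
        exfalso
        have hi := i.isLt
        have hj := j.isLt
        exact hij (Fin.ext (by omega))
      · intro i
        rw [← conn_iff]
        exact conn_singleton G v
      · intro i j hij
        rw [top_adj] at hij
        exfalso
        have hi := i.isLt
        have hj := j.isLt
        exact hij (Fin.ext (by omega))
    · push_neg at ht1
      obtain ⟨φ, h1, h2, h3, h4⟩ := h
      have h3' : ∀ i, Conn (G ⊔ fromEdgeSet {s(v, w)}) (φ i) :=
        fun i => (conn_iff _ _).2 (h3 i)
      have h4' : ∀ ⦃i j : Fin t⦄, i ≠ j →
          ∃ a ∈ φ i, ∃ b ∈ φ j, (G ⊔ fromEdgeSet {s(v, w)}).Adj a b := by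
        intro i j hij
        exact h4 (by rw [top_adj]; exact hij)
      by_cases hall : ∀ z ∈ {z : V | z ∉ X ∧ G.Adj z v ∧ G.Adj z w}, ∃ i, z ∈ φ i
      · obtain ⟨ψ, z, hz1, hz2, hz3, hz4, k1, k2, k3, k4⟩ :=
          surgery hX hv hw hvw ht ht1 hmany h1 h2 h3' h4' hall
        obtain ⟨χ, c1, c2, c3, c4⟩ := fix_model hvw hz2 hz3 k1 k2 k3 k4 hz4
        exact ⟨χ, c1, c2, fun i => (conn_iff _ _).1 (c3 i), fun i j hij => c4 hij.ne⟩
      · push_neg at hall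
        obtain ⟨z, hzZ, hznot⟩ := hall
        obtain ⟨χ, c1, c2, c3, c4⟩ := fix_model hvw hzZ.2.1 hzZ.2.2 h1 h2 h3' h4' hznot
        exact ⟨χ, c1, c2, fun i => (conn_iff _ _).1 (c3 i), fun i j hij => c4 hij.ne⟩
end

section
/- Let G be a graph with vertex cover X such that (i) no vertex of V(G) \ X is simplicial, and (ii) for every pair of distinct nonadjacent vertices v, w ∈ X, at most (|X| + 1)² vertices of V(G) \ X are adjacent to both v and w. Then |V(G)| ≤ (|X| + 1)⁴. -/
open SimpleGraph

universe u

/-- `s` is a simplicial vertex of `G`: its open neighborhood induces a clique. -/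
def IsSimplicial {V : Type*} (G : SimpleGraph V) (s : V) : Prop :=
  ∀ ⦃a b : V⦄, G.Adj s a → G.Adj s b → a ≠ b → G.Adj a b

/-- Let `G` be a graph with vertex cover `X` such that (i) no vertex outside `X` is
simplicial, and (ii) every pair of distinct nonadjacent vertices of `X` has at most
`(|X| + 1)²` common neighbors outside `X`. Then `|V(G)| ≤ (|X| + 1)⁴`. -/
theorem stmt14 {V : Type u} [Fintype V] (G : SimpleGraph V) (X : Set V)
    (hX : _root_.IsVertexCover G X)
    (h1 : ∀ s : V, s ∉ X → ¬ IsSimplicial G s)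
    (h2 : ∀ v ∈ X, ∀ w ∈ X, v ≠ w → ¬ G.Adj v w →
      {z : V | z ∉ X ∧ G.Adj z v ∧ G.Adj z w}.ncard ≤ (X.ncard + 1) ^ 2) :
    Fintype.card V ≤ (X.ncard + 1) ^ 4 := by
  classical
  set n := X.ncard with hn
  -- the finset version of X
  set Xf : Finset V := Set.toFinset X with hXf
  have hXfcard : Xf.card = n := by
    simp [hXf, hn, Set.ncard_eq_toFinset_card']
  -- the common-neighborhood finsets
  set t : V × V → Finset V := fun p =>
    Finset.univ.filter (fun z =>
      z ∉ X ∧ G.Adj z p.1 ∧ G.Adj z p.2 ∧ p.1 ≠ p.2 ∧ ¬ G.Adj p.1 p.2) with ht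
  have htcard : ∀ p ∈ Xf ×ˢ Xf, (t p).card ≤ (n + 1) ^ 2 := by
    rintro ⟨v, w⟩ hp
    simp only [Finset.mem_product, hXf, Set.mem_toFinset] at hp
    by_cases hvw : v ≠ w ∧ ¬ G.Adj v w
    · calc (t (v, w)).card = ((t (v, w) : Set V)).ncard := (Set.ncard_coe_finset _).symm
        _ ≤ {z : V | z ∉ X ∧ G.Adj z v ∧ G.Adj z w}.ncard := by
            apply Set.ncard_le_ncard _ (Set.toFinite _)
            intro z hz
            simp only [ht, Finset.coe_filter, Set.mem_setOf_eq, Finset.mem_univ,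
              true_and] at hz
            exact ⟨hz.1, hz.2.1, hz.2.2.1⟩
        _ ≤ (n + 1) ^ 2 := h2 v hp.1 w hp.2 hvw.1 hvw.2
    · have : t (v, w) = ∅ := by
        ext z
        simp only [ht, Finset.mem_filter, Finset.mem_univ, true_and,
          Finset.notMem_empty, iff_false]
        rintro ⟨-, -, -, hne, hna⟩
        exact hvw ⟨hne, hna⟩
      simp [this]
  -- every vertex outside X is in some t p
  have hcover : Finset.univ.filter (fun z => z ∉ X) ⊆ (Xf ×ˢ Xf).biUnion t := by
    intro s hs
    simp only [Finset.mem_filter, Finset.mem_univ, true_and] at hs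
    have := h1 s hs
    simp only [IsSimplicial, not_forall] at this
    obtain ⟨a, b, ha, hb, hne, hnab⟩ := this
    have haX : a ∈ X := (hX ha).resolve_left hs
    have hbX : b ∈ X := (hX hb).resolve_left hs
    refine Finset.mem_biUnion.2 ⟨(a, b), ?_, ?_⟩
    · simp [hXf, haX, hbX]
    · simp only [ht, Finset.mem_filter, Finset.mem_univ, true_and]
      exact ⟨hs, ha, hb, hne, hnab⟩
  have hcompl : (Finset.univ.filter (fun z => z ∉ X)).card ≤ n ^ 2 * (n + 1) ^ 2 := by
    calc (Finset.univ.filter (fun z => z ∉ X)).card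
        ≤ ((Xf ×ˢ Xf).biUnion t).card := Finset.card_le_card hcover
      _ ≤ ∑ p ∈ Xf ×ˢ Xf, (t p).card := Finset.card_biUnion_le
      _ ≤ ∑ _p ∈ Xf ×ˢ Xf, (n + 1) ^ 2 := Finset.sum_le_sum htcard
      _ = (Xf ×ˢ Xf).card * (n + 1) ^ 2 := by rw [Finset.sum_const, smul_eq_mul]
      _ = n ^ 2 * (n + 1) ^ 2 := by rw [Finset.card_product, hXfcard]; ring
  have hsplit : (Finset.univ.filter (fun z => z ∈ X)).card
      + (Finset.univ.filter (fun z => z ∉ X)).card = Fintype.card V := by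
    simpa using Finset.card_filter_add_card_filter_not
      (s := (Finset.univ : Finset V)) (p := fun z => z ∈ X)
  have hmem : (Finset.univ.filter (fun z => z ∈ X)).card = n := by
    rw [← hXfcard]
    congr 1
    ext z
    simp [hXf]
  have : Fintype.card V ≤ n + n ^ 2 * (n + 1) ^ 2 := by
    omega
  calc Fintype.card V ≤ n + n ^ 2 * (n + 1) ^ 2 := this
    _ ≤ (n + 1) ^ 4 := by nlinarith [sq_nonneg n]
end

section
/- Let G be a connected graph on at least 3 vertices and let t ≥ 1. The following are equivalent: (a) G has a spanning tree with at least t leaves; (b) G contains the star K_{1,t} as a minor; (c) G has a connected dominating set of size at most |V(G)| − t. -/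
open SimpleGraph

universe u v

variable {V : Type u}

/-- The graph defined by a parent function. -/
def treeOf (p : V → V) : SimpleGraph V where
  Adj u v := u ≠ v ∧ (p u = v ∨ p v = u)
  symm := ⟨fun u v ⟨h, h2⟩ => ⟨h.symm, h2.symm⟩⟩
  loopless := ⟨fun u ⟨h, _⟩ => h rfl⟩

section TreeOf

variable {G : SimpleGraph V} {r : V} {p : V → V}

lemma treeOf_adj {u v : V} : (treeOf p).Adj u v ↔ u ≠ v ∧ (p u = v ∨ p v = u) := Iff.rfl

variable (hr : p r = r) (hadj : ∀ v, v ≠ r → G.Adj v (p v))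
  (hreach : ∀ v, ∃ n, p^[n] v = r)

include hr hadj in
lemma treeOf_le : treeOf p ≤ G := by
  rintro u w ⟨hne, h | h⟩
  · subst h
    refine hadj u fun h' => hne ?_
    rw [h', hr]
  · subst h
    refine (hadj w fun h' => hne.symm ?_).symm
    rw [h', hr]

include hadj in
lemma treeOf_adj_parent {u : V} (hu : u ≠ r) : (treeOf p).Adj u (p u) :=
  ⟨(hadj u hu).ne, Or.inl rfl⟩

include hadj in
lemma treeOf_reach_root : ∀ n (u : V), p^[n] u = r → (treeOf p).Reachable u r := by
  intro n
  induction n with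
  | zero =>
    intro u hu
    simp only [Function.iterate_zero, id] at hu
    subst hu; exact Reachable.refl u
  | succ n ih =>
    intro u hu
    by_cases h : u = r
    · subst h; exact Reachable.refl _
    · rw [Function.iterate_succ_apply] at hu
      exact ((treeOf_adj_parent hadj h).reachable).trans (ih (p u) hu)

include hr hadj hreach in
lemma treeOf_connected : (treeOf p).Connected := by
  rw [connected_iff]
  refine ⟨fun u w => ?_, ⟨r⟩⟩
  obtain ⟨n, hn⟩ := hreach u
  obtain ⟨m, hm⟩ := hreach w
  exact (treeOf_reach_root hadj n u hn).trans (treeOf_reach_root hadj m w hm).symm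

include hr hreach in
lemma treeOf_no_two_cycle {a b : V} (h1 : p a = b) (h2 : p b = a) : a = b := by
  obtain ⟨n, hn⟩ := hreach a
  have key : ∀ k, p^[k] a = a ∨ p^[k] a = b := by
    intro k
    induction k with
    | zero => left; simp
    | succ k ih =>
      rcases ih with h | h <;> rw [Function.iterate_succ_apply', h]
      · right; exact h1
      · left; exact h2
  rcases key n with h | h
  · -- a = r
    have : a = r := by rw [← hn, h]
    rw [this, hr] at h1
    rw [this, ← h1]
  · have : b = r := by rw [← hn, h]
    rw [this, hr] at h2
    rw [this, ← h2]

/-- a walk stays in a set closed under adjacency -/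
lemma walk_stays {H : SimpleGraph V} {A : Set V} (hA : ∀ x y, H.Adj x y → x ∈ A → y ∈ A)
    {a b : V} (w : H.Walk a b) (ha : a ∈ A) : b ∈ A := by
  induction w with
  | nil => exact ha
  | cons h w ih => exact ih (hA _ _ h ha)

include hr hreach in
lemma treeOf_isAcyclic : (treeOf p).IsAcyclic := by
  rw [isAcyclic_iff_forall_adj_isBridge]
  have key : ∀ u v : V, p u = v → u ≠ v → (treeOf p).IsBridge s(u, v) := by
    intro u v hpu hne
    rw [isBridge_iff]
    rintro ⟨w⟩
    set A : Set V := {x | ∃ n, p^[n] x = u} with hA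
    have hu : u ∈ A := ⟨0, rfl⟩
    have hvA : v ∉ A := by
      rintro ⟨k, hk⟩
      -- then p^[k+1] u = u, periodicity forces u = r
      have hper : p^[k + 1] u = u := by
        rw [Function.iterate_succ_apply, hpu, hk]
      have hper' : ∀ m, p^[(k + 1) * m] u = u := by
        intro m
        induction m with
        | zero => simp
        | succ m ih =>
          rw [Nat.mul_succ, Function.iterate_add_apply, hper, ih]
      obtain ⟨n, hn⟩ := hreach u
      have hrfix : ∀ j, p^[j] r = r := by
        intro j
        induction j with
        | zero => simp
        | succ j ih => rw [Function.iterate_succ_apply, hr, ih]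
      have : p^[(k + 1) * n] u = r := by
        rw [show (k + 1) * n = k * n + n by ring, Function.iterate_add_apply, hn, hrfix]
      have hur : u = r := by rw [← hper' n, this]
      apply hne
      rw [← hpu, hur, hr]
    have hclosed : ∀ x y, ((treeOf p) \ fromEdgeSet {s(u, v)}).Adj x y → x ∈ A → y ∈ A := by
      rintro x y hxy hx
      rw [sdiff_adj, fromEdgeSet_adj] at hxy
      obtain ⟨⟨hnexy, hca⟩, hne2⟩ := hxy
      have hsne : s(x, y) ≠ s(u, v) := fun h => hne2 ⟨Set.mem_singleton_iff.mpr h, hnexy⟩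
      rcases hca with h | h
      · -- p x = y
        by_cases hxu : x = u
        · have hyv : y = v := by rw [← hpu, ← h, hxu]
          exact absurd (by rw [hxu, hyv]) hsne
        · obtain ⟨n, hn⟩ := hx
          cases n with
          | zero => exact absurd hn hxu
          | succ n =>
            rw [Function.iterate_succ_apply, h] at hn
            exact ⟨n, hn⟩
      · -- p y = x
        obtain ⟨n, hn⟩ := hx
        exact ⟨n + 1, by rw [Function.iterate_succ_apply, h, hn]⟩
    exact hvA (walk_stays hclosed w hu)
  intro u v huv
  rcases huv with ⟨hne, h | h⟩
  · exact key u v h hne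
  · have := key v u h hne.symm
    rwa [Sym2.eq_swap] at this
include hadj in
lemma treeOf_leaf {x : V} (hx : x ≠ r) (hchild : ∀ u, u ≠ x → p u ≠ x) :
    ((treeOf p).neighborSet x).ncard = 1 := by
  have hns : (treeOf p).neighborSet x = {p x} := by
    ext y
    simp only [mem_neighborSet, treeOf_adj, Set.mem_singleton_iff]
    constructor
    · rintro ⟨hne, h | h⟩
      · exact h.symm
      · exact absurd h (hchild y (Ne.symm hne))
    · rintro rfl
      exact ⟨(hadj x hx).ne, Or.inl rfl⟩
  rw [hns, Set.ncard_singleton]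

end TreeOf

lemma exists_parent {α : Type v} (H : SimpleGraph α) (hc : H.Connected) (r : α) :
    ∃ p : α → α, p r = r ∧ (∀ w, w ≠ r → H.Adj w (p w) ∧ H.dist (p w) r < H.dist w r) ∧
      (∀ w, ∃ n, p^[n] w = r) := by
  classical
  have hex : ∀ w, w ≠ r → ∃ x, H.Adj w x ∧ H.dist x r < H.dist w r := by
    intro w hw
    obtain ⟨q, hq⟩ := hc.exists_walk_length_eq_dist w r
    cases q with
    | nil => exact absurd rfl hw
    | @cons _ c _ h q' =>
      refine ⟨c, h, ?_⟩
      have h1 := dist_le q'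
      rw [Walk.length_cons] at hq
      have h2 : 0 < H.dist w r := hc.pos_dist_of_ne hw
      omega
  choose f hf using hex
  refine ⟨fun w => if h : w = r then w else f w h, by simp, ?_, ?_⟩
  · intro w hw
    simp only [dif_neg hw]
    exact ⟨(hf w hw).1, (hf w hw).2⟩
  · intro w
    suffices h : ∀ k w, H.dist w r ≤ k →
        ∃ n, (fun w => if h : w = r then w else f w h)^[n] w = r by
      exact h (H.dist w r) w le_rfl
    intro k
    induction k with
    | zero =>
      intro w hw
      have : w = r := hc.dist_eq_zero_iff.mp (Nat.le_zero.mp hw)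
      exact ⟨0, this⟩
    | succ k ih =>
      intro w hw
      by_cases h : w = r
      · exact ⟨0, h⟩
      · obtain ⟨n, hn⟩ := ih (f w h) (by have := (hf w h).2; omega)
        refine ⟨n + 1, ?_⟩
        rw [Function.iterate_succ_apply]
        simpa [dif_neg h] using hn

lemma reachable_induce_of_walk {G : SimpleGraph V} {S : Set V} {a b : V}
    (w : G.Walk a b) (hsup : ∀ x ∈ w.support, x ∈ S) (ha : a ∈ S) (hb : b ∈ S) :
    (G.induce S).Reachable ⟨a, ha⟩ ⟨b, hb⟩ := by
  induction w with
  | nil => exact Reachable.refl _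
  | @cons a c b h q ih =>
    have hc : c ∈ S := hsup c (by simp)
    have had : (G.induce S).Adj ⟨a, ha⟩ ⟨c, hc⟩ := h
    exact had.reachable.trans (ih (fun x hx => hsup x (by simp [hx])) hc hb)

lemma second_of_walk {G : SimpleGraph V} {a b : V} (w : G.Walk a b) (h : a ≠ b) :
    ∃ c ∈ w.support.tail, G.Adj a c := by
  cases w with
  | nil => exact absurd rfl h
  | @cons _ c _ had q => exact ⟨c, by simp, had⟩

lemma two_le_ncard_internal [Fintype V] {G : SimpleGraph V} {a b x : V}
    {w : G.Walk a b} (hw : w.IsPath) (hx : x ∈ w.support) (hxa : x ≠ a) (hxb : x ≠ b) :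
    2 ≤ (G.neighborSet x).ncard := by
  classical
  set q := w.takeUntil x hx with hq
  set rr := w.dropUntil x hx with hrr
  have hnodup : (q.support ++ rr.support.tail).Nodup := by
    have := hw.support_nodup
    rwa [← w.take_spec hx, Walk.support_append] at this
  obtain ⟨y, hy, hay⟩ := second_of_walk q.reverse hxa
  obtain ⟨z, hz, haz⟩ := second_of_walk rr hxb
  have hy' : y ∈ q.support := by
    have : y ∈ q.reverse.support := List.mem_of_mem_tail hy
    rwa [Walk.support_reverse, List.mem_reverse] at this
  have hyz : y ≠ z := by
    intro hEq
    exact (List.disjoint_of_nodup_append hnodup) hy' (hEq ▸ hz)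
  have hsub : ({y, z} : Set V) ⊆ G.neighborSet x := by
    rintro c (rfl | rfl)
    · exact hay
    · exact haz
  calc 2 = ({y, z} : Set V).ncard := (Set.ncard_pair hyz).symm
    _ ≤ (G.neighborSet x).ncard := Set.ncard_le_ncard hsub (Set.toFinite _)

lemma eq_of_unique_nbr {G : SimpleGraph V} {x y z : V}
    (hx : (G.neighborSet x).ncard = 1) (hy : G.Adj x y) (hz : G.Adj x z) : y = z := by
  obtain ⟨c, hc⟩ := Set.ncard_eq_one.mp hx
  have h1 : y ∈ G.neighborSet x := hy
  have h2 : z ∈ G.neighborSet x := hz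
  rw [hc] at h1 h2
  rw [h1, h2]

lemma leaf_adj_leaf_false [Fintype V] {G : SimpleGraph V} (hc : G.Connected)
    (hcard : 3 ≤ Fintype.card V) {u w : V} (hadj : G.Adj u w)
    (hu : (G.neighborSet u).ncard = 1) (hw : (G.neighborSet w).ncard = 1) : False := by
  classical
  obtain ⟨z, hz⟩ : ∃ z : V, z ≠ u ∧ z ≠ w := by
    by_contra hno
    push_neg at hno
    have hsub : (Finset.univ : Finset V) ⊆ {u, w} := by
      intro z _
      simp only [Finset.mem_insert, Finset.mem_singleton]
      by_cases h : z = u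
      · exact Or.inl h
      · exact Or.inr (hno z h)
    have hle := Finset.card_le_card hsub
    have h2 : ({u, w} : Finset V).card ≤ 2 :=
      (Finset.card_insert_le _ _).trans (by simp)
    rw [Finset.card_univ] at hle
    omega
  obtain ⟨wk⟩ := hc.preconnected u z
  obtain ⟨p, hp⟩ := wk.toPath
  cases p with
  | nil => exact hz.1 rfl
  | @cons _ c _ h q =>
    have hcw : c = w := eq_of_unique_nbr hu h hadj
    subst hcw
    cases q with
    | nil => exact hz.2 rfl
    | @cons _ d _ h2 q2 =>
      have hdu : d = u := eq_of_unique_nbr hw h2 hadj.symm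
      subst hdu
      rw [Walk.cons_isPath_iff] at hp
      exact hp.2 (by simp [Walk.support_cons, Walk.start_mem_support])

lemma induce_singleton_connected (G : SimpleGraph V) (v : V) :
    (G.induce {v}).Connected := by
  rw [connected_iff]
  refine ⟨fun a b => ?_, ⟨⟨v, rfl⟩⟩⟩
  have : a = b := Subtype.ext (a.2.trans b.2.symm)
  exact this ▸ Reachable.refl a

section Leaves

variable [Fintype V] {G T : SimpleGraph V}

/-- removing a set of leaves of a connected spanning subgraph keeps things connected
and the removed leaves dominated -/
lemma leaves_removal (hTG : T ≤ G) (hT : T.Connected) (hcard : 3 ≤ Fintype.card V)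
    {X : Set V} (hX : X ⊆ {x | (T.neighborSet x).ncard = 1}) :
    (G.induce Xᶜ).Connected ∧ ∀ x ∈ X, ∃ y ∈ Xᶜ, T.Adj x y := by
  classical
  have hdom : ∀ x ∈ X, ∃ y ∈ Xᶜ, T.Adj x y := by
    intro x hx
    obtain ⟨c, hc⟩ := Set.ncard_eq_one.mp (hX hx)
    have hadj : T.Adj x c := by
      have : c ∈ T.neighborSet x := by rw [hc]; rfl
      exact this
    refine ⟨c, ?_, hadj⟩
    intro hcX
    exact leaf_adj_leaf_false hT hcard hadj (hX hx) (hX hcX)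
  refine ⟨?_, hdom⟩
  have hne : Xᶜ.Nonempty := by
    by_contra hcon
    rw [Set.not_nonempty_iff_eq_empty, ← Set.compl_univ, compl_inj_iff] at hcon
    have hnt : Nontrivial V := by
      rw [← Fintype.one_lt_card_iff_nontrivial]; omega
    obtain ⟨u, w, huw⟩ := hnt
    obtain ⟨wk⟩ := hT.preconnected u w
    obtain ⟨c, _, hadj⟩ := second_of_walk wk huw
    exact leaf_adj_leaf_false hT hcard hadj (hX (by rw [hcon]; trivial))
      (hX (by rw [hcon]; trivial))
  rw [connected_iff]
  refine ⟨?_, hne.to_subtype⟩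
  rintro ⟨a, ha⟩ ⟨b, hb⟩
  obtain ⟨wk⟩ := hT.preconnected a b
  obtain ⟨p, hp⟩ := wk.toPath
  have hsup : ∀ x ∈ p.support, x ∈ Xᶜ := by
    intro x hxs
    by_cases hxa : x = a
    · exact hxa ▸ ha
    by_cases hxb : x = b
    · exact hxb ▸ hb
    intro hxX
    have h2 := two_le_ncard_internal hp hxs hxa hxb
    rw [hX hxX] at h2
    omega
  have hreach := reachable_induce_of_walk p hsup ha hb
  exact hreach.mono (fun c d hcd => hTG hcd)
end Leaves

lemma imp31 [Fintype V] {G : SimpleGraph V} (hconn : G.Connected)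
    (hcard : 3 ≤ Fintype.card V) {t : ℕ} (ht : 1 ≤ t)
    (h : ∃ D : Set V, (G.induce D).Connected ∧
      (∀ x : V, x ∉ D → ∃ y ∈ D, G.Adj x y) ∧ D.ncard ≤ Fintype.card V - t) :
    ∃ T : SimpleGraph V, T ≤ G ∧ T.Connected ∧ T.IsAcyclic ∧
      t ≤ {x : V | (T.neighborSet x).ncard = 1}.ncard := by
  classical
  obtain ⟨D, hD, hdom, hDcard⟩ := h
  have hne : Nonempty ↥D := hD.nonempty
  obtain ⟨r'⟩ := hne
  set r : V := (r' : V) with hrdef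
  obtain ⟨pD, hpD0, hpDadj, hpDreach⟩ := exists_parent (G.induce D) hD r'
  have hf : ∀ x, x ∉ D → ∃ y, y ∈ D ∧ G.Adj x y := by
    intro x hx; obtain ⟨y, hy1, hy2⟩ := hdom x hx; exact ⟨y, hy1, hy2⟩
  set p : V → V := fun x => if h : x ∈ D then ((pD ⟨x, h⟩ : ↥D) : V) else
    Classical.choose (hf x h) with hpdef
  have hpD : ∀ (s : ↥D), p (s : V) = ((pD s : ↥D) : V) := by
    intro s
    simp only [hpdef, dif_pos s.2]
  have hpmem : ∀ x, p x ∈ D := by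
    intro x
    by_cases h : x ∈ D
    · rw [show x = ((⟨x, h⟩ : ↥D) : V) from rfl, hpD]; exact (pD ⟨x, h⟩).2
    · simp only [hpdef, dif_neg h]
      exact (Classical.choose_spec (hf x h)).1
  have hr : p r = r := by
    rw [hrdef, hpD r', hpD0]
  have hadj : ∀ x, x ≠ r → G.Adj x (p x) := by
    intro x hx
    by_cases h : x ∈ D
    · have hne' : (⟨x, h⟩ : ↥D) ≠ r' := fun hc => hx (congrArg Subtype.val hc)
      have := (hpDadj ⟨x, h⟩ hne').1
      rw [show x = ((⟨x, h⟩ : ↥D) : V) from rfl, hpD]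
      exact this
    · simp only [hpdef, dif_neg h]
      exact (Classical.choose_spec (hf x h)).2
  have htrans : ∀ n (s : ↥D), p^[n] (s : V) = ((pD^[n] s : ↥D) : V) := by
    intro n
    induction n with
    | zero => intro s; simp
    | succ n ih =>
      intro s
      rw [Function.iterate_succ_apply, Function.iterate_succ_apply, hpD, ih]
  have hreach : ∀ x, ∃ n, p^[n] x = r := by
    intro x
    by_cases h : x ∈ D
    · obtain ⟨n, hn⟩ := hpDreach ⟨x, h⟩
      exact ⟨n, by rw [show x = ((⟨x, h⟩ : ↥D) : V) from rfl, htrans, hn]⟩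
    · have hmem : p x ∈ D := hpmem x
      obtain ⟨n, hn⟩ := hpDreach ⟨p x, hmem⟩
      refine ⟨n + 1, ?_⟩
      rw [Function.iterate_succ_apply]
      rw [show p x = ((⟨p x, hmem⟩ : ↥D) : V) from rfl, htrans, hn]
  refine ⟨treeOf p, treeOf_le hr hadj, treeOf_connected hr hadj hreach,
    treeOf_isAcyclic hr hreach, ?_⟩
  have hleaf : Dᶜ ⊆ {x : V | ((treeOf p).neighborSet x).ncard = 1} := by
    intro x hx
    have hxr : x ≠ r := fun hc => hx (hc ▸ r'.2)
    refine treeOf_leaf hadj hxr (fun u hu hc => hx (hc ▸ hpmem u))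
  have h1 := Set.ncard_add_ncard_compl D
  have h2 : 1 ≤ D.ncard := (Set.ncard_pos).mpr ⟨r, r'.2⟩
  have h0 : Nat.card V = Fintype.card V := Nat.card_eq_fintype_card
  have h3 : t ≤ Dᶜ.ncard := by omega
  exact h3.trans (Set.ncard_le_ncard hleaf (Set.toFinite _))

lemma imp13 [Fintype V] {G : SimpleGraph V} (hcard : 3 ≤ Fintype.card V) {t : ℕ}
    (h : ∃ T : SimpleGraph V, T ≤ G ∧ T.Connected ∧ T.IsAcyclic ∧
      t ≤ {x : V | (T.neighborSet x).ncard = 1}.ncard) :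
    ∃ D : Set V, (G.induce D).Connected ∧
      (∀ x : V, x ∉ D → ∃ y ∈ D, G.Adj x y) ∧ D.ncard ≤ Fintype.card V - t := by
  obtain ⟨T, hTG, hTc, hTa, hTl⟩ := h
  obtain ⟨X, hXsub, hXcard⟩ := Set.exists_subset_card_eq hTl
  obtain ⟨hconn, hdom⟩ := leaves_removal hTG hTc hcard hXsub
  refine ⟨Xᶜ, hconn, ?_, ?_⟩
  · intro x hx
    rw [Set.notMem_compl_iff] at hx
    obtain ⟨y, hy, hadj⟩ := hdom x hx
    exact ⟨y, hy, hTG hadj⟩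
  · have h1 := Set.ncard_add_ncard_compl X
    have h0 : Nat.card V = Fintype.card V := Nat.card_eq_fintype_card
    omega

lemma imp12 [Fintype V] {G : SimpleGraph V} (hcard : 3 ≤ Fintype.card V) {t : ℕ}
    (h : ∃ T : SimpleGraph V, T ≤ G ∧ T.Connected ∧ T.IsAcyclic ∧
      t ≤ {x : V | (T.neighborSet x).ncard = 1}.ncard) :
    HasMinor G (completeBipartiteGraph (Fin 1) (Fin t)) := by
  classical
  obtain ⟨T, hTG, hTc, hTa, hTl⟩ := h
  obtain ⟨X, hXsub, hXcard⟩ := Set.exists_subset_card_eq hTl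
  obtain ⟨hconn, hdom⟩ := leaves_removal hTG hTc hcard hXsub
  have hcardX : Fintype.card ↥X = t := by
    rw [← Nat.card_eq_fintype_card, Nat.card_coe_set_eq, hXcard]
  set e : ↥X ≃ Fin t := Fintype.equivFinOfCardEq hcardX with he
  set f : Fin t → V := fun i => ((e.symm i : ↥X) : V) with hfdef
  have hfX : ∀ i, f i ∈ X := fun i => (e.symm i).2
  have hfinj : Function.Injective f := fun i j hij =>
    e.symm.injective (Subtype.val_injective hij)
  refine ⟨Sum.elim (fun _ => Xᶜ) (fun i => {f i}), ?_, ?_, ?_, ?_⟩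
  · rintro (a | i)
    · exact Set.nonempty_coe_sort.mp hconn.nonempty
    · exact ⟨f i, rfl⟩
  · rintro (a | i) (b | j) hne
    · exact absurd (congrArg Sum.inl (Subsingleton.elim a b)) hne
    · simp only [Sum.elim_inl, Sum.elim_inr]
      rw [Set.disjoint_singleton_right]
      exact fun hc => hc (hfX j)
    · simp only [Sum.elim_inl, Sum.elim_inr]
      rw [Set.disjoint_singleton_left]
      exact fun hc => hc (hfX i)
    · simp only [Sum.elim_inr]
      rw [Set.disjoint_singleton, ne_eq]
      exact fun hc => hne (congrArg Sum.inr (hfinj hc))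
  · rintro (a | i)
    · exact hconn
    · exact induce_singleton_connected G (f i)
  · rintro (a | i) (b | j) hadj
    · simp [completeBipartiteGraph] at hadj
    · obtain ⟨y, hy, hTadj⟩ := hdom (f j) (hfX j)
      exact ⟨y, hy, f j, rfl, (hTG hTadj).symm⟩
    · obtain ⟨y, hy, hTadj⟩ := hdom (f i) (hfX i)
      exact ⟨f i, rfl, y, hy, hTG hTadj⟩
    · simp [completeBipartiteGraph] at hadj

lemma imp21 [Fintype V] {G : SimpleGraph V} (hconn : G.Connected)
    (hcard : 3 ≤ Fintype.card V) {t : ℕ} (ht : 1 ≤ t)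
    (hm : HasMinor G (completeBipartiteGraph (Fin 1) (Fin t))) :
    ∃ T : SimpleGraph V, T ≤ G ∧ T.Connected ∧ T.IsAcyclic ∧
      t ≤ {x : V | (T.neighborSet x).ncard = 1}.ncard := by
  classical
  obtain ⟨φ, hnephi, hdisj, hcon, hedge⟩ := hm
  set C : Set V := φ (Sum.inl 0) with hCdef
  set L : Fin t → Set V := fun i => φ (Sum.inr i) with hLdef
  have hedge' : ∀ i : Fin t, ∃ x ∈ C, ∃ y ∈ L i, G.Adj x y := by
    intro i
    exact hedge (by simp [completeBipartiteGraph])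
  choose a ha b hb hab using hedge'
  have hCL : ∀ i, Disjoint C (L i) := fun i => hdisj (by simp)
  have hLL : ∀ i j, i ≠ j → Disjoint (L i) (L j) := fun i j hij =>
    hdisj (fun hc => hij (Sum.inr_injective hc))
  have hLC : ∀ i x, x ∈ L i → x ∉ C := fun i x hx => Set.disjoint_right.mp (hCL i) hx
  have hidx : ∀ x (hx : ∃ i, x ∈ L i) (i : Fin t), x ∈ L i → hx.choose = i := by
    intro x hx i hxi
    by_contra hne'
    exact Set.disjoint_left.mp (hLL _ _ hne') hx.choose_spec hxi
  obtain ⟨rC⟩ : Nonempty ↥C := (hcon (Sum.inl 0)).nonempty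
  set r : V := (rC : V) with hrdef2
  obtain ⟨pC, hpC1, hpC2, hpC3⟩ := exists_parent (G.induce C) (hcon (Sum.inl 0)) rC
  have hpl := fun i => exists_parent (G.induce (L i)) (hcon (Sum.inr i)) ⟨b i, hb i⟩
  choose pL hpL1 hpL2 hpL3 using hpl
  obtain ⟨pG, hpG1, hpG2, hpG3⟩ := exists_parent G hconn r
  set p : V → V := fun x =>
    if hC : x ∈ C then ((pC ⟨x, hC⟩ : ↥C) : V)
    else if hL : ∃ i, x ∈ L i then
      (if x = b hL.choose then a hL.choose
       else ((pL hL.choose ⟨x, hL.choose_spec⟩ : ↥(L hL.choose)) : V))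
    else pG x with hpdef
  have hpCap : ∀ (s : ↥C), p (s : V) = ((pC s : ↥C) : V) := by
    intro s
    simp only [hpdef, dif_pos s.2]
  have hpLap : ∀ (i : Fin t) x (hx : x ∈ L i),
      p x = if x = b i then a i else ((pL i ⟨x, hx⟩ : ↥(L i)) : V) := by
    intro i x hx
    have hxC : x ∉ C := hLC i x hx
    have hex : ∃ j, x ∈ L j := ⟨i, hx⟩
    have hch : hex.choose = i := hidx x hex i hx
    subst hch
    simp only [hpdef]
    rw [dif_neg hxC, dif_pos hex]
  have horbC : ∀ n (s : ↥C), p^[n] (s : V) = ((pC^[n] s : ↥C) : V) := by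
    intro n
    induction n with
    | zero => intro s; simp
    | succ n ih =>
      intro s
      rw [Function.iterate_succ_apply, Function.iterate_succ_apply, hpCap, ih]
  have hreachC : ∀ x, x ∈ C → ∃ n, p^[n] x = r := by
    intro x hx
    obtain ⟨n, hn⟩ := hpC3 ⟨x, hx⟩
    exact ⟨n, by rw [show x = ((⟨x, hx⟩ : ↥C) : V) from rfl, horbC, hn]⟩
  have hr : p r = r := by rw [hrdef2, hpCap rC, hpC1]
  have hpbi : ∀ i, p (b i) = a i := by
    intro i; rw [hpLap i (b i) (hb i), if_pos rfl]
  have hreachL : ∀ i x, x ∈ L i → ∃ m, p^[m] x = b i := by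
    intro i
    suffices h : ∀ n (x : V) (hx : x ∈ L i), (pL i)^[n] ⟨x, hx⟩ = ⟨b i, hb i⟩ →
        ∃ m, p^[m] x = b i by
      intro x hx
      obtain ⟨n, hn⟩ := hpL3 i ⟨x, hx⟩
      exact h n x hx hn
    intro n
    induction n with
    | zero =>
      intro x hx h0
      exact ⟨0, congrArg Subtype.val h0⟩
    | succ n ih =>
      intro x hx hn
      by_cases hxb : x = b i
      · exact ⟨0, hxb⟩
      · have hpx : p x = ((pL i ⟨x, hx⟩ : ↥(L i)) : V) := by
          rw [hpLap i x hx, if_neg hxb]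
        rw [Function.iterate_succ_apply] at hn
        obtain ⟨m, hm⟩ := ih ((pL i ⟨x, hx⟩ : ↥(L i)) : V) (pL i ⟨x, hx⟩).2
          (by convert hn using 2)
        exact ⟨m + 1, by rw [Function.iterate_succ_apply, hpx, hm]⟩
  have hreachLr : ∀ i x, x ∈ L i → ∃ n, p^[n] x = r := by
    intro i x hx
    obtain ⟨m, hm⟩ := hreachL i x hx
    obtain ⟨k, hk⟩ := hreachC (a i) (ha i)
    refine ⟨k + (1 + m), ?_⟩
    rw [Function.iterate_add_apply, Function.iterate_add_apply, hm,
      Function.iterate_one, hpbi i]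
    exact hk
  have hreach : ∀ x, ∃ n, p^[n] x = r := by
    suffices h : ∀ k x, G.dist x r ≤ k → ∃ n, p^[n] x = r by
      intro x; exact h (G.dist x r) x le_rfl
    intro k
    induction k with
    | zero =>
      intro x hx
      exact ⟨0, hconn.dist_eq_zero_iff.mp (Nat.le_zero.mp hx)⟩
    | succ k ih =>
      intro x hx
      by_cases hC : x ∈ C
      · exact hreachC x hC
      by_cases hL : ∃ i, x ∈ L i
      · obtain ⟨i, hi⟩ := hL
        exact hreachLr i x hi
      · have hxr : x ≠ r := fun hc => hC (hc ▸ rC.2)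
        have hpx : p x = pG x := by simp only [hpdef]; rw [dif_neg hC, dif_neg hL]
        obtain ⟨n, hn⟩ := ih (pG x) (by have := (hpG2 x hxr).2; omega)
        exact ⟨n + 1, by rw [Function.iterate_succ_apply, hpx, hn]⟩
  have hadj : ∀ x, x ≠ r → G.Adj x (p x) := by
    intro x hxr
    by_cases hC : x ∈ C
    · have hne' : (⟨x, hC⟩ : ↥C) ≠ rC := fun hc => hxr (congrArg Subtype.val hc)
      have := (hpC2 ⟨x, hC⟩ hne').1
      rw [show x = ((⟨x, hC⟩ : ↥C) : V) from rfl, hpCap]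
      exact this
    by_cases hL : ∃ i, x ∈ L i
    · obtain ⟨i, hi⟩ := hL
      by_cases hxb : x = b i
      · rw [hpLap i x hi, if_pos hxb, hxb]
        exact (hab i).symm
      · rw [hpLap i x hi, if_neg hxb]
        exact (hpL2 i ⟨x, hi⟩ (fun hc => hxb (congrArg Subtype.val hc))).1
    · have hpx : p x = pG x := by simp only [hpdef]; rw [dif_neg hC, dif_neg hL]
      rw [hpx]
      exact (hpG2 x hxr).1
  -- heights and leaf selection
  set A : Fin t → Set V := fun i => {z | ∃ n, p^[n] z = b i} with hAdef
  have hbA : ∀ i, b i ∈ A i := fun i => ⟨0, rfl⟩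
  have hAC : ∀ i z, z ∈ C → z ∉ A i := by
    rintro i z hz ⟨n, hn⟩
    have hmem : p^[n] z ∈ C := by
      rw [show z = ((⟨z, hz⟩ : ↥C) : V) from rfl, horbC]
      exact (pC^[n] ⟨z, hz⟩).2
    rw [hn] at hmem
    exact hLC i (b i) (hb i) hmem
  have byne : ∀ i j, i ≠ j → b i ≠ b j := fun i j hij hc =>
    Set.disjoint_left.mp (hLL i j hij) (hb i) (hc ▸ hb j)
  have hAdisj' : ∀ i j, i ≠ j → ∀ z n m, n ≤ m →
      p^[n] z = b i → p^[m] z = b j → False := by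
    intro i j hij z n m hnm hn hm
    have hsplit : p^[m - n + n] z = b j := by rw [Nat.sub_add_cancel hnm]; exact hm
    rw [Function.iterate_add_apply, hn] at hsplit
    cases hmn : m - n with
    | zero =>
      rw [hmn] at hsplit
      simp only [Function.iterate_zero, id] at hsplit
      exact byne i j hij hsplit
    | succ k =>
      rw [hmn, Function.iterate_succ_apply, hpbi i] at hsplit
      have hmem : p^[k] (a i) ∈ C := by
        rw [show a i = ((⟨a i, ha i⟩ : ↥C) : V) from rfl, horbC]
        exact (pC^[k] _).2
      rw [hsplit] at hmem
      exact hLC j (b j) (hb j) hmem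
  have hAdisj : ∀ i j, i ≠ j → ∀ z, z ∈ A i → z ∈ A j → False := by
    rintro i j hij z ⟨n, hn⟩ ⟨m, hm⟩
    rcases le_total n m with h | h
    · exact hAdisj' i j hij z n m h hn hm
    · exact hAdisj' j i hij.symm z m n h hm hn
  set hgt : Fin t → V → ℕ := fun i z => sInf {n | p^[n] z = b i} with hgtdef
  have hgt_spec : ∀ i z, z ∈ A i → p^[hgt i z] z = b i := by
    intro i z hz
    exact Nat.sInf_mem hz
  have hgt_min : ∀ i z k, p^[k] z = b i → hgt i z ≤ k := fun i z k hk => Nat.sInf_le hk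
  have hxi : ∀ i : Fin t, ∃ z ∈ A i, ∀ y ∈ A i, hgt i y ≤ hgt i z := by
    intro i
    obtain ⟨z, hz1, hz2⟩ := (A i).toFinite.toFinset.exists_max_image (hgt i)
      (by rw [Set.Finite.toFinset_nonempty]; exact ⟨b i, hbA i⟩)
    exact ⟨z, (Set.Finite.mem_toFinset _).mp hz1,
      fun y hy => hz2 y ((Set.Finite.mem_toFinset _).mpr hy)⟩
  choose x hxA hxmax using hxi
  have hchild : ∀ i u, u ≠ x i → p u ≠ x i := by
    intro i u hu hpu
    have hxiA := hxA i
    have hub : u ≠ b i := by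
      rintro rfl
      rw [hpbi i] at hpu
      exact hAC i (x i) (hpu ▸ ha i) hxiA
    have huA : u ∈ A i := by
      refine ⟨hgt i (x i) + 1, ?_⟩
      rw [Function.iterate_succ_apply, hpu]
      exact hgt_spec i (x i) hxiA
    have hlb : hgt i (x i) + 1 ≤ hgt i u := by
      have hspec := hgt_spec i u huA
      cases hk : hgt i u with
      | zero =>
        rw [hk] at hspec
        simp only [Function.iterate_zero, id] at hspec
        exact absurd hspec hub
      | succ k =>
        rw [hk, Function.iterate_succ_apply, hpu] at hspec
        have := hgt_min i (x i) k hspec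
        omega
    have := hxmax i u huA
    omega
  have hxnr : ∀ i, x i ≠ r := fun i hc => hAC i r rC.2 (hc ▸ hxA i)
  have hxinj : Function.Injective x := by
    intro i j hij
    by_contra hne'
    exact hAdisj i j hne' (x i) (hxA i) (hij ▸ hxA j)
  refine ⟨treeOf p, treeOf_le hr hadj, treeOf_connected hr hadj hreach,
    treeOf_isAcyclic hr hreach, ?_⟩
  have hsub : Set.range x ⊆ {z : V | ((treeOf p).neighborSet z).ncard = 1} := by
    rintro z ⟨i, rfl⟩
    exact treeOf_leaf hadj (hxnr i) (hchild i)
  have hcardrange : (Set.range x).ncard = t := by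
    rw [← Set.image_univ, Set.ncard_image_of_injective _ hxinj, Set.ncard_univ,
      Nat.card_eq_fintype_card, Fintype.card_fin]
  calc t = (Set.range x).ncard := hcardrange.symm
    _ ≤ _ := Set.ncard_le_ncard hsub (Set.toFinite _)

/-- Let `G` be a connected graph on at least 3 vertices and let `t ≥ 1`.
The following are equivalent:
(a) `G` has a spanning tree with at least `t` leaves;
(b) `G` contains the star `K_{1,t}` as a minor;
(c) `G` has a connected dominating set of size at most `|V(G)| - t`. -/
theorem stmt16 {V : Type u} [Fintype V] (G : SimpleGraph V)
    (hconn : G.Connected) (hcard : 3 ≤ Fintype.card V) (t : ℕ) (ht : 1 ≤ t) :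
    List.TFAE
      [ (∃ T : SimpleGraph V, T ≤ G ∧ T.Connected ∧ T.IsAcyclic ∧
          t ≤ {x : V | (T.neighborSet x).ncard = 1}.ncard),
        HasMinor G (completeBipartiteGraph (Fin 1) (Fin t)),
        (∃ D : Set V, (G.induce D).Connected ∧
          (∀ x : V, x ∉ D → ∃ y ∈ D, G.Adj x y) ∧
          D.ncard ≤ Fintype.card V - t) ] := by
  tfae_have 1 → 2 := fun h => imp12 hcard h
  tfae_have 2 → 1 := fun h => imp21 hconn hcard ht h
  tfae_have 1 → 3 := fun h => imp13 hcard h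
  tfae_have 3 → 1 := fun h => imp31 hconn hcard ht h
  tfae_finish
end
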